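/- arXiv:2012.10897 — 6 statements merged into one kernel-verified Lean document; each statement's English description precedes it below -/
import Mathlib

section
/- For each n ≥ 1 let p_f(i), p_e(i) ∈ [0,1] (1 ≤ i ≤ n) with p_f(i)+p_e(i) ≤ 1, and set μ_f(n) = Σ_{i=1}^n p_f(i) and μ_e(n) = Σ_{i=1}^n p_e(i). Assume min(μ_f(n), μ_e(n)) → ∞ as n → ∞ and p := limsup_n (2μ_f(n)+μ_e(n))/n < 1/2. Let α satisfy H(p) < α ≤ 1, and let {D_n} be any sequence of dictionaries D_n ⊆ {0,1}^n with #D_n ≥ 2^{αn}. Then every rate 0 < R < α − H(p) is achievable using these dictionaries: for every ε > 0 and all sufficiently large n, there exist a code C_n ⊆ D_n with #C_n ≥ 2^{nR} and a decoder g_n : {0,1,e}^n → C_n such that max_{x ∈ C_n} P(g_n(Y(x)) ≠ x) < ε. -/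
open scoped Classical BigOperators

/-- The binary entropy function `H(x) = -x log₂ x - (1-x) log₂ (1-x)`. -/
noncomputable def binEnt (x : ℝ) : ℝ :=
  -(x * Real.logb 2 x) - (1 - x) * Real.logb 2 (1 - x)

/-- Probability of the noise vector `w : Fin n → Option Bool`, where `some true`
means the bit is substituted (`W_i = 1`), `none` means it is erased (`W_i = e`)
and `some false` means it passes unchanged (`W_i = 0`). -/
noncomputable def noiseProb {n : ℕ} (pf pe : Fin n → ℝ) (w : Fin n → Option Bool) : ℝ :=
  ∏ i, (if w i = some true then pf i else if w i = none then pe i else 1 - pf i - pe i)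

/-- Channel output `Y(x) ∈ {0,1,e}^n` on input word `x ∈ {0,1}^n` under noise `w`:
`Y_i = x_i` if `W_i = 0`, `Y_i = 1 - x_i` if `W_i = 1`, and `Y_i = e` if `W_i = e`. -/
def chOut {n : ℕ} (x : Fin n → Bool) (w : Fin n → Option Bool) : Fin n → Option Bool :=
  fun i =>
    match w i with
    | some b => some (xor (x i) b)
    | none => none

/-- Error probability `P(g(Y(x)) ≠ x)` of a decoder `g` on the transmitted word `x`. -/
noncomputable def errProb {n : ℕ} (pf pe : Fin n → ℝ)
    (g : (Fin n → Option Bool) → (Fin n → Bool)) (x : Fin n → Bool) : ℝ :=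
  ∑ w ∈ Finset.univ.filter (fun w : Fin n → Option Bool => g (chOut x w) ≠ x),
    noiseProb pf pe w


section Aux
open Finset

def hdist {n : ℕ} (x x' : Fin n → Bool) : ℕ :=
  (Finset.univ.filter fun i => x i ≠ x' i).card

def eCount {n : ℕ} (y : Fin n → Option Bool) : ℕ :=
  (Finset.univ.filter fun i => y i = none).card

def tCount {n : ℕ} (w : Fin n → Option Bool) : ℕ :=
  (Finset.univ.filter fun i => w i = some true).card

def fCount {n : ℕ} (x : Fin n → Bool) (y : Fin n → Option Bool) : ℕ :=
  (Finset.univ.filter fun i => y i ≠ none ∧ y i ≠ some (x i)).card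

lemma hdist_comm {n : ℕ} (x x' : Fin n → Bool) : hdist x x' = hdist x' x := by
  unfold hdist; congr 1; ext i; simp [ne_comm]

lemma hdist_le {n : ℕ} (x x' : Fin n → Bool) (y : Fin n → Option Bool) :
    hdist x x' ≤ fCount x y + fCount x' y + eCount y := by
  have hsub : (Finset.univ.filter fun i => x i ≠ x' i) ⊆
      ((Finset.univ.filter fun i => y i ≠ none ∧ y i ≠ some (x i)) ∪
        (Finset.univ.filter fun i => y i ≠ none ∧ y i ≠ some (x' i))) ∪
        (Finset.univ.filter fun i => y i = none) := by
    intro i hi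
    simp only [mem_filter, mem_univ, true_and, mem_union] at hi ⊢
    rcases hy : y i with _ | c
    · tauto
    · left
      by_cases hc : c = x i
      · right; refine ⟨by simp, ?_⟩; subst hc; simp only [ne_eq, Option.some.injEq]
        intro h; exact hi (h ▸ rfl)
      · left; exact ⟨by simp, by simpa using hc⟩
  calc hdist x x' ≤ _ := Finset.card_le_card hsub
    _ ≤ _ := Finset.card_union_le _ _
    _ ≤ _ := by
        have := Finset.card_union_le (Finset.univ.filter fun i => y i ≠ none ∧ y i ≠ some (x i))
          (Finset.univ.filter fun i => y i ≠ none ∧ y i ≠ some (x' i))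
        unfold fCount eCount; omega

lemma sphere_card_le {n : ℕ} (x : Fin n → Bool) (k : ℕ) :
    ((Finset.univ.filter fun z : Fin n → Bool => hdist x z = k)).card ≤ n.choose k := by
  have : n.choose k = (Finset.powersetCard k (Finset.univ : Finset (Fin n))).card := by
    simp [Finset.card_powersetCard]
  rw [this]
  apply Finset.card_le_card_of_injOn (fun z => Finset.univ.filter fun i => x i ≠ z i)
  · intro z hz
    simp only [Finset.mem_coe, mem_filter, mem_univ, true_and] at hz
    simpa [Finset.mem_powersetCard, hdist] using hz
  · intro z hz z' hz' hzz
    simp only at hzz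
    funext i
    have hiff : (x i ≠ z i) ↔ (x i ≠ z' i) := by
      have := Finset.ext_iff.mp hzz i
      simpa using this
    revert hiff
    cases hx : x i <;> cases hz1 : z i <;> cases hz2 : z' i <;> simp_all

lemma ball_card_le {n : ℕ} (x : Fin n → Bool) (d : ℕ) :
    ((Finset.univ.filter fun z : Fin n → Bool => hdist x z < d)).card ≤
      ∑ k ∈ Finset.range d, n.choose k := by
  rw [Finset.card_eq_sum_card_fiberwise (f := fun z => hdist x z) (t := Finset.range d)
    (fun z hz => by simpa using (Finset.mem_filter.mp hz).2)]
  apply Finset.sum_le_sum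
  intro k _
  calc ((Finset.univ.filter fun z : Fin n → Bool => hdist x z < d).filter
          fun z => hdist x z = k).card
      ≤ ((Finset.univ.filter fun z : Fin n → Bool => hdist x z = k)).card := by
        apply Finset.card_le_card; intro z hz
        simp only [mem_filter, mem_univ, true_and] at hz ⊢; exact hz.2
    _ ≤ n.choose k := sphere_card_le x k

lemma greedy_code {n : ℕ} (d : ℕ) (hd : 0 < d) (S : Finset (Fin n → Bool)) :
    ∃ C ⊆ S, (∀ x ∈ C, ∀ y ∈ C, x ≠ y → d ≤ hdist x y) ∧
      S.card ≤ C.card * ∑ k ∈ Finset.range d, n.choose k := by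
  induction S using Finset.strongInduction with
  | _ S ih =>
    rcases S.eq_empty_or_nonempty with rfl | ⟨x, hx⟩
    · exact ⟨∅, by simp⟩
    · set S' := S.filter (fun z => ¬ hdist x z < d) with hS'
      have hdxx : hdist x x = 0 := by simp [hdist]
      have hxS' : x ∉ S' := by
        rw [hS']
        simp only [Finset.mem_filter, not_and, not_not]
        intro _; omega
      have hsub : S' ⊆ S := Finset.filter_subset _ _
      have hlt : S' ⊂ S := Finset.ssubset_iff_of_subset hsub |>.mpr ⟨x, hx, hxS'⟩
      obtain ⟨C', hC'sub, hC'dist, hC'card⟩ := ih S' hlt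
      refine ⟨insert x C', ?_, ?_, ?_⟩
      · intro z hz
        rcases Finset.mem_insert.mp hz with rfl | hz
        · exact hx
        · exact hsub (hC'sub hz)
      · intro a ha b hb hab
        rcases Finset.mem_insert.mp ha with ha1 | ha1
        · rcases Finset.mem_insert.mp hb with hb1 | hb1
          · exact absurd (ha1.trans hb1.symm) hab
          · have h2 := (Finset.mem_filter.mp (hC'sub hb1)).2
            rw [ha1]; omega
        · rcases Finset.mem_insert.mp hb with hb1 | hb1
          · have h2 := (Finset.mem_filter.mp (hC'sub ha1)).2
            rw [hb1, hdist_comm]; omega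
          · exact hC'dist a ha1 b hb1 hab
      · have hxC' : x ∉ C' := fun h => hxS' (hC'sub h)
        rw [Finset.card_insert_of_notMem hxC', add_mul, one_mul]
        have hsplit : (S.filter (fun z => hdist x z < d)).card + S'.card = S.card := by
          rw [hS']
          exact Finset.card_filter_add_card_filter_not (p := fun z => hdist x z < d)
        have hball : (S.filter (fun z => hdist x z < d)).card ≤
            ∑ k ∈ Finset.range d, n.choose k := by
          refine le_trans (Finset.card_le_card ?_) (ball_card_le x d)
          intro z hz; simp only [mem_filter, mem_univ, true_and] at hz ⊢; exact hz.2
        omega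

lemma sum_choose_le_entropy (δ : ℝ) (h0 : 0 < δ) (h2 : δ ≤ 1/2) (n : ℕ) :
    (∑ k ∈ Finset.range (⌊δ * n⌋₊ + 1), (n.choose k : ℝ)) ≤ (2:ℝ) ^ (binEnt δ * n) := by
  have h1 : δ < 1 := by linarith
  have h1δ : 0 < 1 - δ := by linarith
  have hbase0 : 0 < δ / (1 - δ) := div_pos h0 h1δ
  have hbase1 : δ / (1 - δ) ≤ 1 := by rw [div_le_one h1δ]; linarith
  set c : ℝ := δ ^ (δ * (n:ℝ)) * (1 - δ) ^ ((n:ℝ) - δ * (n:ℝ)) with hc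
  have hcpos : 0 < c := mul_pos (Real.rpow_pos_of_pos h0 _) (Real.rpow_pos_of_pos h1δ _)
  have hc2 : c = (2:ℝ) ^ (-(binEnt δ * n)) := by
    rw [hc,
      show δ ^ (δ * (n:ℝ)) = ((2:ℝ) ^ (Real.logb 2 δ)) ^ (δ * (n:ℝ)) by
        rw [Real.rpow_logb (by norm_num) (by norm_num) h0],
      show (1-δ) ^ ((n:ℝ) - δ * (n:ℝ)) = ((2:ℝ) ^ (Real.logb 2 (1-δ))) ^ ((n:ℝ) - δ * (n:ℝ)) by
        rw [Real.rpow_logb (by norm_num) (by norm_num) h1δ],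
      ← Real.rpow_mul (by norm_num), ← Real.rpow_mul (by norm_num),
      ← Real.rpow_add (by norm_num)]
    congr 1
    simp only [binEnt]; ring
  -- pointwise bound : for k ≤ δ n, c ≤ δ^k (1-δ)^(n-k)
  have hfloor_le : (⌊δ * n⌋₊ : ℝ) ≤ δ * n := Nat.floor_le (by positivity)
  have hδn_le : δ * n ≤ n := by nlinarith [Nat.cast_nonneg (α := ℝ) n]
  have hfln : ⌊δ * n⌋₊ ≤ n := by
    have := Nat.floor_le_floor (R := ℝ) hδn_le
    simpa using this
  have hpoint : ∀ k ∈ Finset.range (⌊δ * n⌋₊ + 1), c ≤ δ ^ k * (1 - δ) ^ (n - k) := by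
    intro k hk
    rw [Finset.mem_range] at hk
    have hkn : k ≤ n := le_trans (Nat.lt_succ_iff.mp hk) hfln
    have hkδ : (k : ℝ) ≤ δ * n := le_trans (by exact_mod_cast Nat.lt_succ_iff.mp hk) hfloor_le
    have hcast : ((n - k : ℕ) : ℝ) = (n : ℝ) - k := by
      push_cast [Nat.cast_sub hkn]; ring
    rw [← Real.rpow_natCast δ k, ← Real.rpow_natCast (1-δ) (n-k), hcast]
    have key : ∀ u : ℝ, 0 ≤ u → u ≤ (n:ℝ) →
        δ ^ u * (1 - δ) ^ ((n:ℝ) - u) = (1-δ) ^ (n:ℝ) * (δ / (1-δ)) ^ u := by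
      intro u _ _
      rw [Real.div_rpow (le_of_lt h0) (le_of_lt h1δ), Real.rpow_sub h1δ]
      field_simp
    rw [hc]
    rw [key _ (by positivity) hδn_le, key _ (Nat.cast_nonneg k) (by exact_mod_cast hkn)]
    apply mul_le_mul_of_nonneg_left _ (le_of_lt (Real.rpow_pos_of_pos h1δ _))
    exact Real.rpow_le_rpow_of_exponent_ge hbase0 hbase1 hkδ
  -- sum bound
  have hsum1 : ∑ k ∈ Finset.range (n + 1), (n.choose k : ℝ) * (δ ^ k * (1 - δ) ^ (n - k)) = 1 := by
    have := add_pow δ (1-δ) n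
    have h : (δ + (1-δ)) ^ n = ∑ k ∈ Finset.range (n+1), δ ^ k * (1-δ) ^ (n-k) * (n.choose k : ℝ) := this
    rw [show δ + (1-δ) = 1 by ring, one_pow] at h
    calc ∑ k ∈ Finset.range (n + 1), (n.choose k : ℝ) * (δ ^ k * (1 - δ) ^ (n - k))
        = ∑ k ∈ Finset.range (n + 1), δ ^ k * (1-δ) ^ (n-k) * (n.choose k : ℝ) := by
          apply Finset.sum_congr rfl; intros; ring
      _ = 1 := h.symm
  have hmain : (∑ k ∈ Finset.range (⌊δ * n⌋₊ + 1), (n.choose k : ℝ)) * c ≤ 1 := by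
    rw [Finset.sum_mul]
    calc ∑ k ∈ Finset.range (⌊δ * n⌋₊ + 1), (n.choose k : ℝ) * c
        ≤ ∑ k ∈ Finset.range (⌊δ * n⌋₊ + 1), (n.choose k : ℝ) * (δ ^ k * (1 - δ) ^ (n - k)) := by
          apply Finset.sum_le_sum
          intro k hk
          exact mul_le_mul_of_nonneg_left (hpoint k hk) (Nat.cast_nonneg _)
      _ ≤ ∑ k ∈ Finset.range (n + 1), (n.choose k : ℝ) * (δ ^ k * (1 - δ) ^ (n - k)) := by
          apply Finset.sum_le_sum_of_subset_of_nonneg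
          · exact Finset.range_subset_range.mpr (by omega)
          · intro k _ _; positivity
      _ = 1 := hsum1
  have : (∑ k ∈ Finset.range (⌊δ * n⌋₊ + 1), (n.choose k : ℝ)) ≤ 1 / c := by
    rw [le_div_iff₀ hcpos]; exact hmain
  calc _ ≤ 1 / c := this
    _ = (2:ℝ) ^ (binEnt δ * n) := by
        rw [hc2, Real.rpow_neg (by norm_num), one_div, inv_inv]

noncomputable def qfun {n : ℕ} (pf pe : Fin n → ℝ) (i : Fin n) (a : Option Bool) : ℝ :=
  if a = some true then pf i else if a = none then pe i else 1 - pf i - pe i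

section Prob
variable {n : ℕ} (pf pe : Fin n → ℝ)

lemma noiseProb_eq (w : Fin n → Option Bool) :
    noiseProb pf pe w = ∏ i, qfun pf pe i (w i) := rfl

lemma qfun_nonneg (hpf0 : ∀ i, 0 ≤ pf i) (hpe0 : ∀ i, 0 ≤ pe i)
    (hpfe : ∀ i, pf i + pe i ≤ 1) (i : Fin n) (a : Option Bool) : 0 ≤ qfun pf pe i a := by
  unfold qfun
  rcases a with _ | b
  · simpa using hpe0 i
  · rcases b with _ | _
    · have := hpfe i
      rw [if_neg (by simp), if_neg (by simp)]; linarith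
    · simpa using hpf0 i

lemma noiseProb_nonneg (hpf0 : ∀ i, 0 ≤ pf i) (hpe0 : ∀ i, 0 ≤ pe i)
    (hpfe : ∀ i, pf i + pe i ≤ 1) (w : Fin n → Option Bool) : 0 ≤ noiseProb pf pe w := by
  rw [noiseProb_eq]
  exact Finset.prod_nonneg fun i _ => qfun_nonneg pf pe hpf0 hpe0 hpfe i (w i)

lemma sum_qfun (hpf0 : ∀ i, 0 ≤ pf i) (i : Fin n) :
    ∑ a : Option Bool, qfun pf pe i a = 1 := by
  rw [Fintype.sum_option, Fintype.sum_bool]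
  unfold qfun
  simp
  ring

lemma expect_prod (h : Fin n → Option Bool → ℝ) :
    ∑ w : Fin n → Option Bool, ∏ i, (qfun pf pe i (w i) * h i (w i))
      = ∏ i, ∑ a : Option Bool, qfun pf pe i a * h i a := by
  rw [Finset.prod_univ_sum, Fintype.piFinset_univ]

lemma expect_prob_mul (h : Fin n → Option Bool → ℝ) :
    ∑ w : Fin n → Option Bool, noiseProb pf pe w * ∏ i, h i (w i)
      = ∏ i, ∑ a : Option Bool, qfun pf pe i a * h i a := by
  rw [← expect_prod]
  apply Finset.sum_congr rfl
  intro w _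
  rw [noiseProb_eq, ← Finset.prod_mul_distrib]

lemma sum_noiseProb (hpf0 : ∀ i, 0 ≤ pf i) :
    ∑ w : Fin n → Option Bool, noiseProb pf pe w = 1 := by
  have := expect_prob_mul pf pe (fun _ _ => 1)
  simp only [Finset.prod_const_one, mul_one] at this
  rw [this, Finset.prod_eq_one]
  intro i _
  simpa using sum_qfun pf pe hpf0 i

lemma expect_sq (hpf0 : ∀ i, 0 ≤ pf i) (Y : Fin n → Option Bool → ℝ)
    (hcent : ∀ i, ∑ a : Option Bool, qfun pf pe i a * Y i a = 0) :
    ∑ w : Fin n → Option Bool, noiseProb pf pe w * (∑ i, Y i (w i)) ^ 2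
      = ∑ i, ∑ a : Option Bool, qfun pf pe i a * (Y i a) ^ 2 := by
  have hTzero : ∀ i j : Fin n, i ≠ j →
      ∑ w : Fin n → Option Bool, noiseProb pf pe w * (Y i (w i) * Y j (w j)) = 0 := by
    intro i j hij
    have h := expect_prob_mul pf pe
      (fun k a => (if i = k then Y i a else 1) * (if j = k then Y j a else 1))
    have hL : ∀ w : Fin n → Option Bool,
        (∏ k, ((if i = k then Y i (w k) else 1) * (if j = k then Y j (w k) else 1)))
          = Y i (w i) * Y j (w j) := by
      intro w
      rw [Finset.prod_mul_distrib, Finset.prod_ite_eq, Finset.prod_ite_eq]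
      simp
    simp only [hL] at h
    rw [h]
    apply Finset.prod_eq_zero (Finset.mem_univ i)
    have : ∀ a : Option Bool,
        qfun pf pe i a * ((if i = i then Y i a else 1) * (if j = i then Y j a else 1))
          = qfun pf pe i a * Y i a := by
      intro a; rw [if_pos rfl, if_neg (Ne.symm hij), mul_one]
    rw [Finset.sum_congr rfl (fun a _ => this a)]
    exact hcent i
  have hTdiag : ∀ i : Fin n,
      ∑ w : Fin n → Option Bool, noiseProb pf pe w * (Y i (w i) * Y i (w i))
        = ∑ a : Option Bool, qfun pf pe i a * (Y i a) ^ 2 := by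
    intro i
    have h := expect_prob_mul pf pe (fun k a => if i = k then (Y i a) ^ 2 else 1)
    have hL : ∀ w : Fin n → Option Bool,
        (∏ k, (if i = k then (Y i (w k)) ^ 2 else 1)) = Y i (w i) * Y i (w i) := by
      intro w; rw [Finset.prod_ite_eq]; simp [sq]
    simp only [hL] at h
    rw [h]
    rw [Finset.prod_eq_single i]
    · simp
    · intro k _ hk
      have : ∀ a : Option Bool,
          qfun pf pe k a * (if i = k then (Y i a) ^ 2 else 1) = qfun pf pe k a := by
        intro a; rw [if_neg (Ne.symm hk), mul_one]
      rw [Finset.sum_congr rfl (fun a _ => this a)]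
      exact sum_qfun pf pe hpf0 k
    · intro h; exact absurd (Finset.mem_univ i) h
  calc ∑ w : Fin n → Option Bool, noiseProb pf pe w * (∑ i, Y i (w i)) ^ 2
      = ∑ w : Fin n → Option Bool, ∑ i, ∑ j,
          noiseProb pf pe w * (Y i (w i) * Y j (w j)) := by
        apply Finset.sum_congr rfl
        intro w _
        rw [sq, Finset.sum_mul_sum, Finset.mul_sum]
        apply Finset.sum_congr rfl
        intro i _
        rw [Finset.mul_sum]
    _ = ∑ i, ∑ j : Fin n, ∑ w : Fin n → Option Bool,
          noiseProb pf pe w * (Y i (w i) * Y j (w j)) := by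
        rw [Finset.sum_comm]
        apply Finset.sum_congr rfl
        intro i _
        rw [Finset.sum_comm]
    _ = ∑ i, ∑ a : Option Bool, qfun pf pe i a * (Y i a) ^ 2 := by
        apply Finset.sum_congr rfl
        intro i _
        rw [Finset.sum_eq_single i]
        · exact hTdiag i
        · intro j _ hj; exact hTzero i j (Ne.symm hj)
        · intro h; exact absurd (Finset.mem_univ i) h

lemma prob_tail_le (hpf0 : ∀ i, 0 ≤ pf i) (hpe0 : ∀ i, 0 ≤ pe i)
    (hpfe : ∀ i, pf i + pe i ≤ 1) (d : ℕ) (a : ℝ) (ha : 0 < a)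
    (hmean : (∑ i, (2 * pf i + pe i)) + a ≤ (d : ℝ)) :
    ∑ w ∈ Finset.univ.filter
        (fun w : Fin n → Option Bool => d ≤ 2 * tCount w + eCount w),
      noiseProb pf pe w ≤ 4 * n / a ^ 2 := by
  set X : Fin n → Option Bool → ℝ :=
    fun _ a => if a = some true then 2 else if a = none then 1 else 0 with hX
  set m : Fin n → ℝ := fun i => 2 * pf i + pe i with hm
  set Y : Fin n → Option Bool → ℝ := fun i a => X i a - m i with hY
  have hcent : ∀ i, ∑ a : Option Bool, qfun pf pe i a * Y i a = 0 := by
    intro i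
    rw [Fintype.sum_option, Fintype.sum_bool]
    simp [hY, hX, hm, qfun]
    ring
  have hYsq : ∀ i, ∑ a : Option Bool, qfun pf pe i a * (Y i a) ^ 2 ≤ 4 := by
    intro i
    have hb : ∀ a : Option Bool, (Y i a) ^ 2 ≤ 4 := by
      intro a
      have hm0 : 0 ≤ m i := by simp only [hm]; have := hpf0 i; have := hpe0 i; linarith
      have hm2 : m i ≤ 2 := by
        simp only [hm]; have := hpfe i; have := hpf0 i; have := hpe0 i; linarith
      have hX0 : 0 ≤ X i a := by
        simp only [hX]; rcases a with _ | _ | _ <;> simp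
      have hX2 : X i a ≤ 2 := by
        simp only [hX]; rcases a with _ | _ | _ <;> simp
      simp only [hY]; nlinarith
    calc ∑ a : Option Bool, qfun pf pe i a * (Y i a) ^ 2
        ≤ ∑ a : Option Bool, qfun pf pe i a * 4 := by
          apply Finset.sum_le_sum
          intro b _
          exact mul_le_mul_of_nonneg_left (hb b) (qfun_nonneg pf pe hpf0 hpe0 hpfe i b)
      _ = 4 := by rw [← Finset.sum_mul, sum_qfun pf pe hpf0 i, one_mul]
  have hS : ∀ w : Fin n → Option Bool,
      (∑ i, X i (w i)) = 2 * (tCount w : ℝ) + (eCount w : ℝ) := by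
    intro w
    have : ∀ i, X i (w i) = 2 * (if w i = some true then (1:ℝ) else 0)
        + (if w i = none then (1:ℝ) else 0) := by
      intro i
      simp only [hX]
      rcases hwi : w i with _ | _ | _ <;> simp
    rw [Finset.sum_congr rfl (fun i _ => this i), Finset.sum_add_distrib, ← Finset.mul_sum,
      Finset.sum_boole, Finset.sum_boole]
    simp [tCount, eCount]
  set M : ℝ := ∑ i, m i with hM
  have hSY : ∀ w : Fin n → Option Bool, (∑ i, Y i (w i)) = (∑ i, X i (w i)) - M := by
    intro w
    simp only [hY, hM, Finset.sum_sub_distrib]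
  have hkey : ∀ w ∈ Finset.univ.filter
      (fun w : Fin n → Option Bool => d ≤ 2 * tCount w + eCount w),
      a ^ 2 ≤ (∑ i, Y i (w i)) ^ 2 := by
    intro w hw
    rw [Finset.mem_filter] at hw
    have hd : (d : ℝ) ≤ 2 * (tCount w : ℝ) + (eCount w : ℝ) := by exact_mod_cast hw.2
    have h1 : a ≤ (∑ i, Y i (w i)) := by
      rw [hSY, hS]
      have : M = ∑ i, (2 * pf i + pe i) := by simp [hM, hm]
      rw [this] at *
      linarith [hmean]
    exact pow_le_pow_left₀ ha.le h1 2
  have hPnn := noiseProb_nonneg pf pe hpf0 hpe0 hpfe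
  have ha2 : (0:ℝ) < a ^ 2 := by positivity
  calc ∑ w ∈ Finset.univ.filter
        (fun w : Fin n → Option Bool => d ≤ 2 * tCount w + eCount w),
      noiseProb pf pe w
      ≤ ∑ w ∈ Finset.univ.filter
          (fun w : Fin n → Option Bool => d ≤ 2 * tCount w + eCount w),
        noiseProb pf pe w * ((∑ i, Y i (w i)) ^ 2 / a ^ 2) := by
        apply Finset.sum_le_sum
        intro w hw
        have h1 : (1:ℝ) ≤ (∑ i, Y i (w i)) ^ 2 / a ^ 2 := by
          rw [le_div_iff₀ ha2, one_mul]; exact hkey w hw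
        nlinarith [hPnn w]
    _ ≤ ∑ w : Fin n → Option Bool,
        noiseProb pf pe w * ((∑ i, Y i (w i)) ^ 2 / a ^ 2) := by
        apply Finset.sum_le_sum_of_subset_of_nonneg (Finset.filter_subset _ _)
        intro w _ _
        have := hPnn w
        positivity
    _ = (∑ w : Fin n → Option Bool, noiseProb pf pe w * (∑ i, Y i (w i)) ^ 2) / a ^ 2 := by
        rw [Finset.sum_div]
        apply Finset.sum_congr rfl
        intro w _
        ring
    _ = (∑ i, ∑ b : Option Bool, qfun pf pe i b * (Y i b) ^ 2) / a ^ 2 := by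
        rw [expect_sq pf pe hpf0 Y hcent]
    _ ≤ (∑ _i : Fin n, (4:ℝ)) / a ^ 2 := by
        gcongr with i _
        exact hYsq i
    _ = 4 * n / a ^ 2 := by
        simp [Finset.sum_const, Finset.card_univ]
        ring

end Prob

end Aux

section Dec
open Finset
lemma eCount_chOut {n : ℕ} (x : Fin n → Bool) (w : Fin n → Option Bool) :
    eCount (chOut x w) = eCount w := by
  unfold eCount
  congr 1
  apply Finset.filter_congr
  intro i _
  rcases hwi : w i with _ | b <;> simp [chOut, hwi]

lemma fCount_chOut {n : ℕ} (x : Fin n → Bool) (w : Fin n → Option Bool) :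
    fCount x (chOut x w) = tCount w := by
  unfold fCount tCount
  congr 1
  apply Finset.filter_congr
  intro i _
  rcases hwi : w i with _ | b
  · simp [chOut, hwi]
  · rcases b <;> cases hxi : x i <;> simp [chOut, hwi, hxi]

noncomputable def decoder {n : ℕ} (C : Finset (Fin n → Bool)) (hCne : C.Nonempty)
    (d : ℕ) : (Fin n → Option Bool) → (Fin n → Bool) :=
  fun y =>
    if h : ∃ x ∈ C, 2 * fCount x y + eCount y < d then h.choose else hCne.choose

lemma decoder_mem {n : ℕ} (C : Finset (Fin n → Bool)) (hCne : C.Nonempty) (d : ℕ)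
    (y : Fin n → Option Bool) : decoder C hCne d y ∈ C := by
  unfold decoder
  split_ifs with h
  · exact h.choose_spec.1
  · exact hCne.choose_spec

lemma decoder_correct {n : ℕ} (C : Finset (Fin n → Bool)) (hCne : C.Nonempty) (d : ℕ)
    (hCd : ∀ x ∈ C, ∀ x' ∈ C, x ≠ x' → d ≤ hdist x x')
    (x : Fin n → Bool) (hx : x ∈ C) (w : Fin n → Option Bool)
    (hw : 2 * tCount w + eCount w < d) :
    decoder C hCne d (chOut x w) = x := by
  set y := chOut x w with hy
  have hxpred : 2 * fCount x y + eCount y < d := by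
    rw [hy, fCount_chOut, eCount_chOut]; exact hw
  have hex : ∃ x' ∈ C, 2 * fCount x' y + eCount y < d := ⟨x, hx, hxpred⟩
  unfold decoder
  rw [dif_pos hex]
  by_contra hne
  have hspec := hex.choose_spec
  have hdle := hCd _ hspec.1 x hx hne
  have htri := hdist_le hex.choose x y
  omega

end Dec

set_option maxHeartbeats 1000000 in
theorem achievability_binary_channels_with_dictionaries
    (pf pe : (n : ℕ) → Fin n → ℝ)
    (hpf0 : ∀ n i, 0 ≤ pf n i) (hpe0 : ∀ n i, 0 ≤ pe n i)
    (hpfe : ∀ n i, pf n i + pe n i ≤ 1)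
    (μf μe : ℕ → ℝ)
    (hμf : ∀ n, μf n = ∑ i, pf n i) (hμe : ∀ n, μe n = ∑ i, pe n i)
    (hmin : Filter.Tendsto (fun n => min (μf n) (μe n)) Filter.atTop Filter.atTop)
    (p : ℝ)
    (hp : p = Filter.limsup (fun n : ℕ => (2 * μf n + μe n) / n) Filter.atTop)
    (hphalf : p < 1 / 2)
    (α : ℝ) (hα1 : binEnt p < α) (hα2 : α ≤ 1)
    (D : (n : ℕ) → Finset (Fin n → Bool))
    (hD : ∀ n : ℕ, (2 : ℝ) ^ (α * (n : ℝ)) ≤ ((D n).card : ℝ))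
    (R : ℝ) (hR0 : 0 < R) (hR : R < α - binEnt p)
    (ε : ℝ) (hε : 0 < ε) :
    ∀ᶠ n in Filter.atTop,
      ∃ C : Finset (Fin n → Bool), C ⊆ D n ∧
        (2 : ℝ) ^ ((n : ℝ) * R) ≤ C.card ∧
        ∃ g : (Fin n → Option Bool) → (Fin n → Bool),
          (∀ y, g y ∈ C) ∧ ∀ x ∈ C, errProb (pf n) (pe n) g x < ε := by
  -- boundedness of the limsup sequence
  have hbdd : Filter.IsBoundedUnder (· ≤ ·) Filter.atTop
      (fun n : ℕ => (2 * μf n + μe n) / n) := by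
    refine Filter.isBoundedUnder_of ⟨2, fun n => ?_⟩
    rcases Nat.eq_zero_or_pos n with rfl | hn
    · simp
    · have hnR : (0:ℝ) < n := by exact_mod_cast hn
      rw [div_le_iff₀ hnR]
      have : 2 * μf n + μe n = ∑ i, (2 * pf n i + pe n i) := by
        rw [hμf, hμe, Finset.mul_sum, ← Finset.sum_add_distrib]
      rw [this]
      calc ∑ i, (2 * pf n i + pe n i) ≤ ∑ _i : Fin n, (2:ℝ) := by
            apply Finset.sum_le_sum
            intro i _
            have h1 := hpfe n i; have h2 := hpe0 n i; linarith
        _ = 2 * n := by simp [Finset.sum_const, Finset.card_univ]; ring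
  have hp0 : 0 ≤ p := by
    rw [hp]
    apply Filter.le_limsup_of_frequently_le _ hbdd
    apply Filter.Frequently.of_forall
    intro n
    have h1 : 0 ≤ 2 * μf n + μe n := by
      rw [hμf, hμe]
      have := Finset.sum_nonneg (fun i (_ : i ∈ Finset.univ) => hpf0 n i)
      have := Finset.sum_nonneg (fun i (_ : i ∈ Finset.univ) => hpe0 n i)
      linarith
    positivity
  -- continuity of binEnt
  have hcont : Continuous binEnt := by
    have h1 : Continuous fun x : ℝ => x * Real.logb 2 x := by
      have he : (fun x : ℝ => x * Real.logb 2 x) = fun x => (x * Real.log x) / Real.log 2 := by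
        funext x; rw [Real.logb]; ring
      rw [he]; exact Real.continuous_mul_log.div_const _
    have h2 : Continuous fun x : ℝ => (1 - x) * Real.logb 2 (1 - x) := by
      have he : (fun x : ℝ => (1 - x) * Real.logb 2 (1 - x))
          = (fun y : ℝ => (y * Real.log y) / Real.log 2) ∘ (fun x => 1 - x) := by
        funext x; simp [Function.comp, Real.logb]; ring
      rw [he]
      exact (Real.continuous_mul_log.div_const _).comp (continuous_const.sub continuous_id)
    unfold binEnt
    exact h1.neg.sub h2
  -- choose δ with p < δ < 1/2 and binEnt δ < α - R
  obtain ⟨δ, hpδ, hδhalf, hδent⟩ : ∃ δ : ℝ, p < δ ∧ δ < 1/2 ∧ binEnt δ < α - R := by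
    have hopen : IsOpen {x : ℝ | binEnt x < α - R ∧ x < 1/2} :=
      ((isOpen_lt hcont continuous_const).inter (isOpen_lt continuous_id continuous_const))
    have hpmem : p ∈ {x : ℝ | binEnt x < α - R ∧ x < 1/2} := ⟨by linarith, hphalf⟩
    obtain ⟨η, hη0, hball⟩ := Metric.isOpen_iff.mp hopen p hpmem
    have hmem : p + η/2 ∈ {x : ℝ | binEnt x < α - R ∧ x < 1/2} := by
      apply hball
      rw [Metric.mem_ball, Real.dist_eq]
      rw [show p + η/2 - p = η/2 by ring, abs_of_pos (by linarith)]
      linarith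
    exact ⟨p + η/2, by linarith, hmem.2, hmem.1⟩
  set p' : ℝ := (p + δ) / 2 with hp'
  have hpp' : p < p' := by rw [hp']; linarith
  have hp'δ : p' < δ := by rw [hp']; linarith
  have hδ0 : 0 < δ := lt_of_le_of_lt hp0 hpδ
  have hgap : 0 < δ - p' := by linarith
  -- eventual conditions
  have E1 : ∀ᶠ n : ℕ in Filter.atTop, (2 * μf n + μe n) / n < p' := by
    apply Filter.eventually_lt_of_limsup_lt _ hbdd
    rw [← hp]; exact hpp'
  have E2 : ∀ᶠ n : ℕ in Filter.atTop, 4 / (ε * (δ - p')^2) < (n : ℝ) := by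
    have := tendsto_natCast_atTop_atTop (R := ℝ)
    exact this.eventually_gt_atTop _
  have E3 : ∀ᶠ n : ℕ in Filter.atTop, 1 ≤ n := Filter.eventually_ge_atTop 1
  filter_upwards [E1, E2, E3] with n h1 h2 h3
  have hnR : (0:ℝ) < n := by exact_mod_cast h3
  -- code construction
  set d : ℕ := ⌊δ * n⌋₊ + 1 with hd
  have hd0 : 0 < d := Nat.succ_pos _
  obtain ⟨C, hCD, hCdist, hCcard⟩ := greedy_code d hd0 (D n)
  set B : ℕ := ∑ k ∈ Finset.range d, n.choose k with hB
  have hBle : (B : ℝ) ≤ (2:ℝ) ^ (binEnt δ * n) := by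
    have := sum_choose_le_entropy δ hδ0 (le_of_lt hδhalf) n
    rw [hB]
    push_cast
    exact this
  have hB0 : (0:ℝ) < (B:ℝ) := by
    have h01 : (1:ℕ) ≤ B := by
      rw [hB]
      calc (1:ℕ) = n.choose 0 := by simp
        _ ≤ ∑ k ∈ Finset.range d, n.choose k :=
          Finset.single_le_sum (f := fun k => n.choose k) (fun k _ => Nat.zero_le _)
            (Finset.mem_range.mpr hd0)
    exact_mod_cast h01
  -- cardinality bound
  have hcard2 : (2:ℝ) ^ (α * n) ≤ (C.card : ℝ) * (2:ℝ) ^ (binEnt δ * n) := by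
    calc (2:ℝ) ^ (α * n) ≤ ((D n).card : ℝ) := hD n
      _ ≤ (C.card : ℝ) * (B : ℝ) := by exact_mod_cast hCcard
      _ ≤ (C.card : ℝ) * (2:ℝ) ^ (binEnt δ * n) := by
          apply mul_le_mul_of_nonneg_left hBle (Nat.cast_nonneg _)
  have hcardR : (2:ℝ) ^ ((n:ℝ) * R) ≤ (C.card : ℝ) := by
    have hstep : (2:ℝ) ^ (α * n - binEnt δ * n) ≤ (C.card : ℝ) := by
      rw [Real.rpow_sub (by norm_num), div_le_iff₀ (Real.rpow_pos_of_pos (by norm_num) _)]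
      exact hcard2
    refine le_trans ?_ hstep
    apply Real.rpow_le_rpow_of_exponent_le (by norm_num)
    nlinarith [Nat.cast_nonneg (α := ℝ) n]
  have hCne : C.Nonempty := by
    rw [← Finset.card_pos]
    have hpos : (0:ℝ) < (C.card : ℝ) :=
      lt_of_lt_of_le (Real.rpow_pos_of_pos (by norm_num) _) hcardR
    exact_mod_cast hpos
  refine ⟨C, hCD, hcardR, decoder C hCne d, decoder_mem C hCne d, ?_⟩
  -- error probability bound
  intro x hx
  set a : ℝ := (δ - p') * n with ha
  have ha0 : 0 < a := mul_pos hgap hnR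
  have hmean : (∑ i, (2 * pf n i + pe n i)) + a ≤ (d : ℝ) := by
    have hsum : ∑ i, (2 * pf n i + pe n i) = 2 * μf n + μe n := by
      rw [hμf, hμe, Finset.mul_sum, ← Finset.sum_add_distrib]
    rw [hsum, ha]
    have hlt : 2 * μf n + μe n < p' * n := by
      rw [div_lt_iff₀ hnR] at h1
      linarith
    have hfl : δ * n < ((d : ℕ) : ℝ) := by
      rw [hd]
      push_cast
      exact Nat.lt_floor_add_one _
    nlinarith
  have htail := prob_tail_le (pf n) (pe n) (hpf0 n) (hpe0 n) (hpfe n) d a ha0 hmean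
  have herr : errProb (pf n) (pe n) (decoder C hCne d) x ≤
      ∑ w ∈ Finset.univ.filter
        (fun w : Fin n → Option Bool => d ≤ 2 * tCount w + eCount w),
      noiseProb (pf n) (pe n) w := by
    unfold errProb
    apply Finset.sum_le_sum_of_subset_of_nonneg
    · intro w hw
      rw [Finset.mem_filter] at hw ⊢
      refine ⟨Finset.mem_univ _, ?_⟩
      by_contra hlt
      push_neg at hlt
      exact hw.2 (decoder_correct C hCne d hCdist x hx w hlt)
    · intro w _ _
      exact noiseProb_nonneg (pf n) (pe n) (hpf0 n) (hpe0 n) (hpfe n) w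
  have hfinal : 4 * (n:ℝ) / a ^ 2 < ε := by
    rw [ha]
    have heq : 4 * (n:ℝ) / ((δ - p') * n) ^ 2 = 4 / ((δ - p')^2 * n) := by
      field_simp
    rw [heq, div_lt_iff₀ (by positivity)]
    rw [div_lt_iff₀ (by positivity)] at h2
    nlinarith
  calc errProb (pf n) (pe n) (decoder C hCne d) x ≤ _ := herr
    _ ≤ 4 * (n:ℝ) / a ^ 2 := htail
    _ < ε := hfinal
end

section
/- Consider the binary symmetric channel with crossover probability p_f ∈ (0, 1/4): a transmitted word x ∈ {0,1}^n is received as Y(x) ∈ {0,1}^n where each bit is flipped independently with probability p_f and no erasures occur. If α satisfies H(2p_f) < α ≤ 1 and {D_n} is any sequence of dictionaries D_n ⊆ {0,1}^n with #D_n ≥ 2^{αn}, then every rate 0 < R < α − H(2p_f) is achievable using these dictionaries: for every ε > 0 and all sufficiently large n there exist a code C_n ⊆ D_n with #C_n ≥ 2^{nR} and a decoder g_n : {0,1}^n → C_n such that max_{x ∈ C_n} P(g_n(Y(x)) ≠ x) < ε. -/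
open scoped Classical BigOperators

/-- Probability of the flip pattern `w : Fin n → Bool` for a binary symmetric
channel with crossover probability `pf`: each bit is flipped independently with
probability `pf`. -/
noncomputable def bscNoiseProb {n : ℕ} (pf : ℝ) (w : Fin n → Bool) : ℝ :=
  ∏ i, (if w i then pf else 1 - pf)

/-- Error probability `P(g(Y(x)) ≠ x)` of a decoder `g` on the transmitted word `x`,
where the output of the BSC is `Y(x) = x ⊕ w` for the random flip pattern `w`. -/
noncomputable def bscErrProb {n : ℕ} (pf : ℝ)
    (g : (Fin n → Bool) → (Fin n → Bool)) (x : Fin n → Bool) : ℝ :=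
  ∑ w ∈ Finset.univ.filter (fun w : Fin n → Bool => g (fun i => xor (x i) (w i)) ≠ x),
    bscNoiseProb pf w

section Aux

open Finset

/-- Hamming weight of a boolean word. -/
def wtB {n : ℕ} (w : Fin n → Bool) : ℕ := (Finset.univ.filter (fun i => w i = true)).card

lemma sum_prod_bool (n : ℕ) (a b : ℝ) :
    ∑ w : Fin n → Bool, ∏ i, (if w i then a else b) = (a + b) ^ n := by
  rw [← Fintype.piFinset_univ, ← Finset.prod_univ_sum (fun _ => (univ : Finset Bool))
      (fun _ c => if c then a else b)]
  simp [add_comm]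

lemma prod_eq_pow_wt {n : ℕ} (w : Fin n → Bool) (a b : ℝ) :
    ∏ i, (if w i then a else b) = a ^ (wtB w) * b ^ (n - wtB w) := by
  rw [← Finset.prod_filter_mul_prod_filter_not univ (fun i => w i = true)]
  have h1 : ∏ i ∈ univ.filter (fun i => w i = true), (if w i then a else b) = a ^ wtB w := by
    rw [Finset.prod_congr rfl (fun i hi => ?_), Finset.prod_const]
    · rfl
    · simp only [mem_filter] at hi; simp [hi.2]
  have h2 : ∏ i ∈ univ.filter (fun i => ¬ w i = true), (if w i then a else b)
      = b ^ (n - wtB w) := by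
    rw [Finset.prod_congr rfl (fun i hi => ?_), Finset.prod_const]
    · congr 1
      have := Finset.card_filter_add_card_filter_not (s := univ)
        (p := fun i : Fin n => w i = true)
      have hcard : (univ : Finset (Fin n)).card = n := by simp
      unfold wtB
      omega
    · simp only [mem_filter] at hi; simp [hi.2]
  rw [h1, h2]

lemma wtB_le {n : ℕ} (w : Fin n → Bool) : wtB w ≤ n := by
  classical
  simpa [wtB] using Finset.card_filter_le univ (fun i => w i = true)

lemma kl_pos {p t : ℝ} (hp0 : 0 < p) (hpt : p < t) (ht1 : t < 1) :
    t * Real.log (p / t) + (1 - t) * Real.log ((1 - p) / (1 - t)) < 0 := by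
  have ht0 : 0 < t := hp0.trans hpt
  have h1t : 0 < 1 - t := by linarith
  have h1p : 0 < 1 - p := by linarith
  have hx : p / t ∈ Set.Ioi (0:ℝ) := Set.mem_Ioi.2 (div_pos hp0 ht0)
  have hy : (1 - p) / (1 - t) ∈ Set.Ioi (0:ℝ) := Set.mem_Ioi.2 (div_pos h1p h1t)
  have hxy : p / t ≠ (1 - p) / (1 - t) := by
    intro h
    rw [div_eq_div_iff ht0.ne' h1t.ne'] at h
    nlinarith
  have := strictConcaveOn_log_Ioi.2 hx hy hxy ht0 h1t (by ring)
  simp only [smul_eq_mul] at this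
  have hcomb : t * (p / t) + (1 - t) * ((1 - p) / (1 - t)) = 1 := by
    field_simp
    ring
  rw [hcomb, Real.log_one] at this
  linarith

lemma rho_pos {p t : ℝ} (hp0 : 0 < p) (hpt : p < t) (ht1 : t < 1) :
    0 < ((1 - p) / (1 - t)) / (t * (1 - p) / (p * (1 - t))) ^ t := by
  have ht0 : 0 < t := hp0.trans hpt
  have h1t : 0 < 1 - t := by linarith
  have h1p : 0 < 1 - p := by linarith
  have hl : 0 < t * (1 - p) / (p * (1 - t)) := by positivity
  exact div_pos (div_pos h1p h1t) (Real.rpow_pos_of_pos hl t)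

lemma rho_lt_one {p t : ℝ} (hp0 : 0 < p) (hpt : p < t) (ht1 : t < 1) :
    ((1 - p) / (1 - t)) / (t * (1 - p) / (p * (1 - t))) ^ t < 1 := by
  have ht0 : 0 < t := hp0.trans hpt
  have h1t : 0 < 1 - t := by linarith
  have h1p : 0 < 1 - p := by linarith
  have hl : 0 < t * (1 - p) / (p * (1 - t)) := by positivity
  have hlt : 0 < (t * (1 - p) / (p * (1 - t))) ^ t := Real.rpow_pos_of_pos hl t
  rw [div_lt_one hlt, ← Real.log_lt_log_iff (div_pos h1p h1t) hlt, Real.log_rpow hl]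
  have hlog : Real.log (t * (1 - p) / (p * (1 - t)))
      = Real.log ((1 - p) / (1 - t)) - Real.log (p / t) := by
    rw [Real.log_div (by positivity) (by positivity),
        Real.log_div h1p.ne' h1t.ne', Real.log_div hp0.ne' ht0.ne',
        Real.log_mul ht0.ne' h1p.ne', Real.log_mul hp0.ne' h1t.ne']
    ring
  have := kl_pos hp0 hpt ht1
  nlinarith [this, hlog]

lemma chernoff_tail {n : ℕ} {p t : ℝ} (hp0 : 0 < p) (hpt : p < t) (ht1 : t < 1)
    {m : ℕ} (hm : t * n ≤ m) :
    ∑ w ∈ Finset.univ.filter (fun w : Fin n → Bool => m ≤ wtB w),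
        ∏ i, (if w i then p else 1 - p)
      ≤ (((1 - p) / (1 - t)) / (t * (1 - p) / (p * (1 - t))) ^ t) ^ n := by
  have ht0 : 0 < t := hp0.trans hpt
  have h1t : 0 < 1 - t := by linarith
  have h1p : 0 < 1 - p := by linarith
  set l : ℝ := t * (1 - p) / (p * (1 - t)) with hl_def
  have hl1 : 1 < l := by
    rw [hl_def, lt_div_iff₀ (by positivity)]
    nlinarith
  have hl0 : 0 < l := lt_trans one_pos hl1
  have key : (∑ w ∈ Finset.univ.filter (fun w : Fin n → Bool => m ≤ wtB w),
      ∏ i, (if w i then p else 1 - p)) * l ^ m ≤ (p * l + (1 - p)) ^ n := by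
    rw [← sum_prod_bool n (p * l) (1 - p), Finset.sum_mul]
    refine le_trans (Finset.sum_le_sum ?_)
      (Finset.sum_le_sum_of_subset_of_nonneg (Finset.filter_subset _ _) ?_)
    · intro w hw
      simp only [Finset.mem_filter] at hw
      rw [prod_eq_pow_wt, prod_eq_pow_wt, mul_pow]
      have hlm : l ^ m ≤ l ^ (wtB w) := pow_le_pow_right₀ hl1.le hw.2
      have h1 : (0:ℝ) ≤ p ^ wtB w * (1 - p) ^ (n - wtB w) := by positivity
      calc p ^ wtB w * (1 - p) ^ (n - wtB w) * l ^ m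
          ≤ p ^ wtB w * (1 - p) ^ (n - wtB w) * l ^ wtB w := by
            exact mul_le_mul_of_nonneg_left hlm h1
        _ = p ^ wtB w * l ^ wtB w * (1 - p) ^ (n - wtB w) := by ring
    · intro w _ _
      rw [prod_eq_pow_wt]
      positivity
  have hpl : p * l + (1 - p) = (1 - p) / (1 - t) := by
    rw [hl_def]; field_simp; ring
  have hlm0 : (0:ℝ) < l ^ m := by positivity
  have step1 : (∑ w ∈ Finset.univ.filter (fun w : Fin n → Bool => m ≤ wtB w),
      ∏ i, (if w i then p else 1 - p)) ≤ ((1 - p) / (1 - t)) ^ n / l ^ m := by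
    rw [le_div_iff₀ hlm0, ← hpl]; exact key
  refine step1.trans ?_
  have hlt : l ^ (m:ℝ) = l ^ m := Real.rpow_natCast l m
  have hmono : (l ^ t) ^ n ≤ l ^ m := by
    rw [← hlt, ← Real.rpow_natCast (l ^ t) n, ← Real.rpow_mul hl0.le]
    exact Real.rpow_le_rpow_of_exponent_le hl1.le (by linarith [hm])
  calc ((1 - p) / (1 - t)) ^ n / l ^ m
      ≤ ((1 - p) / (1 - t)) ^ n / (l ^ t) ^ n :=
        div_le_div_of_nonneg_left (by positivity) (by positivity) hmono
    _ = (((1 - p) / (1 - t)) / l ^ t) ^ n := by rw [← div_pow]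

lemma ball_card_le_s1 {n : ℕ} {δ : ℝ} (hδ0 : 0 < δ) (hδ : δ ≤ 1/2) {s : ℕ} (hs : (s:ℝ) ≤ δ * n) :
    (((Finset.univ.filter (fun w : Fin n → Bool => wtB w ≤ s)).card : ℝ))
      ≤ 2 ^ ((n:ℝ) * binEnt δ) := by
  have h1δ : 0 < 1 - δ := by linarith
  set u : ℝ := δ / (1 - δ) with hu_def
  have hu0 : 0 < u := div_pos hδ0 h1δ
  have hu1 : u ≤ 1 := by rw [hu_def, div_le_one h1δ]; linarith
  set c : ℝ := u ^ (δ * n) * (1 - δ) ^ (n:ℝ) with hc_def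
  have hc0 : 0 < c := by positivity
  have hterm : ∀ w : Fin n → Bool, wtB w ≤ s →
      c ≤ δ ^ (wtB w) * (1 - δ) ^ (n - wtB w) := by
    intro w hw
    have hkn : wtB w ≤ n := wtB_le w
    have hks : (wtB w : ℝ) ≤ δ * n := le_trans (by exact_mod_cast hw) hs
    have hnk : wtB w + (n - wtB w) = n := by omega
    have hkey : u ^ (wtB w : ℝ) * (1 - δ) ^ (n:ℝ)
        = δ ^ (wtB w) * (1 - δ) ^ (n - wtB w) := by
      have hp : (1-δ)^n = (1-δ)^(wtB w) * (1-δ)^(n - wtB w) := by rw [← pow_add, hnk]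
      rw [Real.rpow_natCast, Real.rpow_natCast (1-δ) n, hp, hu_def, div_pow]
      field_simp
    rw [← hkey, hc_def]
    have : u ^ (δ * n) ≤ u ^ (wtB w : ℝ) :=
      Real.rpow_le_rpow_of_exponent_ge hu0 hu1 hks
    exact mul_le_mul_of_nonneg_right this (by positivity)
  have hcard : ((Finset.univ.filter (fun w : Fin n → Bool => wtB w ≤ s)).card : ℝ) * c ≤ 1 := by
    have h1 : ((Finset.univ.filter (fun w : Fin n → Bool => wtB w ≤ s)).card : ℝ) * c
        ≤ ∑ w ∈ Finset.univ.filter (fun w : Fin n → Bool => wtB w ≤ s),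
            ∏ i, (if w i then δ else 1 - δ) := by
      rw [Finset.card_eq_sum_ones, Nat.cast_sum, Finset.sum_mul]
      refine Finset.sum_le_sum fun w hw => ?_
      simp only [Finset.mem_filter] at hw
      rw [prod_eq_pow_wt, Nat.cast_one, one_mul]
      exact hterm w hw.2
    refine h1.trans ?_
    have h2 : ∑ w ∈ Finset.univ.filter (fun w : Fin n → Bool => wtB w ≤ s),
        ∏ i, (if w i then δ else 1 - δ)
        ≤ ∑ w : Fin n → Bool, ∏ i, (if w i then δ else 1 - δ) := by
      refine Finset.sum_le_sum_of_subset_of_nonneg (Finset.filter_subset _ _) fun w _ _ => ?_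
      rw [prod_eq_pow_wt]; positivity
    refine h2.trans ?_
    rw [sum_prod_bool]
    norm_num
  have hδ1 : δ < 1 := by linarith
  have hlog2 : Real.log 2 ≠ 0 := ne_of_gt (Real.log_pos one_lt_two)
  have hpow : (2:ℝ) ^ ((n:ℝ) * binEnt δ) = c⁻¹ := by
    have hc_pos : (0:ℝ) < c⁻¹ := by positivity
    have hlogeq : Real.log ((2:ℝ) ^ ((n:ℝ) * binEnt δ)) = Real.log c⁻¹ := by
      rw [Real.log_rpow two_pos, Real.log_inv, hc_def,
        Real.log_mul (by positivity) (by positivity),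
        Real.log_rpow hu0, Real.log_rpow h1δ, hu_def,
        Real.log_div hδ0.ne' h1δ.ne']
      unfold binEnt
      rw [Real.logb, Real.logb]
      field_simp
      ring
    have := congrArg Real.exp hlogeq
    rwa [Real.exp_log (by positivity), Real.exp_log hc_pos] at this
  rw [hpow, ← one_div, le_div_iff₀ hc0]
  exact hcard

lemma wtB_xor {n : ℕ} (x y : Fin n → Bool) :
    wtB (fun i => xor (x i) (y i)) = hammingDist x y := by
  unfold wtB hammingDist
  congr 1
  ext i
  simp only [Finset.mem_filter, Finset.mem_univ, true_and]
  cases x i <;> cases y i <;> simp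

lemma ball_card_eq {n : ℕ} (x : Fin n → Bool) (s : ℕ) :
    (Finset.univ.filter (fun y : Fin n → Bool => hammingDist x y ≤ s)).card
      = (Finset.univ.filter (fun w : Fin n → Bool => wtB w ≤ s)).card := by
  apply Finset.card_bij (fun y _ => fun i => xor (x i) (y i))
  · intro y hy
    simp only [Finset.mem_filter, Finset.mem_univ, true_and] at hy ⊢
    rwa [wtB_xor]
  · intro y hy z hz h
    funext i
    have := congrFun h i
    cases x i <;> simpa using this
  · intro w hw
    simp only [Finset.mem_filter, Finset.mem_univ, true_and] at hw ⊢
    refine ⟨fun i => xor (x i) (w i), ?_, ?_⟩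
    · rw [← wtB_xor x (fun i => xor (x i) (w i))]
      convert hw using 2
      funext i
      show xor (x i) (xor (x i) (w i)) = w i
      cases x i <;> cases w i <;> rfl
    · funext i
      show xor (x i) (xor (x i) (w i)) = w i
      cases x i <;> cases w i <;> rfl

lemma packing {n : ℕ} (s : ℕ) (D : Finset (Fin n → Bool)) :
    ∃ C : Finset (Fin n → Bool), C ⊆ D ∧
      (∀ x ∈ C, ∀ y ∈ C, x ≠ y → s < hammingDist x y) ∧
      D.card ≤ C.card * (Finset.univ.filter (fun w : Fin n → Bool => wtB w ≤ s)).card := by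
  induction D using Finset.strongInduction with
  | _ D ih =>
    rcases eq_or_ne D ∅ with hD | hD
    · exact ⟨∅, by simp [hD]⟩
    obtain ⟨x, hx⟩ := Finset.nonempty_iff_ne_empty.2 hD
    set B := D.filter (fun y => hammingDist x y ≤ s) with hB_def
    have hxB : x ∈ B := by
      simp only [hB_def, Finset.mem_filter]
      exact ⟨hx, by simp⟩
    set D' := D \ B with hD'_def
    have hss : D' ⊂ D := Finset.sdiff_ssubset (Finset.filter_subset _ _) ⟨x, hxB⟩
    obtain ⟨C', hC'sub, hC'pair, hC'card⟩ := ih D' hss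
    have hxD' : x ∉ D' := by simp [hD'_def, hxB, hx]
    have hxC' : x ∉ C' := fun h => hxD' (hC'sub h)
    refine ⟨insert x C', ?_, ?_, ?_⟩
    · refine Finset.insert_subset hx (hC'sub.trans ?_)
      exact Finset.sdiff_subset
    · intro a ha b hb hab
      simp only [Finset.mem_insert] at ha hb
      have far : ∀ y ∈ C', s < hammingDist x y := by
        intro y hy
        have hyD' := hC'sub hy
        simp only [hD'_def, Finset.mem_sdiff, hB_def, Finset.mem_filter, not_and, not_le]
          at hyD'
        exact hyD'.2 hyD'.1
      rcases ha with rfl | ha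
      · rcases hb with rfl | hb
        · exact absurd rfl hab
        · exact far b hb
      · rcases hb with rfl | hb
        · rw [hammingDist_comm]; exact far a ha
        · exact hC'pair a ha b hb hab
    · have hBcard : B.card ≤
          (Finset.univ.filter (fun w : Fin n → Bool => wtB w ≤ s)).card := by
        rw [← ball_card_eq x s]
        refine Finset.card_le_card ?_
        intro y hy
        simp only [hB_def, Finset.mem_filter] at hy
        simp [hy.2]
      have hBD : B ⊆ D := by rw [hB_def]; exact Finset.filter_subset _ _
      have hDsplit : D.card = D'.card + B.card := by
        have h2 := Finset.card_le_card hBD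
        rw [hD'_def, Finset.card_sdiff_of_subset hBD]
        omega
      rw [Finset.card_insert_of_notMem hxC', hDsplit, add_mul, one_mul]
      exact Nat.add_le_add hC'card hBcard

lemma dist_xor {n : ℕ} (x w : Fin n → Bool) :
    hammingDist x (fun i => xor (x i) (w i)) = wtB w := by
  rw [← wtB_xor x (fun i => xor (x i) (w i))]
  congr 1
  funext i
  cases x i <;> cases w i <;> rfl

lemma exists_decoder {n : ℕ} (r : ℕ) (C : Finset (Fin n → Bool)) (hC : C.Nonempty)
    (hpair : ∀ x ∈ C, ∀ y ∈ C, x ≠ y → 2 * r < hammingDist x y) :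
    ∃ g : (Fin n → Bool) → (Fin n → Bool), (∀ y, g y ∈ C) ∧
      ∀ x ∈ C, ∀ w : Fin n → Bool, wtB w ≤ r → g (fun i => xor (x i) (w i)) = x := by
  classical
  refine ⟨fun y => if h : ∃ c ∈ C, hammingDist c y ≤ r then h.choose else hC.choose, ?_, ?_⟩
  · intro y
    dsimp only
    split
    · next h => exact h.choose_spec.1
    · exact hC.choose_spec
  · intro x hx w hw
    have hdist : hammingDist x (fun i => xor (x i) (w i)) = wtB w := dist_xor x w
    have hex : ∃ c ∈ C, hammingDist c (fun i => xor (x i) (w i)) ≤ r :=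
      ⟨x, hx, by rw [hdist]; exact hw⟩
    dsimp only
    rw [dif_pos hex]
    obtain ⟨hc, hcd⟩ := hex.choose_spec
    by_contra hne
    have hfar : 2 * r < hammingDist x hex.choose :=
      hpair x hx _ hc (fun h => hne h.symm)
    have htri : hammingDist x hex.choose
        ≤ hammingDist x (fun i => xor (x i) (w i))
          + hammingDist (fun i => xor (x i) (w i)) hex.choose :=
      hammingDist_triangle _ _ _
    rw [hdist] at htri
    have h2 : hammingDist (fun i => xor (x i) (w i)) hex.choose ≤ r := by
      rw [hammingDist_comm]; exact hcd
    omega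

end Aux

theorem achievability_bsc_with_dictionaries
    (pf : ℝ) (hpf0 : 0 < pf) (hpf1 : pf < 1 / 4)
    (α : ℝ) (hα1 : binEnt (2 * pf) < α) (hα2 : α ≤ 1)
    (D : (n : ℕ) → Finset (Fin n → Bool))
    (hD : ∀ n : ℕ, (2 : ℝ) ^ (α * (n : ℝ)) ≤ ((D n).card : ℝ))
    (R : ℝ) (hR0 : 0 < R) (hR : R < α - binEnt (2 * pf))
    (ε : ℝ) (hε : 0 < ε) :
    ∀ᶠ n in Filter.atTop,
      ∃ C : Finset (Fin n → Bool), C ⊆ D n ∧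
        (2 : ℝ) ^ ((n : ℝ) * R) ≤ (C.card : ℝ) ∧
        ∃ g : (Fin n → Bool) → (Fin n → Bool),
          (∀ y, g y ∈ C) ∧ ∀ x ∈ C, bscErrProb pf g x < ε := by
  have hpf2 : 0 < 2 * pf := by linarith
  have hpf3 : 2 * pf < 1 / 2 := by linarith
  -- continuity of binEnt at 2 pf
  have hcont : ContinuousAt binEnt (2 * pf) := by
    unfold binEnt
    have h1 : ContinuousAt (fun x : ℝ => Real.logb 2 x) (2 * pf) :=
      Real.continuousAt_logb (ne_of_gt hpf2)
    have h2 : ContinuousAt (fun x : ℝ => Real.logb 2 (1 - x)) (2 * pf) := by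
      have hne : (1 : ℝ) - 2 * pf ≠ 0 := by intro h; linarith
      have := Real.continuousAt_logb (b := 2) (x := 1 - 2 * pf) hne
      exact this.comp (continuousAt_const.sub continuousAt_id)
    exact ((continuousAt_id.mul h1).neg).sub
      ((continuousAt_const.sub continuousAt_id).mul h2)
  have hlt : binEnt (2 * pf) < α - R := by linarith
  -- choose δ ∈ (2 pf, 1/2) with binEnt δ < α - R
  obtain ⟨δ, ⟨hδH, hδhalf⟩, hδgt⟩ :
      ∃ δ : ℝ, (binEnt δ < α - R ∧ δ < 1 / 2) ∧ δ ∈ Set.Ioi (2 * pf) := by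
    have hne : (nhdsWithin (2 * pf) (Set.Ioi (2 * pf))).NeBot :=
      nhdsGT_neBot _
    have he1 : ∀ᶠ y in nhds (2 * pf), binEnt y < α - R :=
      hcont.tendsto.eventually_lt_const hlt
    have he2 : ∀ᶠ y in nhds (2 * pf), y < 1 / 2 :=
      Filter.Tendsto.eventually_lt_const hpf3 Filter.tendsto_id
    have he := (he1.and he2).filter_mono (nhdsWithin_le_nhds (s := Set.Ioi (2 * pf)))
    exact (he.and eventually_mem_nhdsWithin).exists
  simp only [Set.mem_Ioi] at hδgt
  have hδ0 : 0 < δ := lt_trans hpf2 hδgt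
  set t : ℝ := δ / 2 with ht_def
  have hpt : pf < t := by rw [ht_def]; linarith
  have ht1 : t < 1 := by rw [ht_def]; linarith
  have ht0 : 0 < t := hpf0.trans hpt
  set ρ : ℝ := ((1 - pf) / (1 - t)) / (t * (1 - pf) / (pf * (1 - t))) ^ t with hρ_def
  have hρ0 : 0 < ρ := rho_pos hpf0 hpt ht1
  have hρ1 : ρ < 1 := rho_lt_one hpf0 hpt ht1
  have hεev : ∀ᶠ n : ℕ in Filter.atTop, ρ ^ n < ε :=
    (tendsto_pow_atTop_nhds_zero_of_lt_one hρ0.le hρ1).eventually_lt_const hε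
  filter_upwards [hεev] with n hρn
  -- radius
  set r : ℕ := ⌊δ * n / 2⌋₊ with hr_def
  have hrle : (r : ℝ) ≤ δ * n / 2 := Nat.floor_le (by positivity)
  have hrlt : δ * n / 2 < (r : ℝ) + 1 := Nat.lt_floor_add_one _
  obtain ⟨C, hCD, hCpair, hCcard⟩ := packing (2 * r) (D n)
  -- volume bound
  have hs2 : ((2 * r : ℕ) : ℝ) ≤ δ * n := by push_cast; linarith
  have hV : (((Finset.univ.filter (fun w : Fin n → Bool => wtB w ≤ 2 * r)).card : ℝ))
      ≤ 2 ^ ((n : ℝ) * binEnt δ) := ball_card_le_s1 hδ0 hδhalf.le hs2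
  -- cardinality bound
  have hVpos : (0:ℝ) < 2 ^ ((n : ℝ) * binEnt δ) := Real.rpow_pos_of_pos two_pos _
  have hcardR : (2 : ℝ) ^ ((n : ℝ) * R) ≤ (C.card : ℝ) := by
    have h1 : (2:ℝ) ^ (α * (n:ℝ)) ≤ (C.card : ℝ) * 2 ^ ((n : ℝ) * binEnt δ) := by
      refine (hD n).trans ?_
      calc ((D n).card : ℝ)
          ≤ (C.card : ℝ) *
            ((Finset.univ.filter (fun w : Fin n → Bool => wtB w ≤ 2 * r)).card : ℝ) := by
            exact_mod_cast hCcard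
        _ ≤ (C.card : ℝ) * 2 ^ ((n : ℝ) * binEnt δ) :=
            mul_le_mul_of_nonneg_left hV (Nat.cast_nonneg _)
    have h2 : (2:ℝ) ^ ((n:ℝ) * R) * 2 ^ ((n : ℝ) * binEnt δ) ≤ (2:ℝ) ^ (α * (n:ℝ)) := by
      rw [← Real.rpow_add two_pos]
      refine Real.rpow_le_rpow_of_exponent_le one_le_two ?_
      have hnn : (0:ℝ) ≤ (n:ℝ) := Nat.cast_nonneg n
      nlinarith
    exact le_of_mul_le_mul_right (h2.trans h1) hVpos
  have hCne : C.Nonempty := by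
    rw [← Finset.card_pos]
    have h0 : (0:ℝ) < (C.card : ℝ) :=
      lt_of_lt_of_le (Real.rpow_pos_of_pos two_pos _) hcardR
    exact_mod_cast h0
  obtain ⟨g, hgmem, hgdec⟩ := exists_decoder r C hCne hCpair
  refine ⟨C, hCD, hcardR, g, hgmem, ?_⟩
  intro x hx
  have herr : bscErrProb pf g x
      ≤ ∑ w ∈ Finset.univ.filter (fun w : Fin n → Bool => r + 1 ≤ wtB w),
          ∏ i, (if w i then pf else 1 - pf) := by
    unfold bscErrProb bscNoiseProb
    refine Finset.sum_le_sum_of_subset_of_nonneg ?_ ?_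
    · intro w hw
      simp only [Finset.mem_filter, Finset.mem_univ, true_and] at hw ⊢
      by_contra hle
      push_neg at hle
      exact hw (hgdec x hx w (by omega))
    · intro w _ _
      refine Finset.prod_nonneg fun i _ => ?_
      split <;> linarith
  have hm : t * (n:ℝ) ≤ ((r + 1 : ℕ) : ℝ) := by
    push_cast
    rw [ht_def]
    linarith
  have hch := chernoff_tail hpf0 hpt ht1 (m := r + 1) hm
  calc bscErrProb pf g x
      ≤ _ := herr
    _ ≤ ρ ^ n := hch
    _ < ε := hρn
end

section
/- Let 0 < p < 1/2 and 0 < α ≤ 1. For every δ > 0 there exists ε₀ > 0 such that for every 0 < ε < ε₀ and all sufficiently large n, any dictionary D ⊆ {0,1}^n with #D ≥ 2^{αn} contains a code C ⊆ D whose minimum Hamming distance exceeds np(1+2ε) and whose size satisfies #C ≥ 2^{n(α − H(p) − δ)}. -/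
open scoped BigOperators

open Finset

lemma gv_ball_card_le (n r : ℕ) (x : Fin n → Bool) :
    ({y : Fin n → Bool | hammingDist x y ≤ r} : Finset _).card
      ≤ ∑ i ∈ range (r+1), n.choose i := by
  classical
  have : (∑ i ∈ range (r+1), n.choose i)
      = ((range (r+1)).biUnion (fun i => powersetCard i (univ : Finset (Fin n)))).card := by
    rw [card_biUnion]
    · simp [card_powersetCard]
    · intro a ha b hb hab
      exact Finset.disjoint_left.2 fun s hs hs' => hab (by
        rw [mem_powersetCard] at hs hs'; omega)
  rw [this]
  apply Finset.card_le_card_of_injOn (fun y => ({i | x i ≠ y i} : Finset (Fin n)))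
  · intro y hy
    simp only [mem_coe, mem_biUnion, mem_range, mem_powersetCard]
    exact ⟨hammingDist x y, by simpa using Nat.lt_succ_of_le (by simpa using hy),
      Finset.subset_univ _, rfl⟩
  · intro a ha b hb hab
    simp only at hab
    funext i
    by_cases h : i ∈ ({j | x j ≠ a j} : Finset (Fin n))
    · have h' : i ∈ ({j | x j ≠ b j} : Finset (Fin n)) := hab ▸ h
      simp only [mem_filter, mem_univ, true_and] at h h'
      revert h h'; cases x i <;> cases a i <;> cases b i <;> simp
    · have h' : i ∉ ({j | x j ≠ b j} : Finset (Fin n)) := hab ▸ h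
      simp only [mem_filter, mem_univ, true_and, not_not] at h h'
      rw [← h, ← h']

lemma gv_greedy (n r B : ℕ)
    (hB : ∀ x : Fin n → Bool,
      ({y : Fin n → Bool | hammingDist x y ≤ r} : Finset _).card ≤ B) :
    ∀ D : Finset (Fin n → Bool), ∃ C : Finset (Fin n → Bool), C ⊆ D ∧
      (∀ x ∈ C, ∀ y ∈ C, x ≠ y → r < hammingDist x y) ∧ D.card ≤ C.card * B := by
  classical
  intro D
  induction D using Finset.strongInductionOn with
  | _ D ih =>
    rcases D.eq_empty_or_nonempty with rfl | ⟨x, hx⟩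
    · exact ⟨∅, Finset.Subset.refl _, by simp, by simp⟩
    · set ball : Finset (Fin n → Bool) := {y : Fin n → Bool | hammingDist x y ≤ r} with hball
      set D' := D \ ball with hD'
      have hxball : x ∈ ball := by simp [hball]
      have hxD' : x ∉ D' := by simp [hD', hxball]
      have hss : D' ⊂ D :=
        (Finset.ssubset_iff_of_subset Finset.sdiff_subset).2 ⟨x, hx, hxD'⟩
      obtain ⟨C', hC'sub, hC'dist, hC'card⟩ := ih D' hss
      have hxC' : x ∉ C' := fun h => hxD' (hC'sub h)
      have hout : ∀ c ∈ C', r < hammingDist x c := by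
        intro c hc
        have : c ∉ ball := by
          have := hC'sub hc; simp only [hD', Finset.mem_sdiff] at this; exact this.2
        simpa [hball, not_le] using this
      refine ⟨insert x C', ?_, ?_, ?_⟩
      · exact Finset.insert_subset hx (hC'sub.trans Finset.sdiff_subset)
      · intro a ha b hb hab
        rcases Finset.mem_insert.1 ha with ha' | ha' <;>
          rcases Finset.mem_insert.1 hb with hb' | hb'
        · exact absurd (ha'.trans hb'.symm) hab
        · exact ha' ▸ hout b hb'
        · rw [hammingDist_comm]; exact hb' ▸ hout a ha'
        · exact hC'dist a ha' b hb' hab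
      · rw [Finset.card_insert_of_notMem hxC', add_mul, one_mul]
        calc D.card ≤ D'.card + (D ∩ ball).card := by
              rw [hD', Finset.card_sdiff_add_card_inter]
          _ ≤ C'.card * B + B :=
              Nat.add_le_add hC'card ((Finset.card_le_card Finset.inter_subset_right).trans (hB x))

lemma gv_step1 (n m : ℕ) (q : ℝ) (hq0 : 0 < q) (hq : q ≤ 1/2) (hmn : m ≤ n) :
    (∑ i ∈ range (m+1), (n.choose i : ℝ)) * (q^m * (1-q)^(n-m)) ≤ 1 := by
  have hq1 : q ≤ 1 - q := by linarith
  have h1q : (0:ℝ) < 1 - q := by linarith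
  have key : ∀ i ∈ range (m+1), (n.choose i : ℝ) * (q^m * (1-q)^(n-m))
      ≤ (n.choose i : ℝ) * (q^i * (1-q)^(n-i)) := by
    intro i hi
    rw [mem_range, Nat.lt_succ_iff] at hi
    apply mul_le_mul_of_nonneg_left _ (Nat.cast_nonneg _)
    have h1 : q^m = q^i * q^(m-i) := by rw [← pow_add]; congr 1; omega
    have h2 : (1-q)^(n-i) = (1-q)^(m-i) * (1-q)^(n-m) := by
      rw [← pow_add]; congr 1; omega
    have hle : q^(m-i) ≤ (1-q)^(m-i) := pow_le_pow_left₀ hq0.le hq1 _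
    calc q^m * (1-q)^(n-m) = (q^i * (1-q)^(n-m)) * q^(m-i) := by rw [h1]; ring
      _ ≤ (q^i * (1-q)^(n-m)) * (1-q)^(m-i) :=
          mul_le_mul_of_nonneg_left hle (by positivity)
      _ = q^i * (1-q)^(n-i) := by rw [h2]; ring
  calc (∑ i ∈ range (m+1), (n.choose i : ℝ)) * (q^m * (1-q)^(n-m))
      = ∑ i ∈ range (m+1), (n.choose i : ℝ) * (q^m * (1-q)^(n-m)) := by
        rw [Finset.sum_mul]
    _ ≤ ∑ i ∈ range (m+1), (n.choose i : ℝ) * (q^i * (1-q)^(n-i)) :=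
        Finset.sum_le_sum key
    _ ≤ ∑ i ∈ range (n+1), (n.choose i : ℝ) * (q^i * (1-q)^(n-i)) := by
        apply Finset.sum_le_sum_of_subset_of_nonneg
        · exact Finset.range_subset_range.2 (by omega)
        · intro i _ _
          positivity
    _ = (q + (1-q))^n := by
        rw [add_pow]
        exact Finset.sum_congr rfl fun i hi => by ring
    _ = 1 := by norm_num

lemma gv_step2 (n m : ℕ) (q : ℝ) (hq0 : 0 < q) (hq : q ≤ 1/2)
    (hm : (m:ℝ) ≤ n*q) (hmn : m ≤ n) :
    (2:ℝ) ^ (-((n:ℝ) * binEnt q)) ≤ q^m * (1-q)^(n-m) := by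
  have h1q : (0:ℝ) < 1 - q := by linarith
  have hcast : ((n - m : ℕ) : ℝ) = (n:ℝ) - m := by
    rw [Nat.cast_sub hmn]
  set t : ℝ := (n:ℝ)*q - m with ht
  have ht0 : 0 ≤ t := by linarith
  have e1 : (2:ℝ) ^ (-((n:ℝ) * binEnt q))
      = q ^ ((n:ℝ)*q) * (1-q) ^ ((n:ℝ)*(1-q)) := by
    have : -((n:ℝ) * binEnt q)
        = Real.logb 2 q * ((n:ℝ)*q) + Real.logb 2 (1-q) * ((n:ℝ)*(1-q)) := by
      unfold binEnt; ring
    rw [this, Real.rpow_add two_pos, Real.rpow_mul (by norm_num : (0:ℝ) ≤ 2),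
      Real.rpow_mul (by norm_num : (0:ℝ) ≤ 2),
      Real.rpow_logb two_pos (by norm_num) hq0,
      Real.rpow_logb two_pos (by norm_num) h1q]
  rw [e1]
  have e2 : q ^ ((n:ℝ)*q) * (1-q) ^ ((n:ℝ)*(1-q))
      = (q ^ (m:ℝ) * (1-q) ^ ((n:ℝ)-m)) * (q/(1-q)) ^ t := by
    rw [Real.div_rpow hq0.le h1q.le]
    rw [show (n:ℝ)*q = (m:ℝ) + t by ring,
      show (n:ℝ)*(1-q) = ((n:ℝ)-m) - t by ring,
      Real.rpow_add hq0, Real.rpow_sub h1q]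
    field_simp
  rw [e2]
  have e3 : (q/(1-q)) ^ t ≤ 1 :=
    Real.rpow_le_one (by positivity) (by rw [div_le_one h1q]; linarith) ht0
  calc q ^ (m:ℝ) * (1-q) ^ ((n:ℝ)-m) * (q/(1-q)) ^ t
      ≤ q ^ (m:ℝ) * (1-q) ^ ((n:ℝ)-m) * 1 :=
        mul_le_mul_of_nonneg_left e3 (by positivity)
    _ = q^m * (1-q)^(n-m) := by
        rw [mul_one, ← hcast, Real.rpow_natCast, Real.rpow_natCast]

lemma gv_sum_le (n m : ℕ) (q : ℝ) (hq0 : 0 < q) (hq : q ≤ 1/2)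
    (hm : (m:ℝ) ≤ n*q) (hmn : m ≤ n) :
    ((∑ i ∈ range (m+1), n.choose i : ℕ) : ℝ) ≤ (2:ℝ) ^ ((n:ℝ) * binEnt q) := by
  set P : ℝ := q^m * (1-q)^(n-m) with hP
  have h1q : (0:ℝ) < 1 - q := by linarith
  have hPpos : 0 < P := by positivity
  have hs : ((∑ i ∈ range (m+1), n.choose i : ℕ) : ℝ) ≤ P⁻¹ := by
    rw [← one_div, le_div_iff₀ hPpos]
    push_cast
    exact gv_step1 n m q hq0 hq hmn
  have h2 : ((2:ℝ) ^ ((n:ℝ) * binEnt q))⁻¹ ≤ P := by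
    rw [← Real.rpow_neg (by norm_num : (0:ℝ) ≤ 2)]
    exact gv_step2 n m q hq0 hq hm hmn
  calc ((∑ i ∈ range (m+1), n.choose i : ℕ) : ℝ) ≤ P⁻¹ := hs
    _ ≤ (((2:ℝ) ^ ((n:ℝ) * binEnt q))⁻¹)⁻¹ :=
        inv_anti₀ (by positivity) h2
    _ = (2:ℝ) ^ ((n:ℝ) * binEnt q) := inv_inv _

lemma gv_binEnt_continuousAt (p : ℝ) (hp0 : 0 < p) (hp1 : p < 1) :
    ContinuousAt binEnt p := by
  unfold binEnt
  apply ContinuousAt.sub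
  · exact (continuousAt_id.mul (Real.continuousAt_logb hp0.ne')).neg
  · exact (continuousAt_const.sub continuousAt_id).mul
      (((Real.continuousAt_logb (by intro h; nlinarith [h] : (1:ℝ) - p ≠ 0)).comp
        (continuousAt_const.sub continuousAt_id)))

theorem gv_code_in_dictionary
    (p : ℝ) (hp0 : 0 < p) (hp : p < 1 / 2)
    (α : ℝ) (hα0 : 0 < α) (hα1 : α ≤ 1) :
    ∀ δ > (0 : ℝ), ∃ ε₀ > (0 : ℝ), ∀ ε : ℝ, 0 < ε → ε < ε₀ →
      ∀ᶠ n in Filter.atTop,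
        ∀ D : Finset (Fin n → Bool), (2 : ℝ) ^ (α * (n : ℝ)) ≤ (D.card : ℝ) →
          ∃ C : Finset (Fin n → Bool), C ⊆ D ∧
            (∀ x ∈ C, ∀ y ∈ C, x ≠ y →
              (n : ℝ) * p * (1 + 2 * ε) < (hammingDist x y : ℝ)) ∧
            (2 : ℝ) ^ ((n : ℝ) * (α - binEnt p - δ)) ≤ (C.card : ℝ) := by
  intro δ hδ
  have hc : ContinuousAt binEnt p := gv_binEnt_continuousAt p hp0 (by linarith)
  obtain ⟨η, hη0, hη⟩ := Metric.continuousAt_iff.1 hc (δ/2) (by linarith)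
  refine ⟨min (η/(2*p)) ((1/2 - p)/(2*p)),
    lt_min (by positivity) (div_pos (by linarith) (by positivity)), ?_⟩
  intro ε hε0 hεlt
  apply Filter.Eventually.of_forall
  intro n D hD
  classical
  set q : ℝ := p * (1 + 2*ε) with hqdef
  have hq0 : 0 < q := by positivity
  have hqp : p < q := by nlinarith
  have hqdist : |q - p| < η := by
    have h1 : ε < η/(2*p) := lt_of_lt_of_le hεlt (min_le_left _ _)
    rw [abs_of_pos (by linarith)]
    have : q - p = 2*p*ε := by rw [hqdef]; ring
    rw [this]
    calc 2*p*ε < 2*p*(η/(2*p)) := by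
          apply mul_lt_mul_of_pos_left h1 (by positivity)
      _ = η := by field_simp
  have hqhalf : q < 1/2 := by
    have h1 : ε < (1/2 - p)/(2*p) := lt_of_lt_of_le hεlt (min_le_right _ _)
    have he : q - p = 2*p*ε := by rw [hqdef]; ring
    rw [lt_div_iff₀ (by positivity : (0:ℝ) < 2*p)] at h1
    nlinarith
  have hEnt : binEnt q < binEnt p + δ/2 := by
    have := hη (by simpa [Real.dist_eq] using hqdist)
    rw [Real.dist_eq] at this
    have := abs_lt.1 this
    linarith [this.1, this.2]
  -- set up the greedy code
  set m : ℕ := ⌊(n:ℝ) * q⌋₊ with hm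
  have hnq0 : 0 ≤ (n:ℝ) * q := by positivity
  have hmle : (m:ℝ) ≤ (n:ℝ) * q := Nat.floor_le hnq0
  have hmlt : (n:ℝ) * q < m + 1 := Nat.lt_floor_add_one _
  have hmn : m ≤ n := by
    have : (m:ℝ) ≤ (n:ℝ) := by
      calc (m:ℝ) ≤ (n:ℝ)*q := hmle
        _ ≤ (n:ℝ)*1 := by
            apply mul_le_mul_of_nonneg_left (by linarith) (Nat.cast_nonneg _)
        _ = (n:ℝ) := mul_one _
    exact_mod_cast this
  set B : ℕ := ∑ i ∈ Finset.range (m+1), n.choose i with hB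
  obtain ⟨C, hCsub, hCdist, hCcard⟩ :=
    gv_greedy n m B (fun x => gv_ball_card_le n m x) D
  refine ⟨C, hCsub, ?_, ?_⟩
  · intro x hx y hy hxy
    have h1 : m < hammingDist x y := hCdist x hx y hy hxy
    have h2 : (m:ℝ) + 1 ≤ (hammingDist x y : ℝ) := by exact_mod_cast h1
    calc (n:ℝ) * p * (1 + 2*ε) = (n:ℝ) * q := by rw [hqdef]; ring
      _ < (m:ℝ) + 1 := hmlt
      _ ≤ _ := h2
  · -- cardinality bound
    have hBle : (B:ℝ) ≤ (2:ℝ) ^ ((n:ℝ) * binEnt q) :=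
      gv_sum_le n m q hq0 (le_of_lt hqhalf) hmle hmn
    have hBpos : (0:ℝ) < (2:ℝ) ^ ((n:ℝ) * binEnt q) := by positivity
    have hchain : (2:ℝ) ^ (α * (n:ℝ)) ≤ (C.card : ℝ) * (2:ℝ) ^ ((n:ℝ) * binEnt q) := by
      calc (2:ℝ) ^ (α * (n:ℝ)) ≤ (D.card : ℝ) := hD
        _ ≤ (C.card : ℝ) * (B:ℝ) := by exact_mod_cast hCcard
        _ ≤ (C.card : ℝ) * (2:ℝ) ^ ((n:ℝ) * binEnt q) :=
            mul_le_mul_of_nonneg_left hBle (Nat.cast_nonneg _)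
    have hlow : (2:ℝ) ^ (α * (n:ℝ) - (n:ℝ) * binEnt q) ≤ (C.card : ℝ) := by
      rw [Real.rpow_sub two_pos, div_le_iff₀ hBpos]
      exact hchain
    refine le_trans ?_ hlow
    apply Real.rpow_le_rpow_of_exponent_le (by norm_num)
    have hn0 : (0:ℝ) ≤ (n:ℝ) := Nat.cast_nonneg _
    nlinarith [hEnt, hδ, hn0]
end

section
/- Let X and Y be finite alphabets with N := #X ≥ 2, let p_{Y|X}(y|x) be a channel transition probability, let p_X be a probability distribution on X with H(X) > 0, and define p_{XY}(x,y) = p_{Y|X}(y|x)p_X(x), with all entropies taken with logarithms to base N. Let 0 < α ≤ H(X). Then for every ε > 0 and all sufficiently large n there exists a deterministic set B_n ⊆ X^n with #B_n ≥ N^{n(H(X)−2ε)} satisfying: for every subset D_n ⊆ B_n of cardinality at least N^{n(α−2ε)} and every rate R with 0 < R < α − H(Y|X) − H(X|Y) − 7ε, there exist a code C_n ⊆ D_n with #C_n ≥ N^{nR} and a decoder g_n : Y^n → C_n such that max_{x ∈ C_n} P(g_n(Γ_x) ≠ x) ≤ ε. -/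
open scoped Classical BigOperators
open Finset

lemma sum_pi_prod {Ω : Type} [Fintype Ω] {n : ℕ} (F : Fin n → Ω → ℝ) :
    ∑ ω : Fin n → Ω, ∏ i, F i (ω i) = ∏ i, ∑ z, F i z :=
  (Fintype.prod_sum F).symm

lemma marg_fun {Ω : Type} [Fintype Ω] {n : ℕ} (p : Ω → ℝ) (q : Fin n → Ω → ℝ) :
    ∑ ω : Fin n → Ω, (∏ k, p (ω k)) * (∏ k, q k (ω k)) = ∏ k, ∑ z, p z * q k z := by
  have : ∀ ω : Fin n → Ω, (∏ k, p (ω k)) * (∏ k, q k (ω k))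
      = ∏ k, (fun k z => p z * q k z) k (ω k) := by
    intro ω; rw [← Finset.prod_mul_distrib]
  simp_rw [this]
  exact sum_pi_prod (fun k z => p z * q k z)

lemma marg_one {Ω : Type} [Fintype Ω] {n : ℕ} (p : Ω → ℝ) (h1 : ∑ z, p z = 1)
    (i : Fin n) (g : Ω → ℝ) :
    ∑ ω : Fin n → Ω, (∏ k, p (ω k)) * g (ω i) = ∑ z, p z * g z := by
  have h := marg_fun p (fun k z => if k = i then g z else 1)
  have e1 : ∀ ω : Fin n → Ω, (∏ k, (if k = i then g (ω k) else 1)) = g (ω i) := by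
    intro ω
    rw [Finset.prod_ite_eq' Finset.univ i (fun k => g (ω k))]
    simp
  have e2 : (∏ k, ∑ z, p z * (if k = i then g z else 1)) = ∑ z, p z * g z := by
    have : ∀ k : Fin n, (∑ z, p z * (if k = i then g z else 1))
        = if k = i then ∑ z, p z * g z else 1 := by
      intro k
      by_cases h : k = i <;> simp [h, h1]
    simp_rw [this]
    rw [Finset.prod_ite_eq' Finset.univ i (fun _ => ∑ z, p z * g z)]
    simp
  simp_rw [e1] at h
  rw [h, e2]

lemma marg_two {Ω : Type} [Fintype Ω] {n : ℕ} (p : Ω → ℝ) (h1 : ∑ z, p z = 1)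
    {i j : Fin n} (hij : i ≠ j) (g h : Ω → ℝ) :
    ∑ ω : Fin n → Ω, (∏ k, p (ω k)) * (g (ω i) * h (ω j))
      = (∑ z, p z * g z) * (∑ z, p z * h z) := by
  have hm := marg_fun p (fun k z => if k = i then g z else if k = j then h z else 1)
  have key : ∀ (F : Fin n → ℝ), (∏ k, (if k = i then F k else if k = j then F k else 1)) =
      F i * F j → True := fun _ _ => trivial
  -- compute product with two special coordinates
  have prod_two : ∀ (G : Fin n → ℝ) (A B : ℝ), G i = A → G j = B →
      (∀ k, k ≠ i → k ≠ j → G k = 1) → (∏ k, G k) = A * B := by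
    intro G A B hA hB hrest
    have hjmem : j ∈ (Finset.univ : Finset (Fin n)).erase i := by
      simp [Ne.symm hij]
    rw [← Finset.mul_prod_erase Finset.univ G (Finset.mem_univ i),
        ← Finset.mul_prod_erase _ G hjmem]
    have : ∏ k ∈ (Finset.univ.erase i).erase j, G k = 1 := by
      apply Finset.prod_eq_one
      intro k hk
      simp only [Finset.mem_erase] at hk
      exact hrest k hk.2.1 hk.1
    rw [this, hA, hB, mul_one]
  have e1 : ∀ ω : Fin n → Ω,
      (∏ k, (if k = i then g (ω k) else if k = j then h (ω k) else 1)) = g (ω i) * h (ω j) := by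
    intro ω
    exact prod_two _ _ _ (by simp) (by simp [Ne.symm hij, hij]) (fun k hk1 hk2 => by simp [hk1, hk2])
  have e2 : (∏ k, ∑ z, p z * (if k = i then g z else if k = j then h z else 1))
      = (∑ z, p z * g z) * (∑ z, p z * h z) := by
    have : ∀ k : Fin n, (∑ z, p z * (if k = i then g z else if k = j then h z else 1))
        = (if k = i then ∑ z, p z * g z else if k = j then ∑ z, p z * h z else 1) := by
      intro k
      by_cases h1' : k = i
      · simp [h1']
      · by_cases h2 : k = j <;> simp [h1', h2, h1]
    simp_rw [this]
    exact prod_two _ _ _ (by simp) (by simp [Ne.symm hij, hij]) (fun k hk1 hk2 => by simp [hk1, hk2])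
  simp_rw [e1] at hm
  rw [hm, e2]

lemma chebyshev {Ω : Type} [Fintype Ω] (p : Ω → ℝ) (hp : ∀ z, 0 ≤ p z) (h1 : ∑ z, p z = 1)
    (f : Ω → ℝ) {n : ℕ} (hn : 0 < n) {δ : ℝ} (hδ : 0 < δ) :
    ∑ ω ∈ Finset.univ.filter (fun ω : Fin n → Ω =>
        (n : ℝ) * δ ≤ |(∑ i, f (ω i)) - (n : ℝ) * (∑ z, p z * f z)|),
      ∏ i, p (ω i) ≤ (∑ z, p z * (f z - ∑ w, p w * f w)^2) / ((n : ℝ) * δ^2) := by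
  set μ := ∑ z, p z * f z with hμ
  set g : Ω → ℝ := fun z => f z - μ with hg
  set V := ∑ z, p z * (g z)^2 with hV
  have hgmean : ∑ z, p z * g z = 0 := by
    simp only [hg, mul_sub, Finset.sum_sub_distrib, ← Finset.sum_mul, h1, one_mul, ← hμ,
      sub_self]
  have hVnn : 0 ≤ V := Finset.sum_nonneg fun z _ => mul_nonneg (hp z) (sq_nonneg _)
  have key : ∑ ω : Fin n → Ω, (∏ i, p (ω i)) * (∑ i, g (ω i))^2 = (n : ℝ) * V := by
    have expand : ∀ ω : Fin n → Ω, (∑ i, g (ω i))^2 = ∑ i, ∑ j, g (ω i) * g (ω j) := by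
      intro ω; rw [sq, Finset.sum_mul_sum]
    simp_rw [expand, Finset.mul_sum]
    rw [Finset.sum_comm]
    have inner : ∀ i : Fin n, (∑ ω : Fin n → Ω, ∑ j, (∏ k, p (ω k)) * (g (ω i) * g (ω j)))
        = V := by
      intro i
      rw [Finset.sum_comm]
      have term : ∀ j : Fin n, (∑ ω : Fin n → Ω, (∏ k, p (ω k)) * (g (ω i) * g (ω j)))
          = if j = i then V else 0 := by
        intro j
        by_cases hj : j = i
        · subst hj
          simp only [if_pos rfl]
          have e : ∀ ω : Fin n → Ω, (∏ k, p (ω k)) * (g (ω j) * g (ω j))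
              = (∏ k, p (ω k)) * (fun z => (g z)^2) (ω j) := by
            intro ω; simp [sq]
          simp_rw [e]
          exact marg_one p h1 j (fun z => (g z)^2)
        · rw [if_neg hj, marg_two p h1 (Ne.symm hj) g g, hgmean, mul_zero]
      simp_rw [term]
      simp
    simp_rw [inner]
    simp [mul_comm]
  -- rewrite deviation in terms of g
  have hdev : ∀ ω : Fin n → Ω, (∑ i, f (ω i)) - (n : ℝ) * μ = ∑ i, g (ω i) := by
    intro ω
    simp only [hg, Finset.sum_sub_distrib, Finset.sum_const, Finset.card_univ,
      Fintype.card_fin, nsmul_eq_mul]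
  set Bad := Finset.univ.filter (fun ω : Fin n → Ω =>
      (n : ℝ) * δ ≤ |(∑ i, f (ω i)) - (n : ℝ) * μ|) with hBad
  have step1 : ((n : ℝ) * δ)^2 * ∑ ω ∈ Bad, ∏ i, p (ω i)
      ≤ ∑ ω : Fin n → Ω, (∏ i, p (ω i)) * (∑ i, g (ω i))^2 := by
    rw [Finset.mul_sum]
    calc ∑ ω ∈ Bad, ((n : ℝ) * δ)^2 * ∏ i, p (ω i)
        ≤ ∑ ω ∈ Bad, (∏ i, p (ω i)) * (∑ i, g (ω i))^2 := by
          apply Finset.sum_le_sum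
          intro ω hω
          rw [hBad, Finset.mem_filter] at hω
          have h2 : ((n : ℝ) * δ)^2 ≤ (∑ i, g (ω i))^2 := by
            rw [← hdev ω]
            calc ((n : ℝ) * δ)^2 ≤ |(∑ i, f (ω i)) - (n : ℝ) * μ|^2 := by
                  apply pow_le_pow_left₀ (by positivity) hω.2
              _ = ((∑ i, f (ω i)) - (n : ℝ) * μ)^2 := sq_abs _
          rw [mul_comm]
          exact mul_le_mul_of_nonneg_left h2 (Finset.prod_nonneg fun i _ => hp _)
      _ ≤ ∑ ω : Fin n → Ω, (∏ i, p (ω i)) * (∑ i, g (ω i))^2 := by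
          apply Finset.sum_le_sum_of_subset_of_nonneg (Finset.filter_subset _ _)
          intro ω _ _
          exact mul_nonneg (Finset.prod_nonneg fun i _ => hp _) (sq_nonneg _)
  rw [key] at step1
  have hn' : (0 : ℝ) < n := by exact_mod_cast hn
  have hdenpos : (0 : ℝ) < (n : ℝ) * δ^2 := by positivity
  rw [le_div_iff₀ hdenpos]
  have hexp : ((n : ℝ) * δ)^2 = (n : ℝ) * ((n : ℝ) * δ^2) := by ring
  rw [hexp] at step1
  have := le_of_mul_le_mul_left (by linarith [step1] : (n : ℝ) * ((∑ ω ∈ Bad, ∏ i, p (ω i)) * ((n : ℝ) * δ^2)) ≤ (n : ℝ) * V) hn'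
  exact this

lemma sum_le_of_zero_or_mem {A : Type} (s t : Finset A) (P : A → ℝ) (hP : ∀ a, 0 ≤ P a)
    (h : ∀ a ∈ s, P a = 0 ∨ a ∈ t) : ∑ a ∈ s, P a ≤ ∑ a ∈ t, P a := by
  classical
  have hsplit : ∑ a ∈ s ∩ t, P a + ∑ a ∈ s \ t, P a = ∑ a ∈ s, P a :=
    Finset.sum_inter_add_sum_sdiff s t P
  have hz : ∑ a ∈ s \ t, P a = 0 := by
    apply Finset.sum_eq_zero
    intro a ha
    rw [Finset.mem_sdiff] at ha
    rcases h a ha.1 with h0 | hmem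
    · exact h0
    · exact absurd hmem ha.2
  rw [← hsplit, hz, add_zero]
  exact Finset.sum_le_sum_of_subset_of_nonneg (Finset.inter_subset_right) (fun a _ _ => hP a)

lemma sum_union_le_real {A : Type} (s t : Finset A) (P : A → ℝ) (hP : ∀ a, 0 ≤ P a) :
    ∑ a ∈ s ∪ t, P a ≤ ∑ a ∈ s, P a + ∑ a ∈ t, P a := by
  classical
  rw [← Finset.union_sdiff_self_eq_union, Finset.sum_union Finset.disjoint_sdiff]
  exact add_le_add (le_refl _)
    (Finset.sum_le_sum_of_subset_of_nonneg (Finset.sdiff_subset) (fun a _ _ => hP a))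

lemma sum_le_sum_two {A : Type} (s t u : Finset A) (P : A → ℝ) (hP : ∀ a, 0 ≤ P a)
    (h : ∀ a ∈ s, P a = 0 ∨ a ∈ t ∨ a ∈ u) :
    ∑ a ∈ s, P a ≤ ∑ a ∈ t, P a + ∑ a ∈ u, P a := by
  classical
  have h1 : ∑ a ∈ s, P a ≤ ∑ a ∈ t ∪ u, P a := by
    apply sum_le_of_zero_or_mem s (t ∪ u) P hP
    intro a ha
    rcases h a ha with h0 | h1 | h2
    · exact Or.inl h0
    · exact Or.inr (Finset.mem_union_left _ h1)
    · exact Or.inr (Finset.mem_union_right _ h2)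
  exact le_trans h1 (sum_union_le_real t u P hP)

lemma ev_div (a : ℝ) {c : ℝ} (hc : 0 < c) : ∀ᶠ n : ℕ in Filter.atTop, a / (n:ℝ) ≤ c := by
  have h := tendsto_const_div_atTop_nhds_zero_nat a
  exact (h.eventually_lt_const hc).mono (fun n h => le_of_lt h)


set_option maxHeartbeats 4000000 in
theorem achievability_general_channels_with_dictionaries
    {X Y : Type} [Fintype X] [Fintype Y] [Nonempty X] [Nonempty Y]
    (N : ℕ) (hNcard : N = Fintype.card X) (hN2 : 2 ≤ N)
    (pYX : X → Y → ℝ)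
    (hpYXnn : ∀ x y, 0 ≤ pYX x y) (hpYXsum : ∀ x, ∑ y, pYX x y = 1)
    (pX : X → ℝ) (hpXnn : ∀ x, 0 ≤ pX x) (hpXsum : ∑ x, pX x = 1)
    (pXY : X → Y → ℝ) (hpXY : ∀ x y, pXY x y = pYX x y * pX x)
    (pY : Y → ℝ) (hpY : ∀ y, pY y = ∑ x, pXY x y)
    (HX HYX HXgY : ℝ)
    (hHX : HX = -∑ x, pX x * Real.logb N (pX x))
    (hHYX : HYX = -∑ x, ∑ y, pXY x y * Real.logb N (pYX x y))
    (hHXgY : HXgY = -∑ x, ∑ y, pXY x y * Real.logb N (pXY x y / pY y))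
    (hHXpos : 0 < HX)
    (α : ℝ) (hα0 : 0 < α) (hα : α ≤ HX)
    (ε : ℝ) (hε : 0 < ε) :
    ∀ᶠ n in Filter.atTop,
      ∃ B : Finset (Fin n → X),
        (N : ℝ) ^ ((n : ℝ) * (HX - 2 * ε)) ≤ (B.card : ℝ) ∧
        ∀ D : Finset (Fin n → X), D ⊆ B →
          (N : ℝ) ^ ((n : ℝ) * (α - 2 * ε)) ≤ (D.card : ℝ) →
          ∀ R : ℝ, 0 < R → R < α - HYX - HXgY - 7 * ε →
            ∃ C : Finset (Fin n → X), C ⊆ D ∧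
              (N : ℝ) ^ ((n : ℝ) * R) ≤ (C.card : ℝ) ∧
              ∃ g : (Fin n → Y) → (Fin n → X), (∀ y, g y ∈ C) ∧
                ∀ x ∈ C,
                  (∑ y ∈ Finset.univ.filter fun y : Fin n → Y => g y ≠ x,
                    ∏ i, pYX (x i) (y i)) ≤ ε := by
  have hN1 : (1:ℝ) < N := by exact_mod_cast Nat.lt_of_lt_of_le one_lt_two hN2
  have hN0 : (0:ℝ) < N := lt_trans one_pos hN1
  have hNne1 : (N:ℝ) ≠ 1 := ne_of_gt hN1
  have hpYXle1 : ∀ x y, pYX x y ≤ 1 := by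
    intro x y
    rw [← hpYXsum x]
    exact Finset.single_le_sum (fun y' _ => hpYXnn x y') (Finset.mem_univ y)
  have hpXYnn : ∀ x y, 0 ≤ pXY x y := fun x y => (hpXY x y) ▸ mul_nonneg (hpYXnn x y) (hpXnn x)
  have hpYnn : ∀ y, 0 ≤ pY y := fun y =>
    (hpY y) ▸ Finset.sum_nonneg (fun x _ => hpXYnn x y)
  have hpXYle_pY : ∀ x y, pXY x y ≤ pY y := by
    intro x y
    rw [hpY y]
    exact Finset.single_le_sum (fun x' _ => hpXYnn x' y) (Finset.mem_univ x)
  have hmargX : ∀ x, ∑ y, pXY x y = pX x := by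
    intro x
    simp_rw [hpXY, ← Finset.sum_mul, hpYXsum x, one_mul]
  have hpXYsumJ : ∑ z : X × Y, pXY z.1 z.2 = 1 := by
    rw [Fintype.sum_prod_type]
    simp_rw [hmargX]
    exact hpXsum
  -- entropy of Y and the identity
  set HY : ℝ := ∑ y, pY y * (-Real.logb N (pY y)) with hHYdef
  have hHYid : HX + HYX - HXgY = HY := by
    have term1 : ∀ x y, pXY x y * Real.logb N (pXY x y / pY y)
        = pXY x y * Real.logb N (pXY x y) - pXY x y * Real.logb N (pY y) := by
      intro x y
      by_cases h0 : pXY x y = 0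
      · simp [h0]
      · have hpYne : pY y ≠ 0 := by
          intro hc
          exact h0 (le_antisymm (hc ▸ hpXYle_pY x y) (hpXYnn x y))
        rw [Real.logb_div h0 hpYne, mul_sub]
    have term2 : ∀ x y, pXY x y * Real.logb N (pXY x y)
        = pXY x y * Real.logb N (pYX x y) + pXY x y * Real.logb N (pX x) := by
      intro x y
      by_cases h0 : pXY x y = 0
      · simp [h0]
      · have h1 : pYX x y ≠ 0 := by
          intro hc; exact h0 (by rw [hpXY, hc, zero_mul])
        have h2 : pX x ≠ 0 := by
          intro hc; exact h0 (by rw [hpXY, hc, mul_zero])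
        rw [hpXY, Real.logb_mul h1 h2, mul_add]
    have e1 : ∑ x, ∑ y, pXY x y * Real.logb N (pY y) = -HY := by
      rw [Finset.sum_comm, hHYdef]
      rw [← Finset.sum_neg_distrib]
      apply Finset.sum_congr rfl
      intro y _
      rw [← Finset.sum_mul, ← hpY y]
      ring
    have e2 : ∑ x, ∑ y, pXY x y * Real.logb N (pX x) = -HX := by
      rw [hHX, neg_neg]
      apply Finset.sum_congr rfl
      intro x _
      rw [← Finset.sum_mul, hmargX x]
    have e3 : ∑ x, ∑ y, pXY x y * Real.logb N (pYX x y) = -HYX := by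
      rw [hHYX, neg_neg]
    rw [hHXgY]
    simp_rw [term1, Finset.sum_sub_distrib]
    simp_rw [term2, Finset.sum_add_distrib]
    rw [e1, e2, e3]
    ring
  have hHYXnn : 0 ≤ HYX := by
    rw [hHYX, ← Finset.sum_neg_distrib]
    apply Finset.sum_nonneg; intro x _
    rw [← Finset.sum_neg_distrib]
    apply Finset.sum_nonneg; intro y _
    by_cases h0 : pXY x y = 0
    · simp [h0]
    · have h1 : pYX x y ≠ 0 := fun hc => h0 (by rw [hpXY, hc, zero_mul])
      have h2 : 0 < pYX x y := lt_of_le_of_ne (hpYXnn x y) (Ne.symm h1)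
      rw [← mul_neg]
      exact mul_nonneg (hpXYnn x y)
        (neg_nonneg.2 (Real.logb_nonpos hN1 (le_of_lt h2) (hpYXle1 x y)))
  have hHXgYnn : 0 ≤ HXgY := by
    rw [hHXgY, ← Finset.sum_neg_distrib]
    apply Finset.sum_nonneg; intro x _
    rw [← Finset.sum_neg_distrib]
    apply Finset.sum_nonneg; intro y _
    by_cases h0 : pXY x y = 0
    · simp [h0]
    · have hpYpos : 0 < pY y := by
        rcases lt_or_eq_of_le (hpYnn y) with h | h
        · exact h
        · exact absurd (le_antisymm ((h ▸ hpXYle_pY x y : pXY x y ≤ 0)) (hpXYnn x y)) h0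
      have hle1 : pXY x y / pY y ≤ 1 := (div_le_one hpYpos).2 (hpXYle_pY x y)
      have hge0 : 0 ≤ pXY x y / pY y := div_nonneg (hpXYnn x y) (le_of_lt hpYpos)
      rw [← mul_neg]
      exact mul_nonneg (hpXYnn x y) (neg_nonneg.2 (Real.logb_nonpos hN1 hge0 hle1))
  -- eventually conditions on n
  have ev1 : ∀ᶠ n : ℕ in Filter.atTop, (4/ε + 2 : ℝ) ≤ (N:ℝ)^((n:ℝ)*ε) := by
    have h1 : (1:ℝ) < (N:ℝ)^ε := by
      rw [show (1:ℝ) = (N:ℝ)^(0:ℝ) by simp]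
      exact (Real.rpow_lt_rpow_left_iff hN1).2 hε
    have h2 : Filter.Tendsto (fun n : ℕ => ((N:ℝ)^ε)^n) Filter.atTop Filter.atTop :=
      tendsto_pow_atTop_atTop_of_one_lt h1
    filter_upwards [h2.eventually_ge_atTop (4/ε + 2)] with n hn
    have e : (N:ℝ)^((n:ℝ)*ε) = ((N:ℝ)^ε)^(n:ℕ) := by
      rw [mul_comm, Real.rpow_mul (le_of_lt hN0), Real.rpow_natCast]
    rw [e]; exact hn
  have ev2 : ∀ᶠ n : ℕ in Filter.atTop,
      (∑ z, pX z * ((-Real.logb N (pX z)) - HX)^2) / ((n:ℝ)*ε^2) ≤ 1/4 := by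
    have h := ev_div ((∑ z, pX z * ((-Real.logb N (pX z)) - HX)^2) / ε^2)
      (show (0:ℝ) < 1/4 by norm_num)
    filter_upwards [h] with n hn
    rw [mul_comm, ← div_div]
    exact hn
  have ev3 : ∀ᶠ n : ℕ in Filter.atTop,
      ((∑ z : X × Y, pXY z.1 z.2 * ((-Real.logb N (pYX z.1 z.2)) - HYX)^2)
        + (∑ z : X × Y, pXY z.1 z.2 * ((-Real.logb N (pY z.2)) - HY)^2))
        / ((n:ℝ)*ε^2) ≤ ε/8 := by
    have h := ev_div (((∑ z : X × Y, pXY z.1 z.2 * ((-Real.logb N (pYX z.1 z.2)) - HYX)^2)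
        + (∑ z : X × Y, pXY z.1 z.2 * ((-Real.logb N (pY z.2)) - HY)^2)) / ε^2)
      (show (0:ℝ) < ε/8 by positivity)
    filter_upwards [h] with n hn
    rw [mul_comm, ← div_div]
    exact hn
  filter_upwards [Filter.eventually_ge_atTop 1, ev1, ev2, ev3] with n hn1 hc1 hA hB
  have hn0 : 0 < n := hn1
  have hn0' : (0:ℝ) < n := by exact_mod_cast hn0
  have rpos : ∀ t : ℝ, (0:ℝ) < (N:ℝ)^t := fun t => Real.rpow_pos_of_pos hN0 t
  have rmono : ∀ {a b : ℝ}, a ≤ b → (N:ℝ)^a ≤ (N:ℝ)^b :=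
    fun {a b} h => (Real.rpow_le_rpow_left_iff hN1).2 h
  have rsmono : ∀ {a b : ℝ}, a < b → (N:ℝ)^a < (N:ℝ)^b :=
    fun {a b} h => (Real.rpow_lt_rpow_left_iff hN1).2 h
  have radd : ∀ a b : ℝ, (N:ℝ)^(a+b) = (N:ℝ)^a * (N:ℝ)^b := fun a b => Real.rpow_add hN0 a b
  -- product measures
  set PX : (Fin n → X) → ℝ := fun x => ∏ i, pX (x i) with hPX
  set PW : (Fin n → X) → (Fin n → Y) → ℝ := fun x y => ∏ i, pYX (x i) (y i) with hPW
  have hPXnn : ∀ x, 0 ≤ PX x := fun x => Finset.prod_nonneg (fun i _ => hpXnn _)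
  have hPWnn : ∀ x y, 0 ≤ PW x y := fun x y => Finset.prod_nonneg (fun i _ => hpYXnn _ _)
  have hPWle1 : ∀ x y, PW x y ≤ 1 := by
    intro x y
    apply Finset.prod_le_one (fun i _ => hpYXnn _ _) (fun i _ => hpYXle1 _ _)
  have hPXsum : ∑ x, PX x = 1 := by
    rw [hPX, sum_pi_prod (fun i z => pX z)]
    simp [hpXsum]
  have hPWsum : ∀ x, ∑ y, PW x y = 1 := by
    intro x
    rw [hPW]
    rw [sum_pi_prod (fun i z => pYX (x i) z)]
    simp [hpYXsum]
  -- decoding candidate sets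
  set S : (Fin n → X) → Finset (Fin n → Y) := fun x => Finset.univ.filter
    (fun y => (N:ℝ)^(-((n:ℝ)*(HYX+ε))) ≤ PW x y ∧
      (∏ i, pY (y i)) ≤ (N:ℝ)^(-((n:ℝ)*(HY-ε)))) with hS
  set e0 : (Fin n → X) → ℝ := fun x => ∑ y ∈ Finset.univ.filter
    (fun y => ¬((N:ℝ)^(-((n:ℝ)*(HYX+ε))) ≤ PW x y ∧
      (∏ i, pY (y i)) ≤ (N:ℝ)^(-((n:ℝ)*(HY-ε))))), PW x y with he0
  have he0nn : ∀ x, 0 ≤ e0 x := fun x => Finset.sum_nonneg (fun y _ => hPWnn x y)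
  have he0sum : ∀ x, ∑ y ∈ S x, PW x y = 1 - e0 x := by
    intro x
    have h := Finset.sum_filter_add_sum_filter_not Finset.univ
      (fun y => (N:ℝ)^(-((n:ℝ)*(HYX+ε))) ≤ PW x y ∧
        (∏ i, pY (y i)) ≤ (N:ℝ)^(-((n:ℝ)*(HY-ε)))) (PW x)
    rw [hPWsum x] at h
    simp only [hS, he0]
    linarith [h]
  -- typicality on X
  set fX : X → ℝ := fun z => -Real.logb N (pX z) with hfX
  have hmuX : ∑ z, pX z * fX z = HX := by
    rw [hHX, ← Finset.sum_neg_distrib]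
    apply Finset.sum_congr rfl
    intro z _; rw [hfX]; ring
  set TypP : (Fin n → X) → Prop := fun x =>
    (N:ℝ)^(-((n:ℝ)*(HX+ε))) ≤ PX x ∧ PX x ≤ (N:ℝ)^(-((n:ℝ)*(HX-ε))) with hTypP
  have measTyp : ∑ x ∈ Finset.univ.filter (fun x => ¬ TypP x), PX x ≤ 1/4 := by
    have cbX := chebyshev pX hpXnn hpXsum fX hn0 hε
    rw [hmuX] at cbX
    refine le_trans (le_trans ?_ cbX) hA
    apply sum_le_of_zero_or_mem
    · exact hPXnn
    · intro x hx
      rw [Finset.mem_filter] at hx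
      by_cases hz : PX x = 0
      · exact Or.inl hz
      right
      rw [Finset.mem_filter]
      refine ⟨Finset.mem_univ x, ?_⟩
      by_contra hdev
      push_neg at hdev
      apply hx.2
      have hfac : ∀ i, pX (x i) ≠ 0 := by
        rw [hPX] at hz
        intro i hi
        exact hz (Finset.prod_eq_zero (Finset.mem_univ i) hi)
      have hPXpos : 0 < PX x := lt_of_le_of_ne (hPXnn x) (Ne.symm hz)
      have hlog : ∑ i, fX (x i) = -Real.logb N (PX x) := by
        rw [hPX, Real.logb_prod _ _ (fun i _ => hfac i), ← Finset.sum_neg_distrib]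
      rw [hlog] at hdev
      have habs := abs_lt.1 hdev
      have h1 : -((n:ℝ)*(HX+ε)) ≤ Real.logb N (PX x) := by
        have := habs.1
        nlinarith
      have h2 : Real.logb N (PX x) ≤ -((n:ℝ)*(HX-ε)) := by
        have := habs.2
        nlinarith
      have hrw : PX x = (N:ℝ) ^ (Real.logb N (PX x)) :=
        (Real.rpow_logb hN0 hNne1 hPXpos).symm
      constructor
      · rw [hrw]; exact rmono h1
      · rw [hrw]; exact rmono h2
  -- joint LLN part
  set pJ : X × Y → ℝ := fun z => pXY z.1 z.2 with hpJ
  have hpJnn : ∀ z, 0 ≤ pJ z := fun z => hpXYnn _ _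
  have hpJsum : ∑ z, pJ z = 1 := hpXYsumJ
  set fW : X × Y → ℝ := fun z => -Real.logb N (pYX z.1 z.2) with hfW
  set fV : X × Y → ℝ := fun z => -Real.logb N (pY z.2) with hfV
  have hmuW : ∑ z, pJ z * fW z = HYX := by
    rw [hHYX, Fintype.sum_prod_type, ← Finset.sum_neg_distrib]
    apply Finset.sum_congr rfl; intro x _
    rw [← Finset.sum_neg_distrib]
    apply Finset.sum_congr rfl; intro y _
    rw [hpJ, hfW]; ring
  have hmuV : ∑ z, pJ z * fV z = HY := by
    rw [hHYdef, Fintype.sum_prod_type, Finset.sum_comm]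
    apply Finset.sum_congr rfl; intro y _
    simp only [hpJ, hfV]
    rw [← Finset.sum_mul, ← hpY y]
  have pair_sum : ∀ H : (Fin n → X × Y) → ℝ,
      (∑ ω : Fin n → X × Y, H ω)
        = ∑ x : Fin n → X, ∑ y : Fin n → Y, H (fun i => (x i, y i)) := by
    intro H
    rw [← Equiv.sum_comp (Equiv.arrowProdEquivProdArrow (Fin n) (fun _ => X) (fun _ => Y)).symm H,
      Fintype.sum_prod_type]
    rfl
  have prodid : ∀ (x : Fin n → X) (y : Fin n → Y),
      (∏ i, pJ (x i, y i)) = PX x * PW x y := by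
    intro x y
    simp only [hpJ, hPX, hPW]
    rw [← Finset.prod_mul_distrib]
    apply Finset.prod_congr rfl
    intro i _
    simp only [hpXY]; ring
  have joint : ∑ x, PX x * e0 x ≤ ε/8 := by
    have cbW := chebyshev pJ hpJnn hpJsum fW hn0 hε
    rw [hmuW] at cbW
    have cbV := chebyshev pJ hpJnn hpJsum fV hn0 hε
    rw [hmuV] at cbV
    set BadW := Finset.univ.filter (fun ω : Fin n → X × Y =>
      (n:ℝ)*ε ≤ |(∑ i, fW (ω i)) - (n:ℝ)*HYX|) with hBadW
    set BadV := Finset.univ.filter (fun ω : Fin n → X × Y =>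
      (n:ℝ)*ε ≤ |(∑ i, fV (ω i)) - (n:ℝ)*HY|) with hBadV
    set E := Finset.univ.filter (fun ω : Fin n → X × Y =>
      ¬((N:ℝ)^(-((n:ℝ)*(HYX+ε))) ≤ ∏ i, pYX (ω i).1 (ω i).2 ∧
        (∏ i, pY (ω i).2) ≤ (N:ℝ)^(-((n:ℝ)*(HY-ε))))) with hE
    have key : ∑ x, PX x * e0 x = ∑ ω ∈ E, ∏ i, pJ (ω i) := by
      rw [hE, Finset.sum_filter, pair_sum]
      apply Finset.sum_congr rfl; intro x _
      simp only [he0, Finset.sum_filter, Finset.mul_sum]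
      apply Finset.sum_congr rfl; intro y _
      beta_reduce
      rw [prodid x y]
      by_cases hcond : (N:ℝ)^(-((n:ℝ)*(HYX+ε))) ≤ PW x y ∧
          (∏ i, pY (y i)) ≤ (N:ℝ)^(-((n:ℝ)*(HY-ε)))
      · rw [if_neg (not_not_intro hcond), mul_zero, if_neg]
        simp only [hPW] at hcond
        exact not_not_intro hcond
      · rw [if_pos hcond, if_pos]
        simp only [hPW] at hcond
        exact hcond
    rw [key]
    have hbound : ∑ ω ∈ E, ∏ i, pJ (ω i)
        ≤ (∑ ω ∈ BadW, ∏ i, pJ (ω i)) + ∑ ω ∈ BadV, ∏ i, pJ (ω i) := by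
      apply sum_le_sum_two
      · intro ω; exact Finset.prod_nonneg (fun i _ => hpJnn _)
      intro ω hω
      by_cases hz : (∏ i, pJ (ω i)) = 0
      · exact Or.inl hz
      right
      by_contra hbad
      push_neg at hbad
      have hnW : ¬ ((n:ℝ)*ε ≤ |(∑ i, fW (ω i)) - (n:ℝ)*HYX|) := fun h =>
        hbad.1 (by rw [hBadW]; exact Finset.mem_filter.2 ⟨Finset.mem_univ _, h⟩)
      have hnV : ¬ ((n:ℝ)*ε ≤ |(∑ i, fV (ω i)) - (n:ℝ)*HY|) := fun h =>
        hbad.2 (by rw [hBadV]; exact Finset.mem_filter.2 ⟨Finset.mem_univ _, h⟩)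
      have hWlt := abs_lt.1 (lt_of_not_ge hnW)
      have hVlt := abs_lt.1 (lt_of_not_ge hnV)
      have hcoord : ∀ i, pJ (ω i) ≠ 0 := fun i hi =>
        hz (Finset.prod_eq_zero (Finset.mem_univ i) hi)
      have hpXYpos : ∀ i, 0 < pXY (ω i).1 (ω i).2 := fun i =>
        lt_of_le_of_ne (hpXYnn _ _) (Ne.symm (hcoord i))
      have hpYXpos : ∀ i, 0 < pYX (ω i).1 (ω i).2 := by
        intro i
        rcases lt_or_eq_of_le (hpYXnn (ω i).1 (ω i).2) with h | h
        · exact h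
        · exact absurd (show pJ (ω i) = 0 by
            simp only [hpJ]; rw [hpXY, ← h, zero_mul]) (hcoord i)
      have hpYpos : ∀ i, 0 < pY (ω i).2 := fun i =>
        lt_of_lt_of_le (hpXYpos i) (hpXYle_pY _ _)
      have hPWpos : 0 < ∏ i, pYX (ω i).1 (ω i).2 :=
        Finset.prod_pos (fun i _ => hpYXpos i)
      have hPVpos : 0 < ∏ i, pY (ω i).2 :=
        Finset.prod_pos (fun i _ => hpYpos i)
      have hlogW : ∑ i, fW (ω i) = -Real.logb N (∏ i, pYX (ω i).1 (ω i).2) := by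
        rw [Real.logb_prod _ _ (fun i _ => ne_of_gt (hpYXpos i)), ← Finset.sum_neg_distrib]
      have hlogV : ∑ i, fV (ω i) = -Real.logb N (∏ i, pY (ω i).2) := by
        rw [Real.logb_prod _ _ (fun i _ => ne_of_gt (hpYpos i)), ← Finset.sum_neg_distrib]
      rw [hE, Finset.mem_filter] at hω
      apply hω.2
      constructor
      · have h1 : -((n:ℝ)*(HYX+ε)) ≤ Real.logb N (∏ i, pYX (ω i).1 (ω i).2) := by
          rw [hlogW] at hWlt
          nlinarith [hWlt.2]
        calc (N:ℝ)^(-((n:ℝ)*(HYX+ε))) ≤ (N:ℝ)^(Real.logb N (∏ i, pYX (ω i).1 (ω i).2)) :=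
              rmono h1
          _ = ∏ i, pYX (ω i).1 (ω i).2 := Real.rpow_logb hN0 hNne1 hPWpos
      · have h2 : Real.logb N (∏ i, pY (ω i).2) ≤ -((n:ℝ)*(HY-ε)) := by
          rw [hlogV] at hVlt
          nlinarith [hVlt.1]
        calc (∏ i, pY (ω i).2) = (N:ℝ)^(Real.logb N (∏ i, pY (ω i).2)) :=
              (Real.rpow_logb hN0 hNne1 hPVpos).symm
          _ ≤ (N:ℝ)^(-((n:ℝ)*(HY-ε))) := rmono h2
    rw [add_div] at hB
    have eW : (∑ z : X × Y, pJ z * (fW z - HYX)^2)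
        = ∑ z : X × Y, pXY z.1 z.2 * ((-Real.logb N (pYX z.1 z.2)) - HYX)^2 := rfl
    have eV : (∑ z : X × Y, pJ z * (fV z - HY)^2)
        = ∑ z : X × Y, pXY z.1 z.2 * ((-Real.logb N (pY z.2)) - HY)^2 := rfl
    rw [eW] at cbW
    rw [eV] at cbV
    exact le_trans hbound (le_trans (add_le_add cbW cbV) hB)
  -- the dictionary-universe set B
  set Bset := Finset.univ.filter (fun x => TypP x ∧ e0 x ≤ ε/2) with hBset
  have measB : 1/2 ≤ ∑ x ∈ Bset, PX x := by
    have split := Finset.sum_filter_add_sum_filter_not Finset.univ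
      (fun x => TypP x ∧ e0 x ≤ ε/2) PX
    rw [hPXsum] at split
    have hmark : ∑ x ∈ Finset.univ.filter (fun x => ε/2 < e0 x), PX x ≤ 1/4 := by
      have step : ∑ x ∈ Finset.univ.filter (fun x => ε/2 < e0 x), PX x
          ≤ ∑ x ∈ Finset.univ.filter (fun x => ε/2 < e0 x), (2/ε) * (PX x * e0 x) := by
        apply Finset.sum_le_sum
        intro x hx
        rw [Finset.mem_filter] at hx
        have h1 : PX x * (ε/2) ≤ PX x * e0 x :=
          mul_le_mul_of_nonneg_left (le_of_lt hx.2) (hPXnn x)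
        rw [← sub_nonneg]
        have : (2/ε) * (PX x * e0 x) - PX x = (2/ε) * (PX x * e0 x - PX x * (ε/2)) := by
          field_simp
        rw [this]
        apply mul_nonneg (by positivity)
        linarith
      have step2 : ∑ x ∈ Finset.univ.filter (fun x => ε/2 < e0 x), (2/ε) * (PX x * e0 x)
          ≤ ∑ x, (2/ε) * (PX x * e0 x) := by
        apply Finset.sum_le_sum_of_subset_of_nonneg (Finset.filter_subset _ _)
        intro x _ _
        exact mul_nonneg (by positivity) (mul_nonneg (hPXnn x) (he0nn x))
      have step3 : ∑ x, (2/ε) * (PX x * e0 x) = (2/ε) * ∑ x, PX x * e0 x := by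
        rw [Finset.mul_sum]
      have step4 : (2/ε) * ∑ x, PX x * e0 x ≤ (2/ε) * (ε/8) := by
        apply mul_le_mul_of_nonneg_left joint (by positivity)
      have step5 : (2/ε) * (ε/8) = 1/4 := by field_simp; ring
      linarith
    have hsub : ∑ x ∈ Finset.univ.filter (fun x => ¬(TypP x ∧ e0 x ≤ ε/2)), PX x
        ≤ (∑ x ∈ Finset.univ.filter (fun x => ¬ TypP x), PX x)
          + ∑ x ∈ Finset.univ.filter (fun x => ε/2 < e0 x), PX x := by
      apply sum_le_sum_two _ _ _ _ hPXnn
      intro x hx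
      rw [Finset.mem_filter] at hx
      right
      rcases not_and_or.1 hx.2 with h | h
      · left; exact Finset.mem_filter.2 ⟨Finset.mem_univ _, h⟩
      · right; exact Finset.mem_filter.2 ⟨Finset.mem_univ _, lt_of_not_ge h⟩
    have hBeq : ∑ x ∈ Bset, PX x
        = 1 - ∑ x ∈ Finset.univ.filter (fun x => ¬(TypP x ∧ e0 x ≤ ε/2)), PX x := by
      rw [hBset]; linarith [split]
    rw [hBeq]
    linarith [measTyp, hmark, hsub]
  have cardB : (N:ℝ)^((n:ℝ)*(HX - 2*ε)) ≤ (Bset.card : ℝ) := by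
    have upper : ∑ x ∈ Bset, PX x ≤ (Bset.card : ℝ) * (N:ℝ)^(-((n:ℝ)*(HX-ε))) := by
      rw [← nsmul_eq_mul]
      apply Finset.sum_le_card_nsmul
      intro x hx
      rw [hBset, Finset.mem_filter] at hx
      exact hx.2.1.2
    have h12 : (1:ℝ)/2 ≤ (Bset.card : ℝ) * (N:ℝ)^(-((n:ℝ)*(HX-ε))) := le_trans measB upper
    have hNε2 : (2:ℝ) ≤ (N:ℝ)^((n:ℝ)*ε) := by
      have : (0:ℝ) < 4/ε := by positivity
      linarith [hc1]
    have hsplit : (N:ℝ)^((n:ℝ)*(HX-ε)) = (N:ℝ)^((n:ℝ)*(HX-2*ε)) * (N:ℝ)^((n:ℝ)*ε) := by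
      rw [← radd]
      congr 1
      ring
    have hinv : (N:ℝ)^(-((n:ℝ)*(HX-ε))) = ((N:ℝ)^((n:ℝ)*(HX-ε)))⁻¹ :=
      Real.rpow_neg (le_of_lt hN0) _
    rw [hinv] at h12
    have hpos : (0:ℝ) < (N:ℝ)^((n:ℝ)*(HX-ε)) := rpos _
    have hcard : (1:ℝ)/2 * (N:ℝ)^((n:ℝ)*(HX-ε)) ≤ (Bset.card : ℝ) := by
      have h2 := mul_le_mul_of_nonneg_right h12 (le_of_lt hpos)
      rw [mul_assoc, inv_mul_cancel₀ (ne_of_gt hpos), mul_one] at h2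
      exact h2
    rw [hsplit] at hcard
    calc (N:ℝ)^((n:ℝ)*(HX-2*ε)) ≤ 1/2 * ((N:ℝ)^((n:ℝ)*(HX-2*ε)) * (N:ℝ)^((n:ℝ)*ε)) := by
          nlinarith [rpos ((n:ℝ)*(HX-2*ε)), hNε2]
      _ ≤ (Bset.card:ℝ) := hcard
  refine ⟨Bset, cardB, ?_⟩
  intro D hDB hDcard R hR0 hRlt
  have hDmem : ∀ x ∈ D, TypP x ∧ e0 x ≤ ε/2 := by
    intro x hx
    have h := hDB hx
    rw [hBset, Finset.mem_filter] at h
    exact h.2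
  by_cases hε1 : 1 ≤ ε
  · -- trivial case : error bound 1 ≤ ε
    set m := ⌈(N:ℝ)^((n:ℝ)*R)⌉₊ with hm
    have hmD : m ≤ D.card := by
      rw [hm, Nat.ceil_le]
      refine le_trans (rmono ?_) hDcard
      nlinarith
    obtain ⟨C, hCD, hCcard⟩ := Finset.exists_subset_card_eq hmD
    have hCne : C.Nonempty := by
      rw [← Finset.card_pos, hCcard, hm]
      exact Nat.ceil_pos.2 (rpos _)
    obtain ⟨c0, hc0⟩ := hCne
    refine ⟨C, hCD, ?_, fun _ => c0, fun _ => hc0, ?_⟩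
    · rw [hCcard, hm]
      exact Nat.le_ceil _
    · intro x hx
      calc ∑ y ∈ Finset.univ.filter (fun y : Fin n → Y => (fun _ => c0) y ≠ x), PW x y
          ≤ ∑ y, PW x y := Finset.sum_le_sum_of_subset_of_nonneg
            (Finset.filter_subset _ _) (fun y _ _ => hPWnn x y)
        _ = 1 := hPWsum x
        _ ≤ ε := hε1
  -- main case: ε < 1
  have hε1' : ε < 1 := lt_of_not_ge hε1
  -- size of decoding candidate sets
  have F1 : ∀ x, ((S x).card : ℝ) ≤ (N:ℝ)^((n:ℝ)*(HYX+ε)) := by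
    intro x
    have hlow : (S x).card • ((N:ℝ)^(-((n:ℝ)*(HYX+ε)))) ≤ ∑ y ∈ S x, PW x y := by
      apply Finset.card_nsmul_le_sum
      intro y hy
      rw [hS, Finset.mem_filter] at hy
      exact hy.2.1
    have hup : ∑ y ∈ S x, PW x y ≤ 1 := by
      rw [← hPWsum x]
      exact Finset.sum_le_sum_of_subset_of_nonneg (Finset.filter_subset _ _)
        (fun y _ _ => hPWnn x y)
    rw [nsmul_eq_mul] at hlow
    have h1 : ((S x).card : ℝ) * (N:ℝ)^(-((n:ℝ)*(HYX+ε))) ≤ 1 := le_trans hlow hup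
    have hpos : (0:ℝ) < (N:ℝ)^((n:ℝ)*(HYX+ε)) := rpos _
    have h2 := mul_le_mul_of_nonneg_right h1 (le_of_lt hpos)
    rw [one_mul, mul_assoc, Real.rpow_neg (le_of_lt hN0),
      inv_mul_cancel₀ (ne_of_gt hpos), mul_one] at h2
    exact h2
  -- counting lemma
  have F2 : ∀ T : Finset (Fin n → X), T ⊆ D → ∀ y : Fin n → Y, (∀ x ∈ T, y ∈ S x) →
      (T.card : ℝ) ≤ (N:ℝ)^((n:ℝ)*(HXgY+3*ε)) := by
    intro T hTD y hTS
    rcases Finset.eq_empty_or_nonempty T with hT | ⟨x0, hx0⟩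
    · rw [hT]; simp only [Finset.card_empty, Nat.cast_zero]
      exact le_of_lt (rpos _)
    have hyP : (∏ i, pY (y i)) ≤ (N:ℝ)^(-((n:ℝ)*(HY-ε))) := by
      have h := hTS x0 hx0
      rw [hS, Finset.mem_filter] at h
      exact h.2.2
    have hlow : ∀ x ∈ T, (N:ℝ)^(-((n:ℝ)*(HX+HYX+2*ε))) ≤ PX x * PW x y := by
      intro x hx
      have h1 : (N:ℝ)^(-((n:ℝ)*(HX+ε))) ≤ PX x := by
        have := (hDmem x (hTD hx)).1
        rw [hTypP] at this
        exact this.1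
      have h2 : (N:ℝ)^(-((n:ℝ)*(HYX+ε))) ≤ PW x y := by
        have h := hTS x hx
        rw [hS, Finset.mem_filter] at h
        exact h.2.1
      calc (N:ℝ)^(-((n:ℝ)*(HX+HYX+2*ε)))
          = (N:ℝ)^(-((n:ℝ)*(HX+ε))) * (N:ℝ)^(-((n:ℝ)*(HYX+ε))) := by
            rw [← radd]; congr 1; ring
        _ ≤ PX x * PW x y := mul_le_mul h1 h2 (le_of_lt (rpos _))
            (le_trans (le_of_lt (rpos _)) h1)
    have hmarg : ∑ x : Fin n → X, PX x * PW x y = ∏ i, pY (y i) := by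
      have e : ∀ x : Fin n → X, PX x * PW x y
          = ∏ i, (fun i z => pX z * pYX z (y i)) i (x i) := by
        intro x
        rw [hPX, hPW, ← Finset.prod_mul_distrib]
      simp_rw [e]
      refine (sum_pi_prod (fun i z => pX z * pYX z (y i))).trans ?_
      apply Finset.prod_congr rfl
      intro i _
      rw [hpY]
      apply Finset.sum_congr rfl
      intro z _
      rw [hpXY]; ring
    have hsum : (T.card : ℝ) * (N:ℝ)^(-((n:ℝ)*(HX+HYX+2*ε))) ≤ (N:ℝ)^(-((n:ℝ)*(HY-ε))) := by
      calc (T.card : ℝ) * (N:ℝ)^(-((n:ℝ)*(HX+HYX+2*ε)))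
          = T.card • ((N:ℝ)^(-((n:ℝ)*(HX+HYX+2*ε)))) := (nsmul_eq_mul _ _).symm
        _ ≤ ∑ x ∈ T, PX x * PW x y := Finset.card_nsmul_le_sum T _ _ hlow
        _ ≤ ∑ x : Fin n → X, PX x * PW x y := Finset.sum_le_sum_of_subset_of_nonneg
            (Finset.subset_univ T) (fun x _ _ => mul_nonneg (hPXnn x) (hPWnn x y))
        _ = ∏ i, pY (y i) := hmarg
        _ ≤ (N:ℝ)^(-((n:ℝ)*(HY-ε))) := hyP
    have hXgY : HXgY = HX + HYX - HY := by linarith [hHYid]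
    have h2 := mul_le_mul_of_nonneg_right hsum (le_of_lt (rpos ((n:ℝ)*(HX+HYX+2*ε))))
    rw [mul_assoc, ← radd, ← radd] at h2
    have e1 : -((n:ℝ)*(HX+HYX+2*ε)) + (n:ℝ)*(HX+HYX+2*ε) = 0 := by ring
    have e2 : -((n:ℝ)*(HY-ε)) + (n:ℝ)*(HX+HYX+2*ε) = (n:ℝ)*(HXgY+3*ε) := by
      rw [hXgY]; ring
    rw [e1, e2, Real.rpow_zero, mul_one] at h2
    exact h2
  -- the packing threshold
  set Θ : ℝ := (ε/2) * (N:ℝ)^((n:ℝ)*(α - HYX - HXgY - 6*ε)) with hΘ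
  have extend : ∀ C : Finset (Fin n → X), C ⊆ D → (C.card : ℝ) < Θ →
      ∃ x ∈ D, 1 - ε ≤ ∑ y ∈ S x \ C.biUnion S, PW x y := by
    intro C hCD hCΘ
    by_contra hno
    push_neg at hno
    set U := C.biUnion S with hU
    have stepA : ∀ x ∈ D, ε/2 ≤ ∑ y ∈ S x ∩ U, PW x y := by
      intro x hx
      have hsplit : (∑ y ∈ S x ∩ U, PW x y) + ∑ y ∈ S x \ U, PW x y
          = ∑ y ∈ S x, PW x y := Finset.sum_inter_add_sum_sdiff (S x) U (PW x)
      have h1 : ∑ y ∈ S x, PW x y = 1 - e0 x := he0sum x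
      have h2 : e0 x ≤ ε/2 := (hDmem x hx).2
      have h3 : ∑ y ∈ S x \ U, PW x y < 1 - ε := hno x hx
      linarith
    have stepC : (D.card : ℝ) * (ε/2) ≤ ∑ x ∈ D, ∑ y ∈ S x ∩ U, PW x y := by
      rw [← nsmul_eq_mul]
      exact Finset.card_nsmul_le_sum D _ _ stepA
    have stepB : ∑ x ∈ D, ∑ y ∈ S x ∩ U, PW x y
        ≤ (U.card : ℝ) * (N:ℝ)^((n:ℝ)*(HXgY+3*ε)) := by
      have swap : ∑ x ∈ D, ∑ y ∈ S x ∩ U, PW x y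
          = ∑ y ∈ U, ∑ x ∈ D, (if y ∈ S x then PW x y else 0) := by
        rw [Finset.sum_comm]
        apply Finset.sum_congr rfl
        intro x _
        rw [Finset.inter_comm]
        exact (Finset.sum_ite_mem U (S x) (PW x)).symm
      rw [swap, ← nsmul_eq_mul]
      apply Finset.sum_le_card_nsmul
      intro y _
      have e : ∑ x ∈ D, (if y ∈ S x then PW x y else 0)
          = ∑ x ∈ D.filter (fun x => y ∈ S x), PW x y := (Finset.sum_filter _ _).symm
      rw [e]
      calc ∑ x ∈ D.filter (fun x => y ∈ S x), PW x y
          ≤ ((D.filter (fun x => y ∈ S x)).card : ℝ) * 1 := by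
            rw [← nsmul_eq_mul]
            apply Finset.sum_le_card_nsmul
            intro x hx
            exact hPWle1 x y
        _ = ((D.filter (fun x => y ∈ S x)).card : ℝ) := mul_one _
        _ ≤ (N:ℝ)^((n:ℝ)*(HXgY+3*ε)) := F2 _ (Finset.filter_subset _ _) y
            (fun x hx => (Finset.mem_filter.1 hx).2)
    have cardU : (U.card : ℝ) ≤ (C.card : ℝ) * (N:ℝ)^((n:ℝ)*(HYX+ε)) := by
      have h1 : U.card ≤ ∑ x ∈ C, (S x).card := Finset.card_biUnion_le
      have h2 : ((∑ x ∈ C, (S x).card : ℕ) : ℝ) = ∑ x ∈ C, ((S x).card : ℝ) :=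
        Nat.cast_sum _ _
      have h3 : ∑ x ∈ C, ((S x).card : ℝ) ≤ (C.card : ℝ) * (N:ℝ)^((n:ℝ)*(HYX+ε)) := by
        rw [← nsmul_eq_mul]
        exact Finset.sum_le_card_nsmul C _ _ (fun x _ => F1 x)
      calc (U.card : ℝ) ≤ ((∑ x ∈ C, (S x).card : ℕ) : ℝ) := by exact_mod_cast h1
        _ ≤ (C.card : ℝ) * (N:ℝ)^((n:ℝ)*(HYX+ε)) := by rw [h2]; exact h3
    -- combine everything
    have KV : (0:ℝ) < (N:ℝ)^((n:ℝ)*(HXgY+3*ε)) := rpos _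
    have KW : (0:ℝ) < (N:ℝ)^((n:ℝ)*(HYX+ε)) := rpos _
    have chain : (N:ℝ)^((n:ℝ)*(α-2*ε)) * (ε/2)
        ≤ (C.card : ℝ) * ((N:ℝ)^((n:ℝ)*(HYX+ε)) * (N:ℝ)^((n:ℝ)*(HXgY+3*ε))) := by
      calc (N:ℝ)^((n:ℝ)*(α-2*ε)) * (ε/2) ≤ (D.card : ℝ) * (ε/2) := by
            apply mul_le_mul_of_nonneg_right hDcard (by positivity)
        _ ≤ ∑ x ∈ D, ∑ y ∈ S x ∩ U, PW x y := stepC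
        _ ≤ (U.card : ℝ) * (N:ℝ)^((n:ℝ)*(HXgY+3*ε)) := stepB
        _ ≤ (C.card : ℝ) * (N:ℝ)^((n:ℝ)*(HYX+ε)) * (N:ℝ)^((n:ℝ)*(HXgY+3*ε)) := by
            apply mul_le_mul_of_nonneg_right cardU (le_of_lt KV)
        _ = (C.card : ℝ) * ((N:ℝ)^((n:ℝ)*(HYX+ε)) * (N:ℝ)^((n:ℝ)*(HXgY+3*ε))) := by ring
    have hM : (N:ℝ)^((n:ℝ)*(HYX+ε)) * (N:ℝ)^((n:ℝ)*(HXgY+3*ε))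
        = (N:ℝ)^((n:ℝ)*(HYX+HXgY+4*ε)) := by
      rw [← radd]; congr 1; ring
    have hΘM : Θ * (N:ℝ)^((n:ℝ)*(HYX+HXgY+4*ε)) = (N:ℝ)^((n:ℝ)*(α-2*ε)) * (ε/2) := by
      rw [hΘ, mul_assoc, ← radd]
      have : (n:ℝ)*(α - HYX - HXgY - 6*ε) + (n:ℝ)*(HYX+HXgY+4*ε) = (n:ℝ)*(α-2*ε) := by
        ring
      rw [this]; ring
    rw [hM] at chain
    rw [← hΘM] at chain
    have hMpos : (0:ℝ) < (N:ℝ)^((n:ℝ)*(HYX+HXgY+4*ε)) := rpos _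
    have : Θ ≤ (C.card : ℝ) := le_of_mul_le_mul_right chain hMpos
    linarith
  -- inductive construction of the code together with decoding sets
  have build : ∀ m : ℕ, (m : ℝ) ≤ Θ → ∃ C : Finset (Fin n → X), C ⊆ D ∧ C.card = m ∧
      ∃ Dec : (Fin n → X) → Finset (Fin n → Y),
        (∀ x ∈ C, Dec x ⊆ S x) ∧
        (∀ x ∈ C, ∀ x' ∈ C, x ≠ x' → Disjoint (Dec x) (Dec x')) ∧
        (∀ x ∈ C, 1 - ε ≤ ∑ y ∈ Dec x, PW x y) := by
    intro m
    induction m with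
    | zero => intro _
              exact ⟨∅, Finset.empty_subset D, Finset.card_empty, fun _ => ∅,
                by simp, by simp, by simp⟩
    | succ m ih =>
      intro hm1
      have hm : (m : ℝ) ≤ Θ := by
        push_cast at hm1 ⊢
        linarith
      obtain ⟨C, hCD, hCcard, Dec, hDecS, hDecDisj, hDecErr⟩ := ih hm
      have hClt : (C.card : ℝ) < Θ := by
        rw [hCcard]
        push_cast at hm1 ⊢
        linarith
      obtain ⟨xs, hxsD, hxs⟩ := extend C hCD hClt
      have hxsC : xs ∉ C := by
        intro hmem
        have hsub : S xs ⊆ C.biUnion S := Finset.subset_biUnion_of_mem S hmem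
        have : S xs \ C.biUnion S = ∅ := Finset.sdiff_eq_empty_iff_subset.2 hsub
        rw [this, Finset.sum_empty] at hxs
        linarith
      refine ⟨insert xs C, ?_, ?_, Function.update Dec xs (S xs \ C.biUnion S), ?_, ?_, ?_⟩
      · intro x hx
        rcases Finset.mem_insert.1 hx with h | h
        · rw [h]; exact hxsD
        · exact hCD h
      · rw [Finset.card_insert_of_notMem hxsC, hCcard]
      · intro x hx
        rcases Finset.mem_insert.1 hx with h | h
        · subst h
          rw [Function.update_self]
          exact Finset.sdiff_subset
        · rw [Function.update_of_ne (by rintro rfl; exact hxsC h)]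
          exact hDecS x h
      · intro x hx x' hx' hne
        rcases Finset.mem_insert.1 hx with h | h
        · subst h
          rcases Finset.mem_insert.1 hx' with h' | h'
          · exact absurd h'.symm hne
          · rw [Function.update_self, Function.update_of_ne (by rintro rfl; exact hxsC h')]
            have hsub : Dec x' ⊆ C.biUnion S :=
              le_trans (hDecS x' h') (Finset.subset_biUnion_of_mem S h')
            exact Finset.disjoint_of_subset_right hsub Finset.sdiff_disjoint
        · rcases Finset.mem_insert.1 hx' with h' | h'
          · subst h'
            rw [Function.update_self, Function.update_of_ne (by rintro rfl; exact hxsC h)]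
            have hsub : Dec x ⊆ C.biUnion S :=
              le_trans (hDecS x h) (Finset.subset_biUnion_of_mem S h)
            exact (Finset.disjoint_of_subset_right hsub Finset.sdiff_disjoint).symm
          · rw [Function.update_of_ne (by rintro rfl; exact hxsC h),
              Function.update_of_ne (by rintro rfl; exact hxsC h')]
            exact hDecDisj x h x' h' hne
      · intro x hx
        rcases Finset.mem_insert.1 hx with h | h
        · subst h
          rw [Function.update_self]
          exact hxs
        · rw [Function.update_of_ne (by rintro rfl; exact hxsC h)]
          exact hDecErr x h
  -- choose the code size
  set m : ℕ := ⌈(N:ℝ)^((n:ℝ)*R)⌉₊ with hmdef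
  have ht1 : (1:ℝ) ≤ (N:ℝ)^((n:ℝ)*R) := by
    rw [show (1:ℝ) = (N:ℝ)^(0:ℝ) by simp]
    apply rmono
    positivity
  have hmΘ : (m : ℝ) ≤ Θ := by
    have hceil : (m : ℝ) < (N:ℝ)^((n:ℝ)*R) + 1 :=
      Nat.ceil_lt_add_one (by positivity)
    have h2t : (N:ℝ)^((n:ℝ)*R) + 1 ≤ 2 * (N:ℝ)^((n:ℝ)*R) := by linarith
    have hεN : (4:ℝ) ≤ ε * (N:ℝ)^((n:ℝ)*ε) := by
      have h1 : ε * (4/ε + 2) ≤ ε * (N:ℝ)^((n:ℝ)*ε) :=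
        mul_le_mul_of_nonneg_left hc1 (le_of_lt hε)
      have h2 : ε * (4/ε + 2) = 4 + 2*ε := by field_simp
      linarith
    have hstep : 2 * (N:ℝ)^((n:ℝ)*R) ≤ (ε/2) * (N:ℝ)^((n:ℝ)*(R+ε)) := by
      have e : (N:ℝ)^((n:ℝ)*(R+ε)) = (N:ℝ)^((n:ℝ)*R) * (N:ℝ)^((n:ℝ)*ε) := by
        rw [← radd]; congr 1; ring
      rw [e]
      have := mul_le_mul_of_nonneg_right hεN (le_of_lt (rpos ((n:ℝ)*R)))
      nlinarith [rpos ((n:ℝ)*R), rpos ((n:ℝ)*ε)]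
    have hlast : (ε/2) * (N:ℝ)^((n:ℝ)*(R+ε)) ≤ Θ := by
      rw [hΘ]
      apply mul_le_mul_of_nonneg_left (rmono ?_) (by positivity)
      nlinarith [hRlt]
    linarith
  obtain ⟨C, hCD, hCcard, Dec, hDecS, hDecDisj, hDecErr⟩ := build m hmΘ
  have hCne : C.Nonempty := by
    rw [← Finset.card_pos, hCcard, hmdef]
    exact Nat.ceil_pos.2 (rpos _)
  obtain ⟨c0, hc0⟩ := hCne
  set g : (Fin n → Y) → (Fin n → X) := fun y =>
    if h : ∃ x, x ∈ C ∧ y ∈ Dec x then h.choose else c0 with hg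
  have hgC : ∀ y, g y ∈ C := by
    intro y
    rw [hg]
    by_cases h : ∃ x, x ∈ C ∧ y ∈ Dec x
    · simp only [dif_pos h]
      exact h.choose_spec.1
    · simp only [dif_neg h]
      exact hc0
  have hgDec : ∀ x ∈ C, ∀ y, y ∈ Dec x → g y = x := by
    intro x hx y hy
    have h : ∃ x', x' ∈ C ∧ y ∈ Dec x' := ⟨x, hx, hy⟩
    rw [hg]
    simp only [dif_pos h]
    by_contra hne
    have hdisj := hDecDisj _ h.choose_spec.1 x hx hne
    exact (Finset.disjoint_left.1 hdisj) h.choose_spec.2 hy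
  refine ⟨C, hCD, ?_, g, hgC, ?_⟩
  · rw [hCcard, hmdef]
    exact Nat.le_ceil _
  · intro x hx
    have hsub : Finset.univ.filter (fun y : Fin n → Y => g y ≠ x)
        ⊆ Finset.univ \ Dec x := by
      intro y hy
      rw [Finset.mem_filter] at hy
      rw [Finset.mem_sdiff]
      refine ⟨Finset.mem_univ _, fun hmem => hy.2 (hgDec x hx y hmem)⟩
    calc ∑ y ∈ Finset.univ.filter (fun y : Fin n → Y => g y ≠ x), PW x y
        ≤ ∑ y ∈ Finset.univ \ Dec x, PW x y :=
          Finset.sum_le_sum_of_subset_of_nonneg hsub (fun y _ _ => hPWnn x y)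
      _ = (∑ y, PW x y) - ∑ y ∈ Dec x, PW x y :=
          Finset.sum_sdiff_eq_sub (Finset.subset_univ _)
      _ = 1 - ∑ y ∈ Dec x, PW x y := by rw [hPWsum x]
      _ ≤ ε := by linarith [hDecErr x hx]
end

section
/- Let X, Y, p_{XY}, and the typical sets A_{n,1}(ε), A_n(ε) be as in the joint typicality setup, with 0 < ε < 1, and define for x ∈ A_{n,1}(ε) the set D_n(x,ε) = {y ∈ Y^n : (x,y) ∈ A_n(ε)} and A_{n,4}(ε) = {x ∈ A_{n,1}(ε) : Σ_{y ∈ D_n(x,ε)} p(y|x) ≥ 1−ε}, where p(y|x) = p(x,y)/p(x). Then for all sufficiently large n: (i) P(X^n ∈ A_{n,4}(ε)) ≥ 1−ε, and (ii) #A_{n,4}(ε) ≥ 2^{n(H(X)−2ε)}. -/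
open scoped Classical BigOperators

theorem typical_inputs_with_probable_outputs
    {X Y : Type} [Fintype X] [Fintype Y] [Nonempty X] [Nonempty Y]
    (pXY : X → Y → ℝ)
    (hnn : ∀ x y, 0 ≤ pXY x y) (hsum : ∑ x, ∑ y, pXY x y = 1)
    (pX : X → ℝ) (hpX : ∀ x, pX x = ∑ y, pXY x y)
    (pY : Y → ℝ) (hpY : ∀ y, pY y = ∑ x, pXY x y)
    (HX HY HXY : ℝ)
    (hHX : HX = -∑ x, pX x * Real.logb 2 (pX x))
    (hHY : HY = -∑ y, pY y * Real.logb 2 (pY y))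
    (hHXY : HXY = -∑ x, ∑ y, pXY x y * Real.logb 2 (pXY x y))
    (hHXpos : 0 < HX) (hHYpos : 0 < HY) (hHXYpos : 0 < HXY)
    (ε : ℝ) (hε0 : 0 < ε) (hε1 : ε < 1) :
    ∀ᶠ n in Filter.atTop,
      -- word probabilities
      let pnX : (Fin n → X) → ℝ := fun x => ∏ i, pX (x i)
      let pnY : (Fin n → Y) → ℝ := fun y => ∏ i, pY (y i)
      let pn : (Fin n → X) → (Fin n → Y) → ℝ := fun x y => ∏ i, pXY (x i) (y i)
      -- typical sets
      let A1 : Finset (Fin n → X) := Finset.univ.filter fun x =>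
        (2 : ℝ) ^ (-((n : ℝ) * (HX + ε))) ≤ pnX x ∧
          pnX x ≤ (2 : ℝ) ^ (-((n : ℝ) * (HX - ε)))
      let A2 : Finset (Fin n → Y) := Finset.univ.filter fun y =>
        (2 : ℝ) ^ (-((n : ℝ) * (HY + ε))) ≤ pnY y ∧
          pnY y ≤ (2 : ℝ) ^ (-((n : ℝ) * (HY - ε)))
      let A3 : (Fin n → X) → (Fin n → Y) → Prop := fun x y =>
        (2 : ℝ) ^ (-((n : ℝ) * (HXY + ε))) ≤ pn x y ∧
          pn x y ≤ (2 : ℝ) ^ (-((n : ℝ) * (HXY - ε)))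
      -- probable output set of x : D_n(x,ε) = {y : (x,y) ∈ A_n(ε)}
      let Dn : (Fin n → X) → Finset (Fin n → Y) := fun x =>
        A2.filter fun y => A3 x y
      -- A_{n,4}(ε)
      let A4 : Finset (Fin n → X) := A1.filter fun x =>
        1 - ε ≤ ∑ y ∈ Dn x, pn x y / pnX x
      -- assuming P((X^n,Y^n) ∈ A_n(ε)) ≥ 1 - ε²
      (1 - ε ^ 2 ≤ ∑ x ∈ A1, ∑ y ∈ Dn x, pn x y) →
        (1 - ε ≤ ∑ x ∈ A4, pnX x) ∧
          (2 : ℝ) ^ ((n : ℝ) * (HX - 2 * ε)) ≤ (A4.card : ℝ) := by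

  rw [Filter.eventually_atTop]
  refine ⟨⌈(-Real.logb 2 (1 - ε)) / ε⌉₊, fun n hn => ?_⟩
  intro pnX pnY pn A1 A2 A3 Dn A4 hP
  have h1ε : (0:ℝ) < 1 - ε := by linarith
  have hrp : ∀ r : ℝ, (0:ℝ) < 2 ^ r := fun r => Real.rpow_pos_of_pos two_pos r
  have hpXnn : ∀ x, 0 ≤ pX x := by
    intro x; rw [hpX]; exact Finset.sum_nonneg fun y _ => hnn x y
  have hpnXnn : ∀ x, 0 ≤ pnX x := fun x => Finset.prod_nonneg fun i _ => hpXnn _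
  have hpnnn : ∀ x y, 0 ≤ pn x y := fun x y => Finset.prod_nonneg fun i _ => hnn _ _
  have hsumY : ∀ x : Fin n → X, ∑ y : Fin n → Y, pn x y = pnX x := by
    intro x
    have : pnX x = ∏ i : Fin n, ∑ y : Y, pXY (x i) y := by
      simp only [pnX]; exact Finset.prod_congr rfl fun i _ => hpX (x i)
    rw [this, Finset.prod_univ_sum]
    simp [pn]
  have hsumX : ∑ x : Fin n → X, pnX x = 1 := by
    have h1 : ∑ x, pX x = 1 := by
      rw [← hsum]; exact Finset.sum_congr rfl fun x _ => hpX x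
    have : ∑ x : Fin n → X, pnX x = ∑ p ∈ Fintype.piFinset (fun _ : Fin n => (Finset.univ : Finset X)), ∏ i, pX (p i) := by
      simp [pnX]
    rw [this, ← Finset.prod_univ_sum]
    simp [h1]
  have hA1pos : ∀ x ∈ A1, 0 < pnX x := fun x hx =>
    lt_of_lt_of_le (hrp _) (Finset.mem_filter.mp hx).2.1
  set T : (Fin n → X) → ℝ := fun x => ∑ y ∈ Dn x, pn x y with hT
  have hTnn : ∀ x, 0 ≤ T x := fun x => Finset.sum_nonneg fun y _ => hpnnn x y
  have hTle : ∀ x, T x ≤ pnX x := by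
    intro x
    rw [← hsumY x]
    exact Finset.sum_le_sum_of_subset_of_nonneg (Finset.subset_univ _) fun y _ _ => hpnnn x y
  have hA4sub : A4 ⊆ A1 := Finset.filter_subset _ _
  set s := ∑ x ∈ A4, pnX x with hs
  -- part (i)
  have hsd : ∑ x ∈ A1 \ A4, T x + ∑ x ∈ A4, T x = ∑ x ∈ A1, T x := Finset.sum_sdiff hA4sub
  have h1 : ∑ x ∈ A4, T x ≤ s := Finset.sum_le_sum fun x _ => hTle x
  have h2 : ∑ x ∈ A1 \ A4, T x ≤ (1 - ε) * ∑ x ∈ A1 \ A4, pnX x := by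
    rw [Finset.mul_sum]
    refine Finset.sum_le_sum fun x hx => ?_
    obtain ⟨hx1, hx4⟩ := Finset.mem_sdiff.mp hx
    have hpos := hA1pos x hx1
    have hnot : ¬ (1 - ε ≤ ∑ y ∈ Dn x, pn x y / pnX x) := fun h =>
      hx4 (Finset.mem_filter.mpr ⟨hx1, h⟩)
    rw [← Finset.sum_div] at hnot
    have hlt : T x / pnX x < 1 - ε := lt_of_not_ge hnot
    have := (div_lt_iff₀ hpos).mp hlt
    linarith
  have h3 : ∑ x ∈ A1 \ A4, pnX x ≤ 1 - s := by
    have hsd2 : ∑ x ∈ A1 \ A4, pnX x + ∑ x ∈ A4, pnX x = ∑ x ∈ A1, pnX x :=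
      Finset.sum_sdiff hA4sub
    have hle1 : ∑ x ∈ A1, pnX x ≤ 1 := by
      rw [← hsumX]
      exact Finset.sum_le_sum_of_subset_of_nonneg (Finset.subset_univ _) fun x _ _ => hpnXnn x
    linarith
  have hPT : 1 - ε ^ 2 ≤ ∑ x ∈ A1, T x := hP
  have hpart1 : 1 - ε ≤ s := by
    have h4 : (1 - ε) * ∑ x ∈ A1 \ A4, pnX x ≤ (1 - ε) * (1 - s) :=
      mul_le_mul_of_nonneg_left h3 (by linarith)
    nlinarith
  refine ⟨hpart1, ?_⟩
  -- part (ii)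
  have hcard : s ≤ (A4.card : ℝ) * 2 ^ (-((n : ℝ) * (HX - ε))) := by
    calc s ≤ ∑ _x ∈ A4, (2:ℝ) ^ (-((n : ℝ) * (HX - ε))) :=
          Finset.sum_le_sum fun x hx => (Finset.mem_filter.mp (hA4sub hx)).2.2
      _ = (A4.card : ℝ) * 2 ^ (-((n : ℝ) * (HX - ε))) := by
          rw [Finset.sum_const, nsmul_eq_mul]
  have hkey : (2:ℝ) ^ (-((n:ℝ) * ε)) ≤ 1 - ε := by
    have hle : -Real.logb 2 (1 - ε) ≤ (n:ℝ) * ε := by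
      have hN : ((⌈(-Real.logb 2 (1 - ε)) / ε⌉₊ : ℕ) : ℝ) ≤ (n:ℝ) := Nat.cast_le.mpr hn
      have h := (Nat.le_ceil ((-Real.logb 2 (1 - ε)) / ε)).trans hN
      rw [div_le_iff₀ hε0] at h
      linarith
    calc (2:ℝ) ^ (-((n:ℝ) * ε)) ≤ 2 ^ (Real.logb 2 (1 - ε)) :=
          Real.rpow_le_rpow_of_exponent_le one_le_two (by linarith)
      _ = 1 - ε := Real.rpow_logb two_pos (by norm_num) h1ε
  have e2 : (2:ℝ) ^ (-((n:ℝ) * (HX - ε))) * 2 ^ ((n:ℝ) * (HX - ε)) = 1 := by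
    rw [← Real.rpow_add two_pos]
    norm_num
  have h5 : 1 - ε ≤ (A4.card : ℝ) * 2 ^ (-((n:ℝ) * (HX - ε))) := hpart1.trans hcard
  have h6 : (1 - ε) * 2 ^ ((n:ℝ) * (HX - ε)) ≤ (A4.card : ℝ) := by
    have := mul_le_mul_of_nonneg_right h5 (hrp ((n:ℝ) * (HX - ε))).le
    rwa [mul_assoc, e2, mul_one] at this
  have e1 : (2:ℝ) ^ ((n:ℝ) * (HX - 2 * ε)) = 2 ^ (-((n:ℝ) * ε)) * 2 ^ ((n:ℝ) * (HX - ε)) := by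
    rw [← Real.rpow_add two_pos]
    ring_nf
  have h7 : (2:ℝ) ^ ((n:ℝ) * (HX - 2 * ε)) ≤ (1 - ε) * 2 ^ ((n:ℝ) * (HX - ε)) := by
    rw [e1]
    exact mul_le_mul_of_nonneg_right hkey (hrp _).le
  linarith
end

section
/- Let X and Y be finite alphabets with N := #X ≥ 2, let p_{Y|X}(y|x) be a channel transition probability, let p_X be a probability distribution on X with H(X) > 0, and define p_{XY}(x,y) = p_{Y|X}(y|x)p_X(x), with all entropies taken with logarithms to base N. Then every rate 0 < R < H(X) − H(X|Y) − H(Y|X) is achievable in the usual (unrestricted) sense: for every ε > 0 and all sufficiently large n there exist a code C_n ⊆ X^n with #C_n ≥ N^{nR} and a decoder g_n : Y^n → C_n such that max_{x ∈ C_n} P(g_n(Γ_x) ≠ x) ≤ ε. -/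
open scoped Classical BigOperators

lemma my_cheb {Z : Type*} [Fintype Z] (p : Z → ℝ) (hp : ∀ z, 0 ≤ p z) (hps : ∑ z, p z = 1)
    (f : Z → ℝ) (n : ℕ) (hn : 0 < n) (δ : ℝ) (hδ : 0 < δ) :
    ∑ ω ∈ Finset.univ.filter (fun ω : Fin n → Z =>
        (n:ℝ)*δ < |∑ i, f (ω i) - n * (∑ z, p z * f z)|), ∏ i, p (ω i)
      ≤ (∑ z, p z * (f z - ∑ z, p z * f z)^2) / (n * δ^2) := by
  set μ : ℝ := ∑ z, p z * f z with hμ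
  set g : Z → ℝ := fun z => f z - μ with hgdef
  have hg0 : ∑ z, p z * g z = 0 := by
    simp only [hgdef, mul_sub, Finset.sum_sub_distrib, ← Finset.sum_mul, hps]
    ring
  have hsub : ∀ ω : Fin n → Z, ∑ i, f (ω i) - n * μ = ∑ i, g (ω i) := by
    intro ω
    simp [hgdef, Finset.sum_sub_distrib, Finset.card_univ, mul_comm]
  have claim : ∀ i j : Fin n, ∑ ω : Fin n → Z, (∏ k, p (ω k)) * (g (ω i) * g (ω j))
      = if i = j then ∑ z, p z * g z ^ 2 else 0 := by
    intro i j
    have hrw : ∀ ω : Fin n → Z, (∏ k, p (ω k)) * (g (ω i) * g (ω j))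
        = ∏ k, (p (ω k) * (if k = i then g (ω k) else 1) * (if k = j then g (ω k) else 1)) := by
      intro ω
      rw [Finset.prod_mul_distrib, Finset.prod_mul_distrib,
        Finset.prod_ite_eq' Finset.univ i (fun k => g (ω k)),
        Finset.prod_ite_eq' Finset.univ j (fun k => g (ω k))]
      simp [mul_assoc]
    have key : ∑ ω : Fin n → Z, ∏ k, (p (ω k) * (if k = i then g (ω k) else 1) * (if k = j then g (ω k) else 1))
        = ∏ k : Fin n, ∑ z, (p z * (if k = i then g z else 1) * (if k = j then g z else 1)) := by
      rw [Finset.prod_univ_sum]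
      rw [Fintype.piFinset_univ]
    simp only [hrw, key]
    by_cases hij : i = j
    · subst hij
      simp only [if_pos rfl]
      rw [Finset.prod_eq_single i]
      · refine Finset.sum_congr rfl fun z _ => ?_
        rw [if_pos rfl]
        ring
      · intro k _ hk
        simp [if_neg hk, hps]
      · simp
    · rw [if_neg hij]
      apply Finset.prod_eq_zero (Finset.mem_univ i)
      simp only [if_pos rfl, if_neg hij]
      simpa using hg0
  have E2 : ∑ ω : Fin n → Z, (∏ k, p (ω k)) * (∑ i, g (ω i))^2
      = n * ∑ z, p z * g z ^ 2 := by
    have h1 : ∀ ω : Fin n → Z, (∑ i, g (ω i))^2 = ∑ i, ∑ j, g (ω i) * g (ω j) := by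
      intro ω; rw [sq, Finset.sum_mul_sum]
    simp only [h1, Finset.mul_sum]
    rw [Finset.sum_comm]
    have h2 : ∀ i : Fin n, ∑ ω : Fin n → Z, ∑ j, (∏ k, p (ω k)) * (g (ω i) * g (ω j))
        = ∑ z, p z * g z ^ 2 := by
      intro i
      rw [Finset.sum_comm]
      simp only [claim]
      simp
    simp only [h2]
    rw [Finset.sum_const, Finset.card_univ, Fintype.card_fin, nsmul_eq_mul, Finset.mul_sum]
  have hnd : (0:ℝ) < (n:ℝ) * δ := by positivity
  have step1 : ∑ ω ∈ Finset.univ.filter (fun ω : Fin n → Z =>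
        (n:ℝ)*δ < |∑ i, f (ω i) - n * μ|), ∏ i, p (ω i)
      ≤ ∑ ω : Fin n → Z, (∏ k, p (ω k)) * (∑ i, g (ω i))^2 / ((n:ℝ)*δ)^2 := by
    rw [← Finset.sum_filter_add_sum_filter_not Finset.univ
        (fun ω : Fin n → Z => (n:ℝ)*δ < |∑ i, f (ω i) - n * μ|)
        (fun ω => (∏ k, p (ω k)) * (∑ i, g (ω i))^2 / ((n:ℝ)*δ)^2)]
    have h1 : ∑ ω ∈ Finset.univ.filter (fun ω : Fin n → Z =>
        (n:ℝ)*δ < |∑ i, f (ω i) - n * μ|), ∏ i, p (ω i)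
        ≤ ∑ ω ∈ Finset.univ.filter (fun ω : Fin n → Z =>
        (n:ℝ)*δ < |∑ i, f (ω i) - n * μ|), (∏ k, p (ω k)) * (∑ i, g (ω i))^2 / ((n:ℝ)*δ)^2 := by
      apply Finset.sum_le_sum
      intro ω hω
      rw [Finset.mem_filter] at hω
      have habs : (n:ℝ)*δ < |∑ i, g (ω i)| := by rw [← hsub]; exact hω.2
      have h2 : ((n:ℝ)*δ)^2 ≤ (∑ i, g (ω i))^2 := by
        rw [← sq_abs (∑ i, g (ω i))]
        exact pow_le_pow_left₀ hnd.le (le_of_lt habs) 2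
      have hprodnn : 0 ≤ ∏ k, p (ω k) := Finset.prod_nonneg fun k _ => hp _
      calc ∏ i, p (ω i) = (∏ i, p (ω i)) * (((n:ℝ)*δ)^2 / ((n:ℝ)*δ)^2) := by
            rw [div_self (by positivity), mul_one]
        _ ≤ (∏ i, p (ω i)) * ((∑ i, g (ω i))^2 / ((n:ℝ)*δ)^2) := by
            have hd : (0:ℝ) < ((n:ℝ)*δ)^2 := by positivity
            exact mul_le_mul_of_nonneg_left ((div_le_div_iff_of_pos_right hd).2 h2) hprodnn
        _ = (∏ k, p (ω k)) * (∑ i, g (ω i))^2 / ((n:ℝ)*δ)^2 := by ring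
    refine h1.trans (le_add_of_nonneg_right ?_)
    apply Finset.sum_nonneg
    intro ω _
    have h0 : 0 ≤ ∏ k, p (ω k) := Finset.prod_nonneg fun k _ => hp _
    positivity
  calc ∑ ω ∈ Finset.univ.filter (fun ω : Fin n → Z =>
        (n:ℝ)*δ < |∑ i, f (ω i) - n * μ|), ∏ i, p (ω i)
      ≤ ∑ ω : Fin n → Z, (∏ k, p (ω k)) * (∑ i, g (ω i))^2 / ((n:ℝ)*δ)^2 := step1
    _ = (∑ ω : Fin n → Z, (∏ k, p (ω k)) * (∑ i, g (ω i))^2) / ((n:ℝ)*δ)^2 := by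
        rw [Finset.sum_div]
    _ = (n * ∑ z, p z * g z ^ 2) / ((n:ℝ)*δ)^2 := by rw [E2]
    _ = (∑ z, p z * g z ^ 2) / (n * δ^2) := by
        have : (n:ℝ) ≠ 0 := Nat.cast_ne_zero.2 hn.ne'
        field_simp

lemma my_greedy {α : Type*} (r : α → α → Prop) [∀ a, DecidablePred (r a)]
    (hsym : ∀ a b, r a b → r b a) (B : ℝ) :
    ∀ (G : Finset α), (∀ a ∈ G, r a a) → (∀ a ∈ G, ((G.filter (r a)).card : ℝ) ≤ B) →
    ∃ C : Finset α, C ⊆ G ∧ ((G.card : ℝ) ≤ B * C.card) ∧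
      (∀ a ∈ C, ∀ b ∈ C, r a b → a = b) := by
  intro G
  induction G using Finset.strongInduction with
  | _ G ih =>
    intro hrefl hB
    rcases G.eq_empty_or_nonempty with hGe | ⟨a, ha⟩
    · exact ⟨∅, by simp [hGe]⟩
    · set G' := G.filter (fun b => ¬ r a b) with hG'
      have hG'sub : G' ⊆ G := Finset.filter_subset _ _
      have haG' : a ∉ G' := fun h => (Finset.mem_filter.1 h).2 (hrefl a ha)
      have hssub : G' ⊂ G := Finset.ssubset_iff_of_subset hG'sub |>.2 ⟨a, ha, haG'⟩
      obtain ⟨C', hC'sub, hC'card, hC'pair⟩ := ih G' hssub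
        (fun b hb => hrefl b (hG'sub hb))
        (fun b hb => le_trans (by
          exact_mod_cast Finset.card_le_card (Finset.filter_subset_filter _ hG'sub)) (hB b (hG'sub hb)))
      have haC' : a ∉ C' := fun h => haG' (hC'sub h)
      refine ⟨insert a C', ?_, ?_, ?_⟩
      · intro b hb
        rcases Finset.mem_insert.1 hb with rfl | hb
        · exact ha
        · exact hG'sub (hC'sub hb)
      · have hsplit : G.card = (G.filter (r a)).card + G'.card := by
          rw [hG']
          exact (Finset.card_filter_add_card_filter_not (p := r a)).symm
        rw [Finset.card_insert_of_notMem haC']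
        push_cast [hsplit]
        have := hB a ha
        nlinarith [hC'card]
      · intro b hb c hc hbc
        rcases Finset.mem_insert.1 hb with hb' | hb' <;> rcases Finset.mem_insert.1 hc with hc' | hc'
        · rw [hb', hc']
        · rw [hb'] at hbc
          exact absurd hbc (Finset.mem_filter.1 (hC'sub hc')).2
        · rw [hc'] at hbc
          exact absurd (hsym _ _ hbc) (Finset.mem_filter.1 (hC'sub hb')).2
        · exact hC'pair b hb' c hc' hbc

lemma my_prod_eq_rpow {a : ℝ} (ha : 1 < a) {n : ℕ} (t : Fin n → ℝ) (ht : ∀ i, 0 < t i) :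
    ∏ i, t i = a ^ (∑ i, Real.logb a (t i)) := by
  rw [Real.rpow_sum_of_pos (by linarith : (0:ℝ) < a)]
  refine Finset.prod_congr rfl fun i _ => ?_
  rw [Real.rpow_logb (by linarith) (by linarith) (ht i)]

lemma my_sum_prod {ι : Type*} [Fintype ι] [DecidableEq ι] {κ : Type*} [Fintype κ] (F : ι → κ → ℝ) :
    ∑ y : ι → κ, ∏ i, F i (y i) = ∏ i, ∑ b, F i b := by
  rw [Finset.prod_univ_sum, Fintype.piFinset_univ]

lemma my_pair_sum {X Y : Type*} [Fintype X] [Fintype Y] (n : ℕ) (F : (Fin n → X × Y) → ℝ) :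
    ∑ ω : Fin n → X × Y, F ω = ∑ x : Fin n → X, ∑ y : Fin n → Y, F (fun i => (x i, y i)) := by
  have h1 : ∑ ω : Fin n → X × Y, F ω
      = ∑ p : (Fin n → X) × (Fin n → Y), F (fun i => (p.1 i, p.2 i)) :=
    Fintype.sum_equiv (Equiv.arrowProdEquivProdArrow (Fin n) (fun _ => X) (fun _ => Y)) _ _ (fun ω => rfl)
  rw [h1]
  exact Fintype.sum_prod_type _

lemma my_cheb_pair {X Y : Type*} [Fintype X] [Fintype Y] (p : X × Y → ℝ) (hp : ∀ z, 0 ≤ p z)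
    (hps : ∑ z, p z = 1) (f : X × Y → ℝ) (n : ℕ) (hn : 0 < n) (δ : ℝ) (hδ : 0 < δ) :
    ∑ x : Fin n → X, ∑ y : Fin n → Y,
      (if (n:ℝ)*δ < |∑ i, f (x i, y i) - (n:ℝ) * (∑ z, p z * f z)| then ∏ i, p (x i, y i) else 0)
      ≤ (∑ z, p z * (f z - ∑ z, p z * f z)^2) / (n * δ^2) := by
  have h := my_cheb p hp hps f n hn δ hδ
  rw [Finset.sum_filter] at h
  refine le_trans (le_of_eq ?_) h
  exact (my_pair_sum n (fun ω =>
    if (n:ℝ)*δ < |∑ i, f (ω i) - (n:ℝ) * (∑ z, p z * f z)| then ∏ i, p (ω i) else 0)).symm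

lemma my_factor_pos {n : ℕ} {t : Fin n → ℝ} (h : 0 < ∏ i, t i) (hnn : ∀ i, 0 ≤ t i)
    (i : Fin n) : 0 < t i := by
  rcases (hnn i).lt_or_eq with h' | h'
  · exact h'
  · exfalso
    have : ∏ j, t j = 0 := Finset.prod_eq_zero (Finset.mem_univ i) h'.symm
    linarith

lemma my_le_rpow_of_mul {a c e : ℝ} (ha : 0 < a) (h : c * a^(-e) ≤ 1) : c ≤ a^e := by
  have hcan : a^(-e) * a^e = 1 := by
    rw [← Real.rpow_add ha]; simp
  have h2 : c * a^(-e) * a^e ≤ 1 * a^e :=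
    mul_le_mul_of_nonneg_right h (Real.rpow_pos_of_pos ha e).le
  calc c = c * (a^(-e) * a^e) := by rw [hcan, mul_one]
    _ = c * a^(-e) * a^e := by ring
    _ ≤ 1 * a^e := h2
    _ = a^e := one_mul _

set_option maxHeartbeats 1000000 in
theorem achievability_general_channels_unrestricted
    {X Y : Type} [Fintype X] [Fintype Y] [Nonempty X] [Nonempty Y]
    (N : ℕ) (hNcard : N = Fintype.card X) (hN2 : 2 ≤ N)
    (pYX : X → Y → ℝ)
    (hpYXnn : ∀ x y, 0 ≤ pYX x y) (hpYXsum : ∀ x, ∑ y, pYX x y = 1)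
    (pX : X → ℝ) (hpXnn : ∀ x, 0 ≤ pX x) (hpXsum : ∑ x, pX x = 1)
    (pXY : X → Y → ℝ) (hpXY : ∀ x y, pXY x y = pYX x y * pX x)
    (pY : Y → ℝ) (hpY : ∀ y, pY y = ∑ x, pXY x y)
    (HX HYX HXgY : ℝ)
    (hHX : HX = -∑ x, pX x * Real.logb N (pX x))
    (hHYX : HYX = -∑ x, ∑ y, pXY x y * Real.logb N (pYX x y))
    (hHXgY : HXgY = -∑ x, ∑ y, pXY x y * Real.logb N (pXY x y / pY y))
    (hHXpos : 0 < HX)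
    (R : ℝ) (hR0 : 0 < R) (hR : R < HX - HXgY - HYX)
    (ε : ℝ) (hε : 0 < ε) :
    ∀ᶠ n in Filter.atTop,
      ∃ C : Finset (Fin n → X),
        (N : ℝ) ^ ((n : ℝ) * R) ≤ (C.card : ℝ) ∧
        ∃ g : (Fin n → Y) → (Fin n → X), (∀ y, g y ∈ C) ∧
          ∀ x ∈ C,
            (∑ y ∈ Finset.univ.filter fun y : Fin n → Y => g y ≠ x,
              ∏ i, pYX (x i) (y i)) ≤ ε := by
  -- basic setup
  have ha0 : (0:ℝ) < (N:ℝ) := by positivity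
  have ha2 : (2:ℝ) ≤ (N:ℝ) := by exact_mod_cast hN2
  have ha1 : (1:ℝ) < (N:ℝ) := by linarith
  set a : ℝ := (N:ℝ) with hadef
  -- the joint distribution on pairs
  set pZ : X × Y → ℝ := fun z => pXY z.1 z.2 with hpZdef
  have hpXYnn : ∀ x y, 0 ≤ pXY x y := fun x y => by
    rw [hpXY]; exact mul_nonneg (hpYXnn x y) (hpXnn x)
  have hpZnn : ∀ z, 0 ≤ pZ z := fun z => hpXYnn z.1 z.2
  have hrowsum : ∀ x, ∑ y, pXY x y = pX x := by
    intro x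
    simp only [hpXY, ← Finset.sum_mul, hpYXsum, one_mul]
  have hpZsum : ∑ z, pZ z = 1 := by
    rw [Fintype.sum_prod_type]
    simp only [hpZdef]
    simp only [hrowsum, hpXsum]
  set f1 : X × Y → ℝ := fun z => Real.logb N (pXY z.1 z.2) with hf1def
  set f2 : X × Y → ℝ := fun z => Real.logb N (pX z.1) with hf2def
  set f3 : X × Y → ℝ := fun z => Real.logb N (pY z.2) with hf3def
  set μ1 : ℝ := ∑ z, pZ z * f1 z with hμ1def
  set μ2 : ℝ := ∑ z, pZ z * f2 z with hμ2def
  set μ3 : ℝ := ∑ z, pZ z * f3 z with hμ3def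
  set V1 : ℝ := ∑ z, pZ z * (f1 z - μ1)^2 with hV1def
  set V2 : ℝ := ∑ z, pZ z * (f2 z - μ2)^2 with hV2def
  set V3 : ℝ := ∑ z, pZ z * (f3 z - μ3)^2 with hV3def
  set Vt : ℝ := V1 + V2 + V3 with hVtdef
  have hV1nn : 0 ≤ V1 := Finset.sum_nonneg fun z _ => mul_nonneg (hpZnn z) (sq_nonneg _)
  have hV2nn : 0 ≤ V2 := Finset.sum_nonneg fun z _ => mul_nonneg (hpZnn z) (sq_nonneg _)
  have hV3nn : 0 ≤ V3 := Finset.sum_nonneg fun z _ => mul_nonneg (hpZnn z) (sq_nonneg _)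
  have hVtnn : 0 ≤ Vt := by positivity
  -- unfolded double-sum forms of the means
  have hμ1x : μ1 = ∑ x : X, ∑ y : Y, pXY x y * Real.logb N (pXY x y) := by
    rw [hμ1def]; exact Fintype.sum_prod_type _
  have hμ2x : μ2 = ∑ x : X, ∑ y : Y, pXY x y * Real.logb N (pX x) := by
    rw [hμ2def]; exact Fintype.sum_prod_type _
  have hμ3x : μ3 = ∑ x : X, ∑ y : Y, pXY x y * Real.logb N (pY y) := by
    rw [hμ3def]; exact Fintype.sum_prod_type _
  -- entropy identities
  have hHXμ : HX = -μ2 := by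
    rw [hHX, hμ2x]
    congr 1
    refine Finset.sum_congr rfl fun x _ => ?_
    rw [← Finset.sum_mul, hrowsum]
  have hHYXμ : HYX = μ2 - μ1 := by
    have hterm : ∀ (x : X) (y : Y), pXY x y * Real.logb N (pYX x y)
        = pXY x y * Real.logb N (pXY x y) - pXY x y * Real.logb N (pX x) := by
      intro x y
      rcases eq_or_lt_of_le (hpXYnn x y) with h0 | hpos
      · rw [← h0]; ring
      · have hpXpos : 0 < pX x := by
          by_contra h
          push_neg at h
          have : pYX x y * pX x ≤ 0 := mul_nonpos_of_nonneg_of_nonpos (hpYXnn x y) h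
          rw [← hpXY] at this; linarith
        have hpYXpos : 0 < pYX x y := by
          by_contra h
          push_neg at h
          have h0 : pYX x y = 0 := le_antisymm h (hpYXnn x y)
          rw [hpXY, h0, zero_mul] at hpos; linarith
        rw [hpXY, Real.logb_mul hpYXpos.ne' hpXpos.ne']
        ring
    have hsplitsum : ∑ x : X, ∑ y : Y, pXY x y * Real.logb N (pYX x y)
        = (∑ x : X, ∑ y : Y, pXY x y * Real.logb N (pXY x y))
          - ∑ x : X, ∑ y : Y, pXY x y * Real.logb N (pX x) := by
      rw [← Finset.sum_sub_distrib]
      refine Finset.sum_congr rfl fun x _ => ?_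
      rw [← Finset.sum_sub_distrib]
      exact Finset.sum_congr rfl fun y _ => hterm x y
    rw [hHYX, hsplitsum, ← hμ1x, ← hμ2x]
    ring
  have hHXgYμ : HXgY = μ3 - μ1 := by
    have hterm : ∀ (x : X) (y : Y), pXY x y * Real.logb N (pXY x y / pY y)
        = pXY x y * Real.logb N (pXY x y) - pXY x y * Real.logb N (pY y) := by
      intro x y
      rcases eq_or_lt_of_le (hpXYnn x y) with h0 | hpos
      · rw [← h0]; ring
      · have hpYpos : 0 < pY y := by
          rw [hpY]
          calc (0:ℝ) < pXY x y := hpos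
            _ ≤ ∑ x', pXY x' y :=
              Finset.single_le_sum (fun x' _ => hpXYnn x' y) (Finset.mem_univ x)
        rw [Real.logb_div hpos.ne' hpYpos.ne']
        ring
    have hsplitsum : ∑ x : X, ∑ y : Y, pXY x y * Real.logb N (pXY x y / pY y)
        = (∑ x : X, ∑ y : Y, pXY x y * Real.logb N (pXY x y))
          - ∑ x : X, ∑ y : Y, pXY x y * Real.logb N (pY y) := by
      rw [← Finset.sum_sub_distrib]
      refine Finset.sum_congr rfl fun x _ => ?_
      rw [← Finset.sum_sub_distrib]
      exact Finset.sum_congr rfl fun y _ => hterm x y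
    rw [hHXgY, hsplitsum, ← hμ1x, ← hμ3x]
    ring
  -- parameters
  set δ : ℝ := (HX - HXgY - HYX - R)/6 with hδdef
  have hδ : 0 < δ := by rw [hδdef]; linarith
  have hkey : 2*μ1 - 2*μ2 - μ3 = R + 6*δ := by
    rw [hδdef]
    have h1 := hHXμ; have h2 := hHYXμ; have h3 := hHXgYμ
    linarith
  set ε' : ℝ := min ε (1/2) with hε'def
  have hε'0 : 0 < ε' := lt_min hε (by norm_num)
  have hε'le : ε' ≤ ε := min_le_left _ _
  have hε'half : ε' ≤ 1/2 := min_le_right _ _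
  -- choose n₀
  obtain ⟨n₀, hn₀⟩ := exists_nat_ge (max (1/δ) (2*Vt/(δ^2*ε')))
  rw [Filter.eventually_atTop]
  refine ⟨max n₀ 1, fun n hn => ?_⟩
  have hn1 : 1 ≤ n := le_trans (le_max_right n₀ 1) hn
  have hn0 : 0 < n := hn1
  have hnn0 : (0:ℝ) < (n:ℝ) := by exact_mod_cast hn0
  have hnM : max (1/δ) (2*Vt/(δ^2*ε')) ≤ (n:ℝ) := by
    refine le_trans hn₀ ?_
    exact_mod_cast le_trans (le_max_left n₀ 1) hn
  have hnδ1 : 1 ≤ (n:ℝ)*δ := by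
    have h1 : 1/δ ≤ (n:ℝ) := le_trans (le_max_left _ _) hnM
    rw [div_le_iff₀ hδ] at h1
    linarith
  have hn2V : 2*Vt ≤ (n:ℝ)*(δ^2*ε') := by
    have h1 : 2*Vt/(δ^2*ε') ≤ (n:ℝ) := le_trans (le_max_right _ _) hnM
    rw [div_le_iff₀ (by positivity)] at h1
    linarith
  have hVb : Vt/((n:ℝ)*δ^2) ≤ ε'/2 := by
    rw [div_le_iff₀ (by positivity)]
    linarith [hn2V]
  -- the typicality condition
  set Q : (Fin n → X) → (Fin n → Y) → ℝ :=
    fun x y => ∏ i, pXY (x i) (y i) with hQdef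
  have hQnn : ∀ x y, 0 ≤ Q x y := fun x y => Finset.prod_nonneg fun i _ => hpXYnn _ _
  set cond : (Fin n → X) → (Fin n → Y) → Prop := fun x y =>
    (0 < Q x y) ∧
    |∑ i, f1 (x i, y i) - (n:ℝ) * μ1| ≤ (n:ℝ)*δ ∧
    |∑ i, f2 (x i, y i) - (n:ℝ) * μ2| ≤ (n:ℝ)*δ ∧
    |∑ i, f3 (x i, y i) - (n:ℝ) * μ3| ≤ (n:ℝ)*δ with hconddef
  set S : (Fin n → X) → Finset (Fin n → Y) :=
    fun x => Finset.univ.filter (cond x) with hSdef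
  set W : (Fin n → X) → ℝ := fun x => ∑ y ∈ S x, ∏ i, pYX (x i) (y i) with hWdef
  -- basic positivity consequences of cond
  have hcond_pos : ∀ x y, cond x y → ∀ i, 0 < pXY (x i) (y i) := by
    intro x y hc i
    exact my_factor_pos hc.1 (fun j => hpXYnn _ _) i
  have hcond_pX : ∀ x y, cond x y → ∀ i, 0 < pX (x i) := by
    intro x y hc i
    have h := hcond_pos x y hc i
    by_contra h'
    push_neg at h'
    have : pYX (x i) (y i) * pX (x i) ≤ 0 :=
      mul_nonpos_of_nonneg_of_nonpos (hpYXnn _ _) h'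
    rw [← hpXY] at this; linarith
  have hcond_pYX : ∀ x y, cond x y → ∀ i, 0 < pYX (x i) (y i) := by
    intro x y hc i
    have h := hcond_pos x y hc i
    by_contra h'
    push_neg at h'
    have h0 : pYX (x i) (y i) = 0 := le_antisymm h' (hpYXnn _ _)
    rw [hpXY, h0, zero_mul] at h; linarith
  have hcond_pY : ∀ x y, cond x y → ∀ i, 0 < pY (y i) := by
    intro x y hc i
    have h := hcond_pos x y hc i
    rw [hpY]
    calc (0:ℝ) < pXY (x i) (y i) := h
      _ ≤ ∑ x', pXY x' (y i) :=
        Finset.single_le_sum (fun x' _ => hpXYnn x' (y i)) (Finset.mem_univ (x i))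
  -- product/exponent bounds under cond
  have hprodpX_le : ∀ x y, cond x y → ∏ i, pX (x i) ≤ a ^ ((n:ℝ)*μ2 + (n:ℝ)*δ) := by
    intro x y hc
    have hpos : ∀ i, 0 < pX (x i) := hcond_pX x y hc
    rw [my_prod_eq_rpow ha1 _ hpos]
    apply Real.rpow_le_rpow_of_exponent_le ha1.le
    have h2 := (abs_le.1 hc.2.2.1).2
    have heq : ∑ i, Real.logb a (pX (x i)) = ∑ i, f2 (x i, y i) := rfl
    rw [heq]
    linarith
  have hprodpYX_ge : ∀ x y, cond x y →
      a ^ ((n:ℝ)*μ1 - (n:ℝ)*μ2 - 2*((n:ℝ)*δ)) ≤ ∏ i, pYX (x i) (y i) := by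
    intro x y hc
    have hpos : ∀ i, 0 < pYX (x i) (y i) := hcond_pYX x y hc
    rw [my_prod_eq_rpow ha1 _ hpos]
    apply Real.rpow_le_rpow_of_exponent_le ha1.le
    have hsplit : ∀ i : Fin n, Real.logb a (pYX (x i) (y i))
        = f1 (x i, y i) - f2 (x i, y i) := by
      intro i
      simp only [hf1def, hf2def]
      rw [hpXY, Real.logb_mul (hcond_pYX x y hc i).ne' (hcond_pX x y hc i).ne']
      ring
    rw [Finset.sum_congr rfl fun i _ => hsplit i, Finset.sum_sub_distrib]
    have h1 := (abs_le.1 hc.2.1).1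
    have h2 := (abs_le.1 hc.2.2.1).2
    linarith
  have hratio_ge : ∀ x y, cond x y →
      a ^ ((n:ℝ)*μ1 - (n:ℝ)*μ3 - 2*((n:ℝ)*δ)) ≤ Q x y / ∏ i, pY (y i) := by
    intro x y hc
    have hposXY : ∀ i, 0 < pXY (x i) (y i) := hcond_pos x y hc
    have hposY : ∀ i, 0 < pY (y i) := hcond_pY x y hc
    have hQe : Q x y = a ^ (∑ i, f1 (x i, y i)) := my_prod_eq_rpow ha1 _ hposXY
    have hPYe : ∏ i, pY (y i) = a ^ (∑ i, f3 (x i, y i)) := my_prod_eq_rpow ha1 _ hposY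
    rw [hQe, hPYe, ← Real.rpow_sub ha0]
    apply Real.rpow_le_rpow_of_exponent_le ha1.le
    have h1 := (abs_le.1 hc.2.1).1
    have h3 := (abs_le.1 hc.2.2.2).2
    linarith
  -- total sums
  have hQsumy : ∀ x : Fin n → X, ∑ y : Fin n → Y, ∏ i, pYX (x i) (y i) = 1 := by
    intro x
    calc ∑ y : Fin n → Y, ∏ i, pYX (x i) (y i)
        = ∏ i : Fin n, ∑ b : Y, pYX (x i) b := my_sum_prod (fun i b => pYX (x i) b)
      _ = 1 := by simp [hpYXsum]
  have hQsumx : ∀ y : Fin n → Y, ∑ x : Fin n → X, Q x y = ∏ i, pY (y i) := by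
    intro y
    calc ∑ x : Fin n → X, Q x y
        = ∏ i : Fin n, ∑ c : X, pXY c (y i) := my_sum_prod (fun i c => pXY c (y i))
      _ = ∏ i, pY (y i) := Finset.prod_congr rfl fun i _ => (hpY (y i)).symm
  have hPXsum : ∑ x : Fin n → X, ∏ i, pX (x i) = 1 := by
    calc ∑ x : Fin n → X, ∏ i, pX (x i)
        = ∏ _i : Fin n, ∑ c : X, pX c := my_sum_prod (fun _ c => pX c)
      _ = 1 := by simp [hpXsum]
  have hQQ : ∑ x : Fin n → X, ∑ y : Fin n → Y, Q x y = 1 := by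
    calc ∑ x : Fin n → X, ∑ y : Fin n → Y, Q x y
        = ∑ ω : Fin n → X × Y, ∏ i, pZ (ω i) :=
          (my_pair_sum n (fun ω => ∏ i, pZ (ω i))).symm
      _ = ∏ _i : Fin n, ∑ z : X × Y, pZ z := my_sum_prod (fun _ z => pZ z)
      _ = 1 := by simp [hpZsum]
  have hWle1 : ∀ x, W x ≤ 1 := by
    intro x
    calc W x ≤ ∑ y : Fin n → Y, ∏ i, pYX (x i) (y i) :=
          Finset.sum_le_sum_of_subset_of_nonneg (Finset.filter_subset _ _)
            (fun y _ _ => Finset.prod_nonneg fun i _ => hpYXnn _ _)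
      _ = 1 := hQsumy x
  have hWnn : ∀ x, 0 ≤ W x := fun x =>
    Finset.sum_nonneg fun y _ => Finset.prod_nonneg fun i _ => hpYXnn _ _
  -- Chebyshev tails in pair form
  have hT1 : ∑ x : Fin n → X, ∑ y : Fin n → Y,
      (if (n:ℝ)*δ < |∑ i, f1 (x i, y i) - (n:ℝ) * μ1| then Q x y else 0)
      ≤ V1 / ((n:ℝ) * δ^2) := my_cheb_pair pZ hpZnn hpZsum f1 n hn0 δ hδ
  have hT2 : ∑ x : Fin n → X, ∑ y : Fin n → Y,
      (if (n:ℝ)*δ < |∑ i, f2 (x i, y i) - (n:ℝ) * μ2| then Q x y else 0)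
      ≤ V2 / ((n:ℝ) * δ^2) := my_cheb_pair pZ hpZnn hpZsum f2 n hn0 δ hδ
  have hT3 : ∑ x : Fin n → X, ∑ y : Fin n → Y,
      (if (n:ℝ)*δ < |∑ i, f3 (x i, y i) - (n:ℝ) * μ3| then Q x y else 0)
      ≤ V3 / ((n:ℝ) * δ^2) := my_cheb_pair pZ hpZnn hpZsum f3 n hn0 δ hδ
  -- pointwise failure bound
  have hpoint : ∀ x y, (if ¬ cond x y then Q x y else 0) ≤
      (if (n:ℝ)*δ < |∑ i, f1 (x i, y i) - (n:ℝ) * μ1| then Q x y else 0)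
      + (if (n:ℝ)*δ < |∑ i, f2 (x i, y i) - (n:ℝ) * μ2| then Q x y else 0)
      + (if (n:ℝ)*δ < |∑ i, f3 (x i, y i) - (n:ℝ) * μ3| then Q x y else 0) := by
    intro x y
    have hq := hQnn x y
    have hnn : ∀ (P : Prop) [Decidable P], (0:ℝ) ≤ if P then Q x y else 0 := by
      intro P _; split
      · exact hq
      · exact le_refl 0
    by_cases hc : cond x y
    · rw [if_neg (not_not_intro hc)]
      have i1 := hnn ((n:ℝ)*δ < |∑ i, f1 (x i, y i) - (n:ℝ) * μ1|)
      have i2 := hnn ((n:ℝ)*δ < |∑ i, f2 (x i, y i) - (n:ℝ) * μ2|)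
      have i3 := hnn ((n:ℝ)*δ < |∑ i, f3 (x i, y i) - (n:ℝ) * μ3|)
      linarith
    · rw [if_pos hc]
      rw [hconddef] at hc
      beta_reduce at hc
      by_cases hp : 0 < Q x y
      · rcases not_and_or.1 hc with h | h
        · exact absurd hp h
        · rcases not_and_or.1 h with h1 | h
          · rw [if_pos (not_le.1 h1)]
            have i2 := hnn ((n:ℝ)*δ < |∑ i, f2 (x i, y i) - (n:ℝ) * μ2|)
            have i3 := hnn ((n:ℝ)*δ < |∑ i, f3 (x i, y i) - (n:ℝ) * μ3|)
            linarith
          · rcases not_and_or.1 h with h2 | h3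
            · rw [if_pos (not_le.1 h2)]
              have i1 := hnn ((n:ℝ)*δ < |∑ i, f1 (x i, y i) - (n:ℝ) * μ1|)
              have i3 := hnn ((n:ℝ)*δ < |∑ i, f3 (x i, y i) - (n:ℝ) * μ3|)
              linarith
            · rw [if_pos (not_le.1 h3)]
              have i1 := hnn ((n:ℝ)*δ < |∑ i, f1 (x i, y i) - (n:ℝ) * μ1|)
              have i2 := hnn ((n:ℝ)*δ < |∑ i, f2 (x i, y i) - (n:ℝ) * μ2|)
              linarith
      · have hq0 : Q x y = 0 := le_antisymm (not_lt.1 hp) hq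
        have i1 := hnn ((n:ℝ)*δ < |∑ i, f1 (x i, y i) - (n:ℝ) * μ1|)
        have i2 := hnn ((n:ℝ)*δ < |∑ i, f2 (x i, y i) - (n:ℝ) * μ2|)
        have i3 := hnn ((n:ℝ)*δ < |∑ i, f3 (x i, y i) - (n:ℝ) * μ3|)
        linarith
  -- probability of joint typicality
  have hPJ : 1 - Vt/((n:ℝ)*δ^2) ≤
      ∑ x : Fin n → X, ∑ y : Fin n → Y, (if cond x y then Q x y else 0) := by
    have hsplit : ∀ x y, Q x y
        = (if cond x y then Q x y else 0) + (if ¬ cond x y then Q x y else 0) := by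
      intro x y
      by_cases hc : cond x y
      · rw [if_pos hc, if_neg (not_not_intro hc), add_zero]
      · rw [if_neg hc, if_pos hc, zero_add]
    have hbad : ∑ x : Fin n → X, ∑ y : Fin n → Y, (if ¬ cond x y then Q x y else 0)
        ≤ Vt/((n:ℝ)*δ^2) := by
      calc ∑ x : Fin n → X, ∑ y : Fin n → Y, (if ¬ cond x y then Q x y else 0)
          ≤ ∑ x : Fin n → X, ∑ y : Fin n → Y,
            ((if (n:ℝ)*δ < |∑ i, f1 (x i, y i) - (n:ℝ) * μ1| then Q x y else 0)
            + (if (n:ℝ)*δ < |∑ i, f2 (x i, y i) - (n:ℝ) * μ2| then Q x y else 0)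
            + (if (n:ℝ)*δ < |∑ i, f3 (x i, y i) - (n:ℝ) * μ3| then Q x y else 0)) :=
            Finset.sum_le_sum fun x _ => Finset.sum_le_sum fun y _ => hpoint x y
        _ = (∑ x : Fin n → X, ∑ y : Fin n → Y, (if (n:ℝ)*δ < |∑ i, f1 (x i, y i) - (n:ℝ) * μ1| then Q x y else 0))
            + (∑ x : Fin n → X, ∑ y : Fin n → Y, (if (n:ℝ)*δ < |∑ i, f2 (x i, y i) - (n:ℝ) * μ2| then Q x y else 0))
            + (∑ x : Fin n → X, ∑ y : Fin n → Y, (if (n:ℝ)*δ < |∑ i, f3 (x i, y i) - (n:ℝ) * μ3| then Q x y else 0)) := by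
            simp [Finset.sum_add_distrib]
        _ ≤ V1/((n:ℝ)*δ^2) + V2/((n:ℝ)*δ^2) + V3/((n:ℝ)*δ^2) :=
            add_le_add (add_le_add hT1 hT2) hT3
        _ = Vt/((n:ℝ)*δ^2) := by rw [hVtdef]; ring
    have hQQsplit : (1:ℝ)
        = (∑ x : Fin n → X, ∑ y : Fin n → Y, (if cond x y then Q x y else 0))
          + ∑ x : Fin n → X, ∑ y : Fin n → Y, (if ¬ cond x y then Q x y else 0) := by
      rw [← hQQ]
      rw [Finset.sum_congr rfl fun (x : Fin n → X) _ =>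
        Finset.sum_congr rfl fun (y : Fin n → Y) _ => hsplit x y]
      rw [Finset.sum_congr rfl fun (x : Fin n → X) _ => Finset.sum_add_distrib]
      rw [Finset.sum_add_distrib]
    linarith
  -- relate to W
  have hWrel : ∑ x : Fin n → X, (∏ i, pX (x i)) * W x
      = ∑ x : Fin n → X, ∑ y : Fin n → Y, (if cond x y then Q x y else 0) := by
    refine Finset.sum_congr rfl fun x _ => ?_
    show (∏ i, pX (x i)) * (∑ y ∈ Finset.univ.filter (cond x), ∏ i, pYX (x i) (y i)) = _
    rw [Finset.mul_sum, Finset.sum_filter]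
    refine Finset.sum_congr rfl fun y _ => ?_
    by_cases hc : cond x y
    · rw [if_pos hc, if_pos hc]
      show (∏ i, pX (x i)) * ∏ i, pYX (x i) (y i) = ∏ i, pXY (x i) (y i)
      rw [← Finset.prod_mul_distrib]
      exact Finset.prod_congr rfl fun i _ => by rw [hpXY]; ring
    · rw [if_neg hc, if_neg hc]
  -- the good set G
  set G : Finset (Fin n → X) := Finset.univ.filter (fun x => 1 - ε' ≤ W x) with hGdef
  have hGmass : 1/2 ≤ ∑ x ∈ G, ∏ i, pX (x i) := by
    have hsum1mW : ∑ x : Fin n → X, (∏ i, pX (x i)) * (1 - W x) ≤ Vt/((n:ℝ)*δ^2) := by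
      have heq : ∑ x : Fin n → X, (∏ i, pX (x i)) * (1 - W x)
          = (∑ x : Fin n → X, ∏ i, pX (x i)) - ∑ x : Fin n → X, (∏ i, pX (x i)) * W x := by
        rw [← Finset.sum_sub_distrib]
        exact Finset.sum_congr rfl fun x _ => by ring
      rw [heq, hPXsum, hWrel]
      linarith [hPJ]
    have hout : ε' * ∑ x ∈ Finset.univ.filter (fun x : Fin n → X => ¬ (1 - ε' ≤ W x)), ∏ i, pX (x i)
        ≤ Vt/((n:ℝ)*δ^2) := by
      calc ε' * ∑ x ∈ Finset.univ.filter (fun x : Fin n → X => ¬ (1 - ε' ≤ W x)), ∏ i, pX (x i)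
          = ∑ x ∈ Finset.univ.filter (fun x : Fin n → X => ¬ (1 - ε' ≤ W x)), ε' * ∏ i, pX (x i) := by
            rw [Finset.mul_sum]
        _ ≤ ∑ x ∈ Finset.univ.filter (fun x : Fin n → X => ¬ (1 - ε' ≤ W x)), (∏ i, pX (x i)) * (1 - W x) := by
            refine Finset.sum_le_sum fun x hx => ?_
            rw [Finset.mem_filter] at hx
            have h' : ε' < 1 - W x := by
              have h'' := hx.2; push_neg at h''; linarith
            have hpnn : 0 ≤ ∏ i, pX (x i) := Finset.prod_nonneg fun i _ => hpXnn _
            have hmm := mul_le_mul_of_nonneg_left h'.le hpnn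
            linarith
        _ ≤ ∑ x : Fin n → X, (∏ i, pX (x i)) * (1 - W x) := by
            refine Finset.sum_le_sum_of_subset_of_nonneg (Finset.filter_subset _ _) fun x _ _ => ?_
            have hpnn : 0 ≤ ∏ i, pX (x i) := Finset.prod_nonneg fun i _ => hpXnn _
            have hw1 := hWle1 x
            exact mul_nonneg hpnn (by linarith)
        _ ≤ Vt/((n:ℝ)*δ^2) := hsum1mW
    have houtb : ∑ x ∈ Finset.univ.filter (fun x : Fin n → X => ¬ (1 - ε' ≤ W x)), ∏ i, pX (x i) ≤ 1/2 := by
      by_contra hcon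
      rw [not_le] at hcon
      have hlt : ε' * (1/2) < ε' * ∑ x ∈ Finset.univ.filter (fun x : Fin n → X => ¬ (1 - ε' ≤ W x)), ∏ i, pX (x i) :=
        (mul_lt_mul_iff_right₀ hε'0).2 hcon
      linarith [hVb, hout]
    have hsplit2 := Finset.sum_filter_add_sum_filter_not Finset.univ
      (fun x : Fin n → X => 1 - ε' ≤ W x) (fun x => ∏ i, pX (x i))
    rw [hPXsum] at hsplit2
    rw [hGdef]
    linarith
  -- every x in G has a typical y
  have hGty : ∀ x ∈ G, ∃ y, cond x y := by
    intro x hx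
    rw [hGdef, Finset.mem_filter] at hx
    have hW : 1 - ε' ≤ W x := hx.2
    have hWpos : 0 < W x := by linarith
    by_contra hno
    push_neg at hno
    have hSe : S x = ∅ := by
      rw [hSdef]
      simp only []
      rw [Finset.filter_eq_empty_iff]
      exact fun y _ => hno y
    rw [hWdef] at hWpos
    simp only [hSe, Finset.sum_empty] at hWpos
    linarith
  have hGpXle : ∀ x ∈ G, ∏ i, pX (x i) ≤ a ^ ((n:ℝ)*μ2 + (n:ℝ)*δ) := by
    intro x hx
    obtain ⟨y, hc⟩ := hGty x hx
    exact hprodpX_le x y hc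
  have hGcard : 1/2 ≤ (G.card : ℝ) * a ^ ((n:ℝ)*μ2 + (n:ℝ)*δ) := by
    calc (1:ℝ)/2 ≤ ∑ x ∈ G, ∏ i, pX (x i) := hGmass
      _ ≤ ∑ _x ∈ G, a ^ ((n:ℝ)*μ2 + (n:ℝ)*δ) := Finset.sum_le_sum hGpXle
      _ = (G.card : ℝ) * a ^ ((n:ℝ)*μ2 + (n:ℝ)*δ) := by
          rw [Finset.sum_const, nsmul_eq_mul]
  -- counting bounds
  have hScard : ∀ x : Fin n → X, ((S x).card : ℝ) ≤ a ^ ((n:ℝ)*μ2 - (n:ℝ)*μ1 + 2*((n:ℝ)*δ)) := by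
    intro x
    apply my_le_rpow_of_mul ha0
    have hneg : -((n:ℝ)*μ2 - (n:ℝ)*μ1 + 2*((n:ℝ)*δ)) = (n:ℝ)*μ1 - (n:ℝ)*μ2 - 2*((n:ℝ)*δ) := by ring
    rw [hneg]
    calc ((S x).card : ℝ) * a ^ ((n:ℝ)*μ1 - (n:ℝ)*μ2 - 2*((n:ℝ)*δ))
        = ∑ _y ∈ S x, a ^ ((n:ℝ)*μ1 - (n:ℝ)*μ2 - 2*((n:ℝ)*δ)) := by
          rw [Finset.sum_const, nsmul_eq_mul]
      _ ≤ ∑ y ∈ S x, ∏ i, pYX (x i) (y i) := by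
          refine Finset.sum_le_sum fun y hy => ?_
          rw [hSdef] at hy
          simp only [Finset.mem_filter] at hy
          exact hprodpYX_ge x y hy.2
      _ ≤ 1 := hWle1 x
  have hYcard : ∀ y : Fin n → Y,
      ((Finset.univ.filter (fun x' : Fin n → X => cond x' y)).card : ℝ)
        ≤ a ^ ((n:ℝ)*μ3 - (n:ℝ)*μ1 + 2*((n:ℝ)*δ)) := by
    intro y
    rcases (Finset.univ.filter (fun x' : Fin n → X => cond x' y)).eq_empty_or_nonempty with he | ⟨x₀, hx₀⟩
    · rw [he]
      simp only [Finset.card_empty, Nat.cast_zero]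
      positivity
    · rw [Finset.mem_filter] at hx₀
      have hPYpos : 0 < ∏ i, pY (y i) :=
        Finset.prod_pos fun i _ => hcond_pY x₀ y hx₀.2 i
      apply my_le_rpow_of_mul ha0
      have hneg : -((n:ℝ)*μ3 - (n:ℝ)*μ1 + 2*((n:ℝ)*δ)) = (n:ℝ)*μ1 - (n:ℝ)*μ3 - 2*((n:ℝ)*δ) := by ring
      rw [hneg]
      calc ((Finset.univ.filter (fun x' : Fin n → X => cond x' y)).card : ℝ)
            * a ^ ((n:ℝ)*μ1 - (n:ℝ)*μ3 - 2*((n:ℝ)*δ))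
          = ∑ _x' ∈ Finset.univ.filter (fun x' : Fin n → X => cond x' y),
              a ^ ((n:ℝ)*μ1 - (n:ℝ)*μ3 - 2*((n:ℝ)*δ)) := by
            rw [Finset.sum_const, nsmul_eq_mul]
        _ ≤ ∑ x' ∈ Finset.univ.filter (fun x' : Fin n → X => cond x' y), Q x' y / ∏ i, pY (y i) := by
            refine Finset.sum_le_sum fun x' hx' => ?_
            rw [Finset.mem_filter] at hx'
            exact hratio_ge x' y hx'.2
        _ = (∑ x' ∈ Finset.univ.filter (fun x' : Fin n → X => cond x' y), Q x' y) / ∏ i, pY (y i) := by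
            rw [Finset.sum_div]
        _ ≤ (∑ x' : Fin n → X, Q x' y) / ∏ i, pY (y i) := by
            have hnum : (∑ x' ∈ Finset.univ.filter (fun x' : Fin n → X => cond x' y), Q x' y)
                ≤ ∑ x' : Fin n → X, Q x' y :=
              Finset.sum_le_sum_of_subset_of_nonneg (Finset.filter_subset _ _)
                (fun x' _ _ => hQnn x' y)
            exact (div_le_div_iff_of_pos_right hPYpos).2 hnum
        _ = 1 := by
            rw [hQsumx y, div_self hPYpos.ne']
  -- greedy selection
  set r : (Fin n → X) → (Fin n → X) → Prop :=
    fun x x' => ∃ y, cond x y ∧ cond x' y with hrdef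
  have hrsym : ∀ b c, r b c → r c b := by
    rintro b c ⟨y, h1, h2⟩; exact ⟨y, h2, h1⟩
  have hrrefl : ∀ x ∈ G, r x x := by
    intro x hx
    obtain ⟨y, hc⟩ := hGty x hx
    exact ⟨y, hc, hc⟩
  set B : ℝ := a ^ ((n:ℝ)*μ2 - (n:ℝ)*μ1 + 2*((n:ℝ)*δ))
      * a ^ ((n:ℝ)*μ3 - (n:ℝ)*μ1 + 2*((n:ℝ)*δ)) with hBdef
  have hBbound : ∀ x ∈ G, ((G.filter (r x)).card : ℝ) ≤ B := by
    intro x hx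
    have hsub : G.filter (r x) ⊆ (S x).biUnion
        (fun y => Finset.univ.filter (fun x' => cond x' y)) := by
      intro x' hx'
      rw [Finset.mem_filter] at hx'
      obtain ⟨y, hcy, hcy'⟩ := hx'.2
      refine Finset.mem_biUnion.2 ⟨y, ?_, ?_⟩
      · rw [hSdef]; exact Finset.mem_filter.2 ⟨Finset.mem_univ _, hcy⟩
      · exact Finset.mem_filter.2 ⟨Finset.mem_univ _, hcy'⟩
    have h1 : (G.filter (r x)).card
        ≤ ∑ y ∈ S x, (Finset.univ.filter (fun x' => cond x' y)).card :=
      le_trans (Finset.card_le_card hsub) Finset.card_biUnion_le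
    have h2 : ((G.filter (r x)).card : ℝ)
        ≤ ∑ y ∈ S x, ((Finset.univ.filter (fun x' => cond x' y)).card : ℝ) := by
      exact_mod_cast h1
    calc ((G.filter (r x)).card : ℝ)
        ≤ ∑ y ∈ S x, ((Finset.univ.filter (fun x' => cond x' y)).card : ℝ) := h2
      _ ≤ ∑ _y ∈ S x, a ^ ((n:ℝ)*μ3 - (n:ℝ)*μ1 + 2*((n:ℝ)*δ)) :=
          Finset.sum_le_sum fun y _ => hYcard y
      _ = ((S x).card : ℝ) * a ^ ((n:ℝ)*μ3 - (n:ℝ)*μ1 + 2*((n:ℝ)*δ)) := by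
          rw [Finset.sum_const, nsmul_eq_mul]
      _ ≤ a ^ ((n:ℝ)*μ2 - (n:ℝ)*μ1 + 2*((n:ℝ)*δ)) * a ^ ((n:ℝ)*μ3 - (n:ℝ)*μ1 + 2*((n:ℝ)*δ)) :=
          mul_le_mul_of_nonneg_right (hScard x) (Real.rpow_pos_of_pos ha0 _).le
      _ = B := hBdef.symm
  obtain ⟨C, hCG, hCcard, hCpair⟩ := my_greedy r hrsym B G hrrefl hBbound
  -- final cardinality bound
  set E : ℝ := ((n:ℝ)*μ2 - (n:ℝ)*μ1 + 2*((n:ℝ)*δ))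
      + (((n:ℝ)*μ3 - (n:ℝ)*μ1 + 2*((n:ℝ)*δ)) + ((n:ℝ)*μ2 + (n:ℝ)*δ)) with hEdef
  have hBA2 : B * a ^ ((n:ℝ)*μ2 + (n:ℝ)*δ) = a ^ E := by
    rw [hBdef, hEdef, ← Real.rpow_add ha0, ← Real.rpow_add ha0, add_assoc]
  have hhalf : 1/2 ≤ (C.card : ℝ) * a ^ E := by
    have hrnn : (0:ℝ) ≤ a ^ ((n:ℝ)*μ2 + (n:ℝ)*δ) := (Real.rpow_pos_of_pos ha0 _).le
    calc (1:ℝ)/2 ≤ (G.card:ℝ) * a ^ ((n:ℝ)*μ2 + (n:ℝ)*δ) := hGcard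
      _ ≤ (B * C.card) * a ^ ((n:ℝ)*μ2 + (n:ℝ)*δ) := mul_le_mul_of_nonneg_right hCcard hrnn
      _ = (C.card:ℝ) * (B * a ^ ((n:ℝ)*μ2 + (n:ℝ)*δ)) := by ring
      _ = (C.card:ℝ) * a ^ E := by rw [hBA2]
  have hEsum : (n:ℝ)*R + E = -((n:ℝ)*δ) := by
    rw [hEdef]
    linear_combination (-(n:ℝ)) * hkey
  have h2a : (2:ℝ) ≤ a ^ ((n:ℝ)*δ) := by
    calc (2:ℝ) ≤ a := ha2
      _ = a ^ (1:ℝ) := (Real.rpow_one a).symm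
      _ ≤ a ^ ((n:ℝ)*δ) := Real.rpow_le_rpow_of_exponent_le ha1.le hnδ1
  have hmE : a ^ (-E) = a ^ ((n:ℝ)*R) * a ^ ((n:ℝ)*δ) := by
    rw [← Real.rpow_add ha0]
    congr 1
    linarith
  have hfinal : a ^ ((n:ℝ)*R) ≤ (C.card : ℝ) := by
    have hEpos : (0:ℝ) < a ^ E := Real.rpow_pos_of_pos ha0 _
    have hmEpos : (0:ℝ) < a ^ (-E) := Real.rpow_pos_of_pos ha0 _
    have hcan : a^E * a^(-E) = 1 := by rw [← Real.rpow_add ha0]; simp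
    have h3 : a ^ (-E) ≤ 2 * (C.card:ℝ) := by
      have h4 : 1 ≤ 2 * ((C.card:ℝ) * a^E) := by linarith
      calc a^(-E) = 1 * a^(-E) := (one_mul _).symm
        _ ≤ (2 * ((C.card:ℝ) * a^E)) * a^(-E) := mul_le_mul_of_nonneg_right h4 hmEpos.le
        _ = 2*(C.card:ℝ) * (a^E * a^(-E)) := by ring
        _ = 2*(C.card:ℝ) := by rw [hcan, mul_one]
    have hRnn : (0:ℝ) ≤ a ^ ((n:ℝ)*R) := (Real.rpow_pos_of_pos ha0 _).le
    have h5 : a ^ ((n:ℝ)*R) * 2 ≤ a^(-E) := by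
      rw [hmE]
      exact mul_le_mul_of_nonneg_left h2a hRnn
    linarith
  -- decoder
  have hCne : C.Nonempty := by
    have hpos := Real.rpow_pos_of_pos ha0 ((n:ℝ)*R)
    have hcpos : (0:ℝ) < (C.card:ℝ) := lt_of_lt_of_le hpos hfinal
    exact Finset.card_pos.1 (by exact_mod_cast hcpos)
  refine ⟨C, hfinal, ?_⟩
  set g : (Fin n → Y) → (Fin n → X) := fun y =>
    if h : ∃ x, x ∈ C ∧ cond x y then h.choose else hCne.choose with hgdef
  have hgC : ∀ y, g y ∈ C := by
    intro y
    simp only [hgdef]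
    by_cases h : ∃ x, x ∈ C ∧ cond x y
    · rw [dif_pos h]; exact h.choose_spec.1
    · rw [dif_neg h]; exact hCne.choose_spec
  have hdecode : ∀ x ∈ C, ∀ y, cond x y → g y = x := by
    intro x hx y hc
    have h : ∃ x', x' ∈ C ∧ cond x' y := ⟨x, hx, hc⟩
    simp only [hgdef]
    rw [dif_pos h]
    exact hCpair _ h.choose_spec.1 x hx ⟨y, h.choose_spec.2, hc⟩
  refine ⟨g, hgC, ?_⟩
  intro x hx
  have hxG : x ∈ G := hCG hx
  rw [hGdef, Finset.mem_filter] at hxG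
  have hW : 1 - ε' ≤ W x := hxG.2
  have hsub : Finset.univ.filter (fun y : Fin n → Y => g y ≠ x)
      ⊆ Finset.univ.filter (fun y => ¬ cond x y) := by
    intro y hy
    rw [Finset.mem_filter] at hy ⊢
    exact ⟨Finset.mem_univ _, fun hc => hy.2 (hdecode x hx y hc)⟩
  have hsplit3 := Finset.sum_filter_add_sum_filter_not Finset.univ
    (fun y : Fin n → Y => cond x y) (fun y => ∏ i, pYX (x i) (y i))
  rw [hQsumy x] at hsplit3
  have hWx : W x = ∑ y ∈ Finset.univ.filter (fun y : Fin n → Y => cond x y), ∏ i, pYX (x i) (y i) := by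
    rw [hWdef]
  calc ∑ y ∈ Finset.univ.filter (fun y : Fin n → Y => g y ≠ x), ∏ i, pYX (x i) (y i)
      ≤ ∑ y ∈ Finset.univ.filter (fun y : Fin n → Y => ¬ cond x y), ∏ i, pYX (x i) (y i) :=
        Finset.sum_le_sum_of_subset_of_nonneg hsub
          (fun y _ _ => Finset.prod_nonneg fun i _ => hpYXnn _ _)
    _ = 1 - W x := by rw [hWx]; linarith
    _ ≤ ε' := by linarith
    _ ≤ ε := hε'le
end
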